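/- arXiv:1006.1338 — 11 statements merged into one kernel-verified Lean document; each statement's English description precedes it below -/
import Mathlib

section
/- Let ε ∈ (0,1), τ_ε = (1−√ε)/(1+√ε), and p_ε(μ) = ∏_{k=0}^∞ (1 − √ε·μ·τ_ε^k) for μ ∈ ℂ. Then for every M > 0, p_ε converges uniformly to μ ↦ exp(−μ/2) on the closed disk {μ ∈ ℂ : |μ| ≤ M} as ε → 0⁺; that is, for every δ > 0 there exists ε₀ ∈ (0,1) such that for all ε ∈ (0,ε₀) and all μ ∈ ℂ with |μ| ≤ M, |p_ε(μ) − exp(−μ/2)| < δ. -/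
open Complex

set_option maxHeartbeats 1000000 in
lemma prefactor_key (M : ℝ) (hM : 0 < M) (s : ℝ) (hs0 : 0 < s) (hs1 : s < 1)
    (hsM : s * M ≤ 1/2) (hsC : s * (M ^ 2 + M / 2) ≤ 1) (μ : ℂ) (hμ : ‖μ‖ ≤ M) :
    ‖((∏' k : ℕ, (1 - (s : ℂ) * μ * (((1 - s) / (1 + s) : ℝ) : ℂ) ^ k))
      - Complex.exp (-μ / 2))‖ ≤ 2 * Real.exp (M / 2) * (s * (M ^ 2 + M / 2)) := by
  set τ : ℝ := (1 - s) / (1 + s) with hτdef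
  clear_value τ
  have h1s : (0:ℝ) < 1 + s := by linarith
  have hτ0 : 0 < τ := hτdef ▸ div_pos (by linarith) h1s
  have hτ1 : τ < 1 := by rw [hτdef, div_lt_one h1s]; linarith
  set a : ℕ → ℂ := fun k => (s : ℂ) * μ * (τ : ℂ) ^ k with ha
  clear_value a
  have habseq : ∀ k, ‖a k‖ = s * ‖μ‖ * τ ^ k := by
    intro k
    simp [ha, norm_mul, norm_pow, Complex.norm_real, Real.norm_eq_abs, abs_of_pos hs0, abs_of_pos hτ0]
  have habs : ∀ k, ‖a k‖ ≤ s * M * τ ^ k := by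
    intro k
    rw [habseq k]
    nlinarith [mul_nonneg (mul_nonneg hs0.le (sub_nonneg.mpr hμ)) (pow_nonneg hτ0.le k)]
  have habs2 : ∀ k, ‖a k‖ ≤ 1/2 := by
    intro k
    refine le_trans (habs k) ?_
    have h1 : τ ^ k ≤ 1 := pow_le_one₀ hτ0.le hτ1.le
    nlinarith [mul_le_mul_of_nonneg_left h1 (by positivity : (0:ℝ) ≤ s * M)]
  have hne : ∀ k, (1 : ℂ) - a k ≠ 0 := by
    intro k h
    have h1 : a k = 1 := by linear_combination -h
    have h2 := habs2 k
    rw [h1, norm_one] at h2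
    norm_num at h2
  have hgeo : Summable fun k => s * M * τ ^ k :=
    (summable_geometric_of_lt_one hτ0.le hτ1).mul_left _
  have hlog_sum : Summable fun k => Complex.log (1 - a k) := by
    refine Summable.of_norm_bounded (hgeo.mul_left (3/2)) fun k => ?_
    have h := Complex.norm_log_one_add_half_le_self (z := -a k) (by simpa using habs2 k)
    rw [show (1 : ℂ) + -a k = 1 - a k by ring] at h
    refine h.trans ?_
    simp only [norm_neg]
    have h1 := habs k
    nlinarith
  have hτ2 : τ ^ 2 < 1 := by nlinarith
  have hgbound : ∀ k, ‖Complex.log (1 - a k) + a k‖ ≤ (s * M) ^ 2 * (τ ^ 2) ^ k := by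
    intro k
    have hlt : ‖-a k‖ < 1 := by
      simpa using lt_of_le_of_lt (habs2 k) (by norm_num)
    have h := Complex.norm_log_one_add_sub_self_le hlt
    rw [show (1 : ℂ) + -a k = 1 - a k by ring, sub_neg_eq_add, norm_neg] at h
    have habn : ‖a k‖ ≤ 1/2 := by exact habs2 k
    have hinv : (1 - ‖a k‖)⁻¹ ≤ 2 := by
      rw [inv_le_comm₀ (by linarith [norm_nonneg (a k)]) (by norm_num)]
      linarith
    have h2 : ‖a k‖ ^ 2 * (1 - ‖a k‖)⁻¹ / 2 ≤ ‖a k‖ ^ 2 := by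
      nlinarith [sq_nonneg ‖a k‖]
    refine (h.trans h2).trans ?_
    have h3 := habs k
    have h4 : (τ ^ 2) ^ k = (τ ^ k) ^ 2 := by ring
    rw [h4]
    nlinarith [norm_nonneg (a k), pow_nonneg hτ0.le k]
  have hgsum : Summable (fun k => Complex.log (1 - a k) + a k) :=
    Summable.of_norm_bounded
      (((summable_geometric_of_lt_one (by positivity) hτ2)).mul_left _) hgbound
  have hasum : HasSum a ((s : ℂ) * μ * (1 - (τ : ℂ))⁻¹) := by
    have hn : ‖(τ : ℂ)‖ < 1 := by
      rw [Complex.norm_real, Real.norm_eq_abs, abs_of_pos hτ0]; exact hτ1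
    have := (hasSum_geometric_of_norm_lt_one hn).mul_left ((s : ℂ) * μ)
    simpa [ha] using this
  have hsumval : (s : ℂ) * μ * (1 - (τ : ℂ))⁻¹ = μ * (1 + s) / 2 := by
    have hτne : (1:ℝ) - τ ≠ 0 := by linarith
    have hreal : s * (1 - τ)⁻¹ = (1 + s) / 2 := by
      rw [hτdef]; field_simp [hs0.ne']; ring
    have hc : ((s : ℂ)) * ((1:ℂ) - (τ:ℂ))⁻¹ = (((1+s)/2 : ℝ) : ℂ) := by
      rw [show ((1:ℂ) - (τ:ℂ)) = ((1 - τ : ℝ) : ℂ) by push_cast; ring,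
        ← Complex.ofReal_inv, ← Complex.ofReal_mul, hreal]
    push_cast at hc
    linear_combination μ * hc
  have hLsplit : (∑' k, Complex.log (1 - a k)) + μ / 2
      = (∑' k, (Complex.log (1 - a k) + a k)) - (s : ℂ) * μ / 2 := by
    have h1 : (fun k => Complex.log (1 - a k))
        = fun k => (Complex.log (1 - a k) + a k) - a k := by
      funext k; ring
    rw [h1, Summable.tsum_sub hgsum hasum.summable, hasum.tsum_eq, hsumval]
    ring
  have hgtsum : ‖∑' k, (Complex.log (1 - a k) + a k)‖ ≤ (s * M) ^ 2 * (1 - τ ^ 2)⁻¹ :=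
    tsum_of_norm_bounded ((hasSum_geometric_of_lt_one (by positivity) hτ2).mul_left
      ((s * M) ^ 2)) hgbound
  have h1mτ2 : 1 - τ ^ 2 = 4 * s / (1 + s) ^ 2 := by
    rw [hτdef]; field_simp; ring
  have hsle : s ≤ 1 - τ ^ 2 := by
    rw [h1mτ2, le_div_iff₀ (by positivity)]
    nlinarith [mul_nonneg (mul_nonneg hs0.le (by linarith : (0:ℝ) ≤ 1 - s))
      (by linarith : (0:ℝ) ≤ s + 3)]
  have hgtsum2 : ‖∑' k, (Complex.log (1 - a k) + a k)‖ ≤ s * M ^ 2 := by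
    refine hgtsum.trans ?_
    have hpos : (0:ℝ) < 1 - τ ^ 2 := by nlinarith
    rw [mul_comm, ← div_eq_inv_mul, div_le_iff₀ hpos]
    nlinarith
  have hLbound : ‖(∑' k, Complex.log (1 - a k)) + μ / 2‖ ≤ s * (M ^ 2 + M / 2) := by
    rw [hLsplit]
    calc ‖(∑' k, (Complex.log (1 - a k) + a k)) - (s : ℂ) * μ / 2‖
        ≤ ‖∑' k, (Complex.log (1 - a k) + a k)‖
          + ‖(s : ℂ) * μ / 2‖ := norm_sub_le _ _
      _ ≤ s * M ^ 2 + s * M / 2 := by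
          refine add_le_add hgtsum2 ?_
          have he : ‖(s : ℂ) * μ / 2‖ = s * ‖μ‖ / 2 := by
            rw [norm_div, norm_mul, Complex.norm_real, Real.norm_eq_abs, abs_of_pos hs0]
            norm_num
          rw [he]; nlinarith
      _ = s * (M ^ 2 + M / 2) := by ring
  have htprod : (∏' k : ℕ, (1 - a k)) = Complex.exp (∑' k, Complex.log (1 - a k)) := by
    exact (Complex.cexp_tsum_eq_tprod (f := fun k => 1 - a k) hne hlog_sum).symm
  have hdiff : Complex.exp (∑' k, Complex.log (1 - a k)) - Complex.exp (-μ / 2)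
      = Complex.exp (-μ / 2)
        * (Complex.exp ((∑' k, Complex.log (1 - a k)) + μ / 2) - 1) := by
    rw [mul_sub, ← Complex.exp_add, mul_one]
    ring_nf
  have habsexp : ‖Complex.exp (-μ / 2)‖ ≤ Real.exp (M / 2) := by
    rw [Complex.norm_exp]
    apply Real.exp_le_exp.mpr
    have h1 : |μ.re| ≤ M := (Complex.abs_re_le_norm μ).trans hμ
    have hre : (-μ / 2).re = -μ.re / 2 := by
      rw [show -μ / 2 = ((1/2 : ℝ) : ℂ) * (-μ) by push_cast; ring,
        Complex.re_ofReal_mul, Complex.neg_re]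
      ring
    rw [hre]
    rcases abs_le.mp h1 with ⟨h2, h3⟩
    linarith
  have habs1 : ‖Complex.exp ((∑' k, Complex.log (1 - a k)) + μ / 2) - 1‖
      ≤ 2 * (s * (M ^ 2 + M / 2)) := by
    have h := Complex.norm_exp_sub_one_le (x := (∑' k, Complex.log (1 - a k)) + μ / 2)
      (hLbound.trans hsC)
    exact h.trans (by nlinarith)
  have hrw : (∏' k : ℕ, (1 - (s : ℂ) * μ * ((τ : ℝ) : ℂ) ^ k))
      = ∏' k : ℕ, (1 - a k) :=
    tprod_congr fun k => by rw [ha]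
  rw [hrw, htprod, hdiff, norm_mul]
  calc ‖Complex.exp (-μ / 2)‖
        * ‖Complex.exp ((∑' k, Complex.log (1 - a k)) + μ / 2) - 1‖
      ≤ Real.exp (M / 2) * (2 * (s * (M ^ 2 + M / 2))) :=
        mul_le_mul habsexp habs1 (norm_nonneg _) (Real.exp_pos _).le
    _ = 2 * Real.exp (M / 2) * (s * (M ^ 2 + M / 2)) := by ring

/-- Uniform convergence of the prefactor infinite product
`p_ε(μ) = ∏_{k=0}^∞ (1 − √ε·μ·τ_ε^k)` (with `τ_ε = (1−√ε)/(1+√ε)`) to `exp(−μ/2)`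
on closed disks, as `ε → 0⁺`. -/
theorem prefactor_uniform_limit (M : ℝ) (hM : 0 < M) :
    ∀ δ > (0 : ℝ), ∃ ε₀ ∈ Set.Ioo (0 : ℝ) 1, ∀ ε ∈ Set.Ioo (0 : ℝ) ε₀,
      ∀ μ : ℂ, ‖μ‖ ≤ M →
        ‖((∏' k : ℕ, (1 - (Real.sqrt ε : ℂ) * μ *
              (((1 - Real.sqrt ε) / (1 + Real.sqrt ε) : ℝ) : ℂ) ^ k))
            - Complex.exp (-μ / 2))‖ < δ := by
  intro δ hδ
  set C : ℝ := M ^ 2 + M / 2 + 1 with hC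
  have hC1 : 1 < C := by rw [hC]; nlinarith
  have hC0 : 0 < C := by linarith
  have hE0 : 0 < Real.exp (M / 2) := Real.exp_pos _
  set s₀ : ℝ := min (1 / (2 * M)) (min (1 / C) (δ / (2 * Real.exp (M / 2) * C)))
    with hs₀
  have hs₀0 : 0 < s₀ :=
    lt_min (by positivity) (lt_min (by positivity) (by positivity))
  have hs₀C : s₀ ≤ 1 / C := le_trans (min_le_right _ _) (min_le_left _ _)
  have hs₀M : s₀ ≤ 1 / (2 * M) := min_le_left _ _
  have h3 : s₀ ≤ δ / (2 * Real.exp (M / 2) * C) :=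
    le_trans (min_le_right _ _) (min_le_right _ _)
  have hMC : M ^ 2 + M / 2 ≤ C := by rw [hC]; linarith
  clear_value C s₀
  have hs₀1 : s₀ < 1 := lt_of_le_of_lt hs₀C (by rw [div_lt_one hC0]; exact hC1)
  refine ⟨s₀ ^ 2, ⟨by positivity, by nlinarith⟩, ?_⟩
  rintro ε ⟨hε0, hε1⟩ μ hμ
  have hs0 : 0 < Real.sqrt ε := Real.sqrt_pos.mpr hε0
  have hss₀ : Real.sqrt ε < s₀ := by
    calc Real.sqrt ε < Real.sqrt (s₀ ^ 2) := Real.sqrt_lt_sqrt hε0.le hε1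
      _ = s₀ := Real.sqrt_sq hs₀0.le
  have hs1 : Real.sqrt ε < 1 := lt_trans hss₀ hs₀1
  have hsM : Real.sqrt ε * M ≤ 1 / 2 := by
    have h1 : s₀ * M ≤ (1 / (2 * M)) * M := mul_le_mul_of_nonneg_right hs₀M hM.le
    have h2 : (1 / (2 * M)) * M = 1 / 2 := by field_simp
    have h3' : Real.sqrt ε * M ≤ s₀ * M := mul_le_mul_of_nonneg_right hss₀.le hM.le
    linarith
  have hs₀Cle : s₀ * C ≤ 1 := (le_div_iff₀ hC0).mp hs₀C
  have hsCle : Real.sqrt ε * C ≤ s₀ * C := mul_le_mul_of_nonneg_right hss₀.le hC0.le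
  have ht1 : Real.sqrt ε * (M ^ 2 + M / 2) ≤ Real.sqrt ε * C :=
    mul_le_mul_of_nonneg_left hMC hs0.le
  have hsC : Real.sqrt ε * (M ^ 2 + M / 2) ≤ 1 := by linarith
  have key := prefactor_key M hM (Real.sqrt ε) hs0 hs1 hsM hsC μ hμ
  refine lt_of_le_of_lt key ?_
  have hA : 2 * Real.exp (M / 2) * (Real.sqrt ε * (M ^ 2 + M / 2))
      ≤ 2 * Real.exp (M / 2) * (Real.sqrt ε * C) :=
    mul_le_mul_of_nonneg_left ht1 (by positivity)
  have hB : 2 * Real.exp (M / 2) * (Real.sqrt ε * C)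
      < 2 * Real.exp (M / 2) * (s₀ * C) :=
    mul_lt_mul_of_pos_left (mul_lt_mul_of_pos_right hss₀ hC0) (by positivity)
  have h4 : 2 * Real.exp (M / 2) * (s₀ * C) ≤ δ := by
    have h5 := (le_div_iff₀ (by positivity : (0:ℝ) < 2 * Real.exp (M / 2) * C)).mp h3
    have heq : 2 * Real.exp (M / 2) * (s₀ * C) = s₀ * (2 * Real.exp (M / 2) * C) := by
      ring
    rw [heq]; exact h5
  linarith
end

section
/- For every z ∈ ℂ with z ≠ 1 satisfying |arg(z)| ≤ π/10, |Im(z)| < 1/10, and Re(z) ≤ 1, one has Re(log(1 − z)) ≤ Re(−z − z²/2). -/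
set_option maxHeartbeats 1000000

private lemma quint_log_bound {s : ℝ} (h0 : 0 ≤ s) (h1 : s < 1) :
    Real.log (1 - s) ≤ -(s + s^2/2 + s^3/3 + s^4/4 + s^5/5) := by
  set f : ℝ → ℝ := fun u => -(u + u^2/2 + u^3/3 + u^4/4 + u^5/5) - Real.log (1 - u) with hf
  have key : ∀ t ∈ Set.Ico (0:ℝ) 1,
      HasDerivAt f (-(1 + t + t^2 + t^3 + t^4) + 1/(1-t)) t := by
    intro t ht
    have hpos : (0:ℝ) < 1 - t := by linarith [ht.2]
    have hlog : HasDerivAt (fun u : ℝ => Real.log (1 - u)) (-(1/(1-t))) t := by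
      have h := (Real.hasDerivAt_log hpos.ne').comp t ((hasDerivAt_id t).const_sub 1)
      refine h.congr_deriv ?_
      ring
    have h2 : HasDerivAt (fun u:ℝ => u^2) (2*t) t := by simpa using hasDerivAt_pow 2 t
    have h3 : HasDerivAt (fun u:ℝ => u^3) (3*t^2) t := by simpa using hasDerivAt_pow 3 t
    have h4 : HasDerivAt (fun u:ℝ => u^4) (4*t^3) t := by simpa using hasDerivAt_pow 4 t
    have h5 : HasDerivAt (fun u:ℝ => u^5) (5*t^4) t := by simpa using hasDerivAt_pow 5 t
    have hpoly : HasDerivAt (fun u : ℝ => -(u + u^2/2 + u^3/3 + u^4/4 + u^5/5))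
        (-(1 + t + t^2 + t^3 + t^4)) t := by
      have := ((((hasDerivAt_id t).add (h2.div_const 2)).add (h3.div_const 3)).add
        (h4.div_const 4)).add (h5.div_const 5)
      refine this.neg.congr_deriv ?_
      ring
    have := hpoly.sub hlog
    refine this.congr_deriv ?_
    ring
  have hsub : Set.Icc (0:ℝ) s ⊆ Set.Ico (0:ℝ) 1 := fun t ht => ⟨ht.1, lt_of_le_of_lt ht.2 h1⟩
  have mono : MonotoneOn f (Set.Icc 0 s) := by
    apply monotoneOn_of_deriv_nonneg (convex_Icc 0 s)
    · exact fun t ht => (key t (hsub ht)).continuousAt.continuousWithinAt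
    · intro t ht
      exact ((key t (hsub (interior_subset ht))).differentiableAt).differentiableWithinAt
    · intro t ht
      have htm := hsub (interior_subset ht)
      rw [(key t htm).deriv]
      have hpos : (0:ℝ) < 1 - t := by linarith [htm.2]
      have h5 : (1 + t + t^2 + t^3 + t^4) ≤ 1/(1-t) := by
        rw [le_div_iff₀ hpos]
        nlinarith [pow_nonneg htm.1 5]
      linarith
  have h0s : f 0 ≤ f s := mono ⟨le_refl 0, h0⟩ ⟨h0, le_refl s⟩ h0
  have hf0 : f 0 = 0 := by simp [hf]
  rw [hf0] at h0s
  simp only [hf] at h0s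
  linarith

private lemma poly_small {x : ℝ} (hx0 : 0 ≤ x) (hx : x ≤ 5/17) :
    2*x^2 ≤ (2*x - (2789/2500)*x^2)^2/2 + (2*x - (2789/2500)*x^2)^3/3
      + (2*x - (2789/2500)*x^2)^4/4 + (2*x - (2789/2500)*x^2)^5/5 := by
  nlinarith [mul_nonneg (mul_nonneg hx0 hx0) hx0, sq_nonneg x,
    mul_nonneg (mul_nonneg (mul_nonneg hx0 hx0) hx0) hx0,
    mul_nonneg (sub_nonneg.mpr hx) (mul_nonneg (mul_nonneg hx0 hx0) hx0),
    mul_nonneg (mul_nonneg (sub_nonneg.mpr hx) (sub_nonneg.mpr hx))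
      (mul_nonneg (mul_nonneg hx0 hx0) hx0),
    pow_nonneg hx0 5, pow_nonneg hx0 6, pow_nonneg hx0 7]

/-- For `z ≠ 1` with `|arg z| ≤ π/10`, `|Im z| < 1/10` and `Re z ≤ 1`,
one has `Re(log(1 − z)) ≤ Re(−z − z²/2)`. -/
theorem re_log_one_sub_bound (z : ℂ) (hz1 : z ≠ 1)
    (harg : |Complex.arg z| ≤ Real.pi / 10)
    (him : |z.im| < 1 / 10) (hre : z.re ≤ 1) :
    (Complex.log (1 - z)).re ≤ (-z - z ^ 2 / 2).re := by
  set x := z.re with hx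
  set y := z.im with hy
  -- basic geometry facts from the argument bound
  have hbasic : 0 ≤ x ∧ |y| ≤ (17/50) * x := by
    by_cases hz0 : z = 0
    · simp [hz0, hx, hy]
    · have hr : 0 < ‖z‖ := norm_pos_iff.mpr hz0
      have hcos := Complex.cos_arg hz0
      have hsin := Complex.sin_arg z
      have hθ : |Complex.arg z| ≤ 0.315 := by
        have := Real.pi_lt_d2
        calc |Complex.arg z| ≤ Real.pi / 10 := harg
          _ ≤ 0.315 := by norm_num; linarith
      have hc : (19:ℝ)/20 ≤ Real.cos (Complex.arg z) := by
        have h1 := Real.one_sub_sq_div_two_le_cos (x := Complex.arg z)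
        have h2 : (Complex.arg z)^2 ≤ 0.315^2 := by
          rw [← sq_abs]
          exact pow_le_pow_left₀ (abs_nonneg _) hθ 2
        nlinarith
      have hxr : x = ‖z‖ * Real.cos (Complex.arg z) := by
        rw [hcos]; field_simp; exact hx
      have hyr : |y| ≤ ‖z‖ * 0.315 := by
        have him_eq : y = ‖z‖ * Real.sin (Complex.arg z) := by
          rw [hsin]; field_simp; exact hy
        rw [him_eq, abs_mul, abs_of_pos hr]
        have := Real.abs_sin_le_abs (x := Complex.arg z)
        nlinarith
      constructor
      · rw [hxr]; nlinarith
      · rw [hxr]; nlinarith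
  obtain ⟨hx0, hyx⟩ := hbasic
  have hw1 : y^2 < 1/100 := by
    have h : |y|^2 < (1/10)^2 := by
      apply pow_lt_pow_left₀ him (abs_nonneg _)
      norm_num
    rw [sq_abs] at h; linarith
  have hw0 : 0 ≤ y^2 := sq_nonneg y
  have hq : y^2 ≤ (289/2500) * x^2 := by
    have h : |y|^2 ≤ ((17/50)*x)^2 := pow_le_pow_left₀ (abs_nonneg _) hyx 2
    rw [sq_abs] at h; nlinarith
  -- positivity of |1-z|^2
  have hnz : (1:ℂ) - z ≠ 0 := fun h => hz1 (by linear_combination -h)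
  have hns : Complex.normSq (1-z) = (1-x)^2 + y^2 := by
    simp only [Complex.normSq_apply, Complex.sub_re, Complex.sub_im, Complex.one_re,
      Complex.one_im, hx, hy]
    ring
  have ht : 0 < (1-x)^2 + y^2 := by
    have h := Complex.normSq_pos.mpr hnz
    linarith [hns ▸ h]
  -- reduce to a real inequality
  have hlhs : (Complex.log (1 - z)).re = Real.log ((1-x)^2 + y^2) / 2 := by
    rw [Complex.log_re, Complex.norm_def, Real.log_sqrt (Complex.normSq_nonneg _), hns]
  have hrhs : (-z - z ^ 2 / 2).re = -x - (x^2 - y^2)/2 := by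
    simp [Complex.div_re, Complex.normSq_apply, pow_two, Complex.mul_re, Complex.sub_re,
      Complex.neg_re, Complex.sub_im, Complex.neg_im, Complex.mul_im, hx, hy]
    try ring
  rw [hlhs, hrhs]
  suffices h : Real.log ((1-x)^2 + y^2) ≤ -2*x - x^2 + y^2 by linarith
  -- tangent line bound for log
  have tangent : ∀ k : ℝ, Real.log ((1-x)^2 + y^2) ≤ ((1-x)^2 + y^2) * Real.exp k - 1 - k := by
    intro k
    have h1 : Real.log (((1-x)^2 + y^2) * Real.exp k) = Real.log ((1-x)^2 + y^2) + k := by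
      rw [Real.log_mul ht.ne' (Real.exp_ne_zero k), Real.log_exp]
    have h2 := Real.log_le_sub_one_of_pos (mul_pos ht (Real.exp_pos k))
    rw [h1] at h2
    linarith
  have E1 : Real.exp 1 < 2.7182818286 := Real.exp_one_lt_d9
  have E0 : 0 < Real.exp 1 := Real.exp_pos 1
  have E2 : Real.exp 2 < 7.39 := by
    have h : Real.exp 2 = Real.exp 1 * Real.exp 1 := by
      rw [← Real.exp_add]; norm_num
    rw [h]; nlinarith
  rcases le_or_gt x (5/17) with hsplit | hsplit
  · -- small x : quintic series bound, worst case at y^2 = (289/2500) x^2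
    set W : ℝ := (289/2500) * x^2 with hW
    set s : ℝ := 2*x - x^2 - W with hs
    have hs0 : 0 ≤ s := by rw [hs, hW]; nlinarith
    have hs1 : s < 1 := by rw [hs, hW]; nlinarith
    have ht2 : 0 < (1-x)^2 + W := by
      have h12 : (12:ℝ)/17 ≤ 1 - x := by linarith
      rw [hW]; nlinarith [sq_nonneg x]
    have ht2le : (1-x)^2 + W ≤ 1 := by rw [hW]; nlinarith
    -- monotonicity in w : log t1 - log t2 ≤ t1 - t2 for t1 ≤ t2 ≤ 1
    have hmono : Real.log ((1-x)^2 + y^2) ≤ Real.log ((1-x)^2 + W) + (y^2 - W) := by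
      have hdiv := Real.log_le_sub_one_of_pos (div_pos ht ht2)
      rw [Real.log_div ht.ne' ht2.ne'] at hdiv
      have hb : ((1-x)^2 + y^2) / ((1-x)^2 + W) - 1 ≤ y^2 - W := by
        rw [div_sub_one ht2.ne', div_le_iff₀ ht2]
        nlinarith
      linarith
    have heq : (1:ℝ) - s = (1-x)^2 + W := by rw [hs]; ring
    have hlog := quint_log_bound hs0 hs1
    rw [heq] at hlog
    have hpoly := poly_small hx0 hsplit
    have hseq : s = 2*x - (2789/2500)*x^2 := by rw [hs, hW]; ring
    rw [← hseq] at hpoly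
    -- combine : log((1-x)^2+W) ≤ -2x - x^2 + W
    have : Real.log ((1-x)^2 + W) ≤ -2*x - x^2 + W := by linarith [hlog, hpoly, hs]
    linarith [hmono, this]
  · rcases le_or_gt x (2/5) with hb1 | hb1
    · -- x ∈ (5/17, 2/5] : tangent at k = 3/4
      have E34 : Real.exp (3/4) < 2.1175 := by
        have h3 : Real.exp 3 < 20.0856 := by
          have h : Real.exp 3 = Real.exp 1 * Real.exp 1 * Real.exp 1 := by
            rw [← Real.exp_add, ← Real.exp_add]; norm_num
          rw [h]; nlinarith
        by_contra hcon
        push_neg at hcon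
        have h4 : (2.1175:ℝ)^4 ≤ (Real.exp (3/4))^4 := by
          apply pow_le_pow_left₀ (by norm_num) hcon
        have h5 : (Real.exp (3/4))^4 = Real.exp 3 := by
          rw [← Real.exp_nat_mul]; norm_num
        rw [h5] at h4
        norm_num at h4
        linarith
      have h := tangent (3/4)
      have hE : ((1-x)^2 + y^2) * Real.exp (3/4) ≤ ((1-x)^2 + y^2) * 2.1175 :=
        mul_le_mul_of_nonneg_left E34.le ht.le
      have hlog2 : Real.log ((1-x)^2 + y^2) ≤ ((1-x)^2 + y^2) * 2.1175 - 1 - 3/4 := by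
        linarith
      nlinarith [hlog2, mul_nonneg (sub_nonneg.mpr hsplit.le) (sub_nonneg.mpr hb1)]
    · rcases le_or_gt x (11/20) with hb2 | hb2
      · -- x ∈ (2/5, 11/20] : tangent at k = 1
        have h := tangent 1
        have hE : ((1-x)^2 + y^2) * Real.exp 1 ≤ ((1-x)^2 + y^2) * 2.7182818286 :=
          mul_le_mul_of_nonneg_left E1.le ht.le
        have hlog2 : Real.log ((1-x)^2 + y^2) ≤ ((1-x)^2 + y^2) * 2.7182818286 - 2 := by
          linarith
        nlinarith [hlog2, mul_nonneg (sub_nonneg.mpr hb1.le) (sub_nonneg.mpr hb2)]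
      · rcases le_or_gt x (49/50) with hb3 | hb3
        · -- x ∈ (11/20, 49/50] : tangent at k = 2
          have h := tangent 2
          have hE : ((1-x)^2 + y^2) * Real.exp 2 ≤ ((1-x)^2 + y^2) * 7.39 :=
            mul_le_mul_of_nonneg_left E2.le ht.le
          have hlog2 : Real.log ((1-x)^2 + y^2) ≤ ((1-x)^2 + y^2) * 7.39 - 3 := by
            linarith
          nlinarith [hlog2, mul_nonneg (sub_nonneg.mpr hb2.le) (sub_nonneg.mpr hb3)]
        · -- x ∈ (49/50, 1] : tangent at k = 4
          have E4 : Real.exp 4 < 54.7 := by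
            have h : Real.exp 4 = Real.exp 2 * Real.exp 2 := by
              rw [← Real.exp_add]; norm_num
            have h2 : 0 < Real.exp 2 := Real.exp_pos 2
            rw [h]; nlinarith
          have h := tangent 4
          have hE : ((1-x)^2 + y^2) * Real.exp 4 ≤ ((1-x)^2 + y^2) * 54.7 :=
            mul_le_mul_of_nonneg_left E4.le ht.le
          have hlog2 : Real.log ((1-x)^2 + y^2) ≤ ((1-x)^2 + y^2) * 54.7 - 5 := by
            linarith
          nlinarith [hlog2, mul_nonneg (sub_nonneg.mpr hb3.le) (sub_nonneg.mpr hre)]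
end

section
/- Let τ ∈ (0,1), let μ ∈ ℂ∖{0} satisfy μ ≠ τ^k for every integer k ≥ 1, and let z ∈ ℂ with |z| > 1. Then the series g₋(z) = ∑_{k=1}^∞ μ·τ^{−k}·z^{−k}/(1 − τ^{−k}·μ) converges absolutely, and it satisfies the functional equation g₋(z) = 1/(1 − z) + μ^{−1}·g₋(z/τ) (note |z/τ| > 1, so g₋(z/τ) is also defined, and |z| > 1 forces z ≠ 1). -/
open Filter Asymptotics

/-- Uniform summability lemma: for `‖s‖ < 1`, `τ ∈ (0,1)`,
the series `∑ μ s^{k+1}/(τ^{k+1} − μ)` converges absolutely. -/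
lemma gminus_aux_summable (τ : ℝ) (hτ0 : 0 < τ) (hτ1 : τ < 1)
    (μ : ℂ) (hμ0 : μ ≠ 0) (s : ℂ) (hs : ‖s‖ < 1) :
    Summable (fun k : ℕ => ‖μ * s ^ (k + 1) / ((τ : ℂ) ^ (k + 1) - μ)‖) := by
  by_cases hs0 : s = 0
  · simp only [hs0, zero_pow (Nat.succ_ne_zero _), mul_zero, zero_div, norm_zero]
    exact summable_zero
  · have hg : Summable (fun k : ℕ => ‖s‖ ^ k) :=
      summable_geometric_of_lt_one (norm_nonneg s) hs
    refine summable_of_isBigO_nat hg ?_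
    have htend : Tendsto (fun k : ℕ => (τ : ℂ) ^ (k + 1)) atTop (nhds 0) := by
      have h := tendsto_pow_atTop_nhds_zero_of_norm_lt_one
        (x := (τ : ℂ)) (by rw [Complex.norm_real, Real.norm_of_nonneg hτ0.le]; exact hτ1)
      exact h.comp (tendsto_add_atTop_nat 1)
    have hcont : Tendsto (fun k : ℕ => ‖μ‖ * ‖s‖ / ‖(τ : ℂ) ^ (k + 1) - μ‖)
        atTop (nhds (‖μ‖ * ‖s‖ / ‖(0 : ℂ) - μ‖)) := by
      apply Tendsto.div tendsto_const_nhds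
      · exact ((htend.sub tendsto_const_nhds).norm)
      · simp [hμ0]
    apply isBigO_of_div_tendsto_nhds (l := atTop)
      (c := ‖μ‖ * ‖s‖ / ‖(0:ℂ) - μ‖)
    · filter_upwards with k hk
      exact absurd hk (pow_ne_zero k (norm_ne_zero_iff.mpr hs0))
    · have key : ∀ k : ℕ, ‖μ * s ^ (k + 1) / ((τ : ℂ) ^ (k + 1) - μ)‖ / ‖s‖ ^ k
          = ‖μ‖ * ‖s‖ / ‖(τ : ℂ) ^ (k + 1) - μ‖ := by
        intro k
        have hsk : ‖s‖ ^ k ≠ 0 := pow_ne_zero k (norm_ne_zero_iff.mpr hs0)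
        rw [norm_div, norm_mul, norm_pow, pow_succ, div_right_comm]
        congr 1
        rw [mul_comm (‖s‖ ^ k) ‖s‖, ← mul_assoc, mul_div_assoc, div_self hsk, mul_one]
      exact Filter.Tendsto.congr (fun k => (key k).symm) hcont

/-- Absolute convergence of `g₋(z) = ∑_{k=1}^∞ μ·τ^{−k}·z^{−k}/(1 − τ^{−k}·μ)` for `|z| > 1`,
and the functional equation `g₋(z) = 1/(1 − z) + μ⁻¹·g₋(z/τ)`. -/
theorem gminus_functional_equation (τ : ℝ) (hτ : τ ∈ Set.Ioo (0 : ℝ) 1)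
    (μ : ℂ) (hμ0 : μ ≠ 0) (hμ : ∀ k : ℕ, 1 ≤ k → μ ≠ (τ : ℂ) ^ k)
    (z : ℂ) (hz : 1 < ‖z‖) :
    Summable (fun k : ℕ =>
      ‖μ * (τ : ℂ) ^ (-(k + 1 : ℤ)) * z ^ (-(k + 1 : ℤ)) /
        (1 - (τ : ℂ) ^ (-(k + 1 : ℤ)) * μ)‖) ∧
    (∑' k : ℕ, μ * (τ : ℂ) ^ (-(k + 1 : ℤ)) * z ^ (-(k + 1 : ℤ)) /
        (1 - (τ : ℂ) ^ (-(k + 1 : ℤ)) * μ)) =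
      1 / (1 - z) +
        μ⁻¹ * ∑' k : ℕ, μ * (τ : ℂ) ^ (-(k + 1 : ℤ)) * (z / (τ : ℂ)) ^ (-(k + 1 : ℤ)) /
          (1 - (τ : ℂ) ^ (-(k + 1 : ℤ)) * μ) := by
  obtain ⟨hτ0, hτ1⟩ := hτ
  have ht0 : (τ : ℂ) ≠ 0 := by exact_mod_cast hτ0.ne'
  have hz0 : z ≠ 0 := by
    intro h; rw [h] at hz; simp at hz; linarith
  have hz1 : z ≠ 1 := by
    intro h; rw [h] at hz; simp at hz
  have hw : ‖z⁻¹‖ < 1 := by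
    rw [norm_inv]
    exact inv_lt_one_of_one_lt₀ hz
  have hden : ∀ k : ℕ, (τ : ℂ) ^ (k + 1) - μ ≠ 0 := fun k =>
    sub_ne_zero.mpr (Ne.symm (hμ (k + 1) (Nat.le_add_left 1 k)))
  have hcast : ∀ k : ℕ, (-(k + 1 : ℤ)) = -((k + 1 : ℕ) : ℤ) := by
    intro k; push_cast; ring
  have hpow : ∀ k : ℕ, ((τ : ℂ)) ^ (-(k + 1 : ℤ)) = ((τ : ℂ) ^ (k + 1))⁻¹ := by
    intro k; rw [hcast, zpow_neg, zpow_natCast]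
  have hpowz : ∀ k : ℕ, z ^ (-(k + 1 : ℤ)) = (z⁻¹) ^ (k + 1) := by
    intro k; rw [hcast, zpow_neg, zpow_natCast, inv_pow]
  have hpowzt : ∀ k : ℕ, (z / (τ:ℂ)) ^ (-(k + 1 : ℤ)) = ((τ:ℂ) * z⁻¹) ^ (k + 1) := by
    intro k
    rw [hcast, zpow_neg, zpow_natCast, ← inv_pow]
    congr 1
    rw [div_eq_mul_inv, mul_inv, inv_inv, mul_comm]
  have hb : ∀ k : ℕ, (1 : ℂ) - ((τ:ℂ) ^ (k + 1))⁻¹ * μ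
      = ((τ:ℂ) ^ (k + 1))⁻¹ * ((τ:ℂ) ^ (k + 1) - μ) := by
    intro k
    have hp : ((τ : ℂ) ^ (k + 1)) ≠ 0 := pow_ne_zero _ ht0
    field_simp
  have hcancel : ∀ (k : ℕ) (X : ℂ),
      μ * ((τ:ℂ) ^ (k + 1))⁻¹ * X / (1 - ((τ:ℂ) ^ (k + 1))⁻¹ * μ)
      = μ * X / ((τ:ℂ) ^ (k + 1) - μ) := by
    intro k X
    have hp : ((τ : ℂ) ^ (k + 1)) ≠ 0 := pow_ne_zero _ ht0
    rw [hb k, show μ * ((τ:ℂ) ^ (k + 1))⁻¹ * X = ((τ:ℂ) ^ (k + 1))⁻¹ * (μ * X) by ring,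
      mul_div_mul_left _ _ (inv_ne_zero hp)]
  -- termwise simplifications
  have hterm : ∀ k : ℕ, μ * (τ : ℂ) ^ (-(k + 1 : ℤ)) * z ^ (-(k + 1 : ℤ)) /
      (1 - (τ : ℂ) ^ (-(k + 1 : ℤ)) * μ) = μ * (z⁻¹) ^ (k + 1) / ((τ : ℂ) ^ (k + 1) - μ) := by
    intro k
    rw [hpow, hpowz, hcancel]
  have hterm2 : ∀ k : ℕ, μ * (τ : ℂ) ^ (-(k + 1 : ℤ)) * (z / (τ:ℂ)) ^ (-(k + 1 : ℤ)) /
      (1 - (τ : ℂ) ^ (-(k + 1 : ℤ)) * μ)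
      = μ * ((τ:ℂ) * z⁻¹) ^ (k + 1) / ((τ : ℂ) ^ (k + 1) - μ) := by
    intro k
    rw [hpow, hpowzt, hcancel]
  -- summabilities
  have hS1 := gminus_aux_summable τ hτ0 hτ1 μ hμ0 z⁻¹ hw
  have htw : ‖(τ:ℂ) * z⁻¹‖ < 1 := by
    rw [norm_mul, Complex.norm_real, Real.norm_of_nonneg hτ0.le]
    calc τ * ‖z⁻¹‖ ≤ 1 * ‖z⁻¹‖ :=
          mul_le_mul_of_nonneg_right (le_of_lt hτ1) (norm_nonneg _)
      _ < 1 := by rwa [one_mul]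
  have hS2 := gminus_aux_summable τ hτ0 hτ1 μ hμ0 ((τ:ℂ) * z⁻¹) htw
  have hS2' : Summable (fun k : ℕ => μ * ((τ:ℂ) * z⁻¹) ^ (k + 1) / ((τ : ℂ) ^ (k + 1) - μ)) :=
    Summable.of_norm hS2
  constructor
  · simpa only [← hterm] using hS1
  · -- functional equation
    have hgeo : Summable (fun k : ℕ => (z⁻¹) ^ (k + 1)) := by
      have h := (summable_geometric_of_norm_lt_one hw).mul_left z⁻¹
      refine h.congr fun k => ?_
      rw [← pow_succ']
    have key : ∀ k : ℕ, μ * (z⁻¹) ^ (k + 1) / ((τ : ℂ) ^ (k + 1) - μ)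
        = -((z⁻¹) ^ (k + 1)) + μ⁻¹ * (μ * ((τ:ℂ) * z⁻¹) ^ (k + 1) / ((τ : ℂ) ^ (k + 1) - μ)) := by
      intro k
      have hD := hden k
      have hsimp : μ⁻¹ * (μ * ((τ:ℂ) * z⁻¹) ^ (k + 1) / ((τ:ℂ) ^ (k + 1) - μ))
          = ((τ:ℂ) * z⁻¹) ^ (k + 1) / ((τ:ℂ) ^ (k + 1) - μ) := by
        rw [← mul_div_assoc, ← mul_assoc, inv_mul_cancel₀ hμ0, one_mul]
      rw [hsimp, neg_add_eq_sub, eq_sub_iff_add_eq, div_add' _ _ _ hD,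
        div_eq_div_iff hD hD, mul_pow]
      ring
    have h1z : (1 : ℂ) - z ≠ 0 := by
      rw [sub_ne_zero]; exact fun h => hz1 h.symm
    have h1w : (1 : ℂ) - z⁻¹ ≠ 0 := by
      rw [sub_ne_zero]
      exact fun h => hz1 (inv_eq_one.mp h.symm)
    have hgeosum : (∑' k : ℕ, (z⁻¹) ^ (k + 1)) = z⁻¹ * (1 - z⁻¹)⁻¹ := by
      rw [show (fun k : ℕ => (z⁻¹) ^ (k + 1)) = fun k : ℕ => z⁻¹ * (z⁻¹) ^ k from
        funext fun k => by rw [pow_succ']]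
      rw [tsum_mul_left, tsum_geometric_of_norm_lt_one hw]
    have hzz : z * (1 - z⁻¹) = z - 1 := by
      field_simp
    have hgeoval : -(z⁻¹ * (1 - z⁻¹)⁻¹) = 1 / (1 - z) := by
      rw [one_div, show (1:ℂ) - z = -(z - 1) by ring, inv_neg, ← hzz, mul_inv]
    calc (∑' k : ℕ, μ * (τ : ℂ) ^ (-(k + 1 : ℤ)) * z ^ (-(k + 1 : ℤ)) /
        (1 - (τ : ℂ) ^ (-(k + 1 : ℤ)) * μ))
        = ∑' k : ℕ, μ * (z⁻¹) ^ (k + 1) / ((τ : ℂ) ^ (k + 1) - μ) := tsum_congr hterm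
      _ = ∑' k : ℕ, (-((z⁻¹) ^ (k + 1)) +
            μ⁻¹ * (μ * ((τ:ℂ) * z⁻¹) ^ (k + 1) / ((τ : ℂ) ^ (k + 1) - μ))) := tsum_congr key
      _ = (∑' k : ℕ, -((z⁻¹) ^ (k + 1))) +
            ∑' k : ℕ, μ⁻¹ * (μ * ((τ:ℂ) * z⁻¹) ^ (k + 1) / ((τ : ℂ) ^ (k + 1) - μ)) :=
          Summable.tsum_add hgeo.neg (hS2'.mul_left μ⁻¹)
      _ = 1 / (1 - z) +
          μ⁻¹ * ∑' k : ℕ, μ * ((τ:ℂ) * z⁻¹) ^ (k + 1) / ((τ : ℂ) ^ (k + 1) - μ) := by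
          rw [tsum_neg, hgeosum, tsum_mul_left, hgeoval]
      _ = 1 / (1 - z) +
          μ⁻¹ * ∑' k : ℕ, μ * (τ : ℂ) ^ (-(k + 1 : ℤ)) * (z / (τ : ℂ)) ^ (-(k + 1 : ℤ)) /
            (1 - (τ : ℂ) ^ (-(k + 1 : ℤ)) * μ) := by
          rw [tsum_congr hterm2]
end

section
/- Let τ ∈ (0,1), let μ ∈ ℂ satisfy μ·τ^k ≠ 1 for every integer k ≥ 0, and let z ∈ ℂ with |z| < τ^{−1}. Then for every integer N ≥ 1, g₊(z) = ∑_{k=1}^N μ^k/(1 − τ^k·z) + μ^N·g₊(τ^N·z), where all the denominators 1 − τ^k·z (1 ≤ k ≤ N) are nonzero since |τ^k·z| < 1. -/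
open Filter

lemma gplus_summable (τ : ℝ) (hτ : τ ∈ Set.Ioo (0 : ℝ) 1)
    (μ : ℂ) (hμ : ∀ k : ℕ, μ * (τ : ℂ) ^ k ≠ 1)
    (z : ℂ) (hz : ‖z‖ < τ⁻¹) :
    Summable (fun k : ℕ => μ * (τ : ℂ) ^ k * z ^ k / (1 - (τ : ℂ) ^ k * μ)) := by
  obtain ⟨hτ0, hτ1⟩ := hτ
  have hr : τ * ‖z‖ < 1 := by
    have := (mul_lt_mul_iff_right₀ hτ0).mpr hz
    rwa [mul_inv_cancel₀ (ne_of_gt hτ0)] at this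
  have hτc : ‖(τ : ℂ)‖ < 1 := by
    simp [Complex.norm_real, abs_of_pos hτ0, hτ1]
  have h0 : Tendsto (fun k : ℕ => (τ : ℂ) ^ k * μ) atTop (nhds 0) := by
    simpa using (tendsto_pow_atTop_nhds_zero_of_norm_lt_one hτc).mul_const μ
  have hev : ∀ᶠ k in atTop, ‖(τ : ℂ) ^ k * μ‖ < 1 / 2 := by
    have := h0.eventually (Metric.ball_mem_nhds (0 : ℂ) (by norm_num : (0:ℝ) < 1/2))
    simpa [Metric.mem_ball, dist_eq_norm] using this
  apply Summable.of_norm_bounded_eventually_nat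
    (g := fun k => 2 * ‖μ‖ * (τ * ‖z‖) ^ k)
  · exact (summable_geometric_of_lt_one (by positivity) hr).mul_left _
  · filter_upwards [hev] with k hk
    have hden : (1:ℝ)/2 ≤ ‖1 - (τ : ℂ) ^ k * μ‖ := by
      have := norm_sub_norm_le (1 : ℂ) ((τ : ℂ) ^ k * μ)
      simp only [norm_one] at this
      linarith
    have hden0 : (0:ℝ) < ‖1 - (τ : ℂ) ^ k * μ‖ := by linarith
    rw [norm_div, div_le_iff₀ hden0]
    have hnum : ‖μ * (τ : ℂ) ^ k * z ^ k‖ ≤ ‖μ‖ * (τ * ‖z‖) ^ k := by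
      simp only [norm_mul, norm_pow, Complex.norm_real, Real.norm_eq_abs,
        abs_of_pos hτ0, mul_pow]
      apply le_of_eq; ring
    calc ‖μ * (τ : ℂ) ^ k * z ^ k‖ ≤ ‖μ‖ * (τ * ‖z‖) ^ k := hnum
      _ = (2 * ‖μ‖ * (τ * ‖z‖) ^ k) * (1/2) := by ring
      _ ≤ (2 * ‖μ‖ * (τ * ‖z‖) ^ k) * ‖1 - (τ : ℂ) ^ k * μ‖ := by
          apply mul_le_mul_of_nonneg_left hden
          positivity

lemma gplus_step (τ : ℝ) (hτ : τ ∈ Set.Ioo (0 : ℝ) 1)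
    (μ : ℂ) (hμ : ∀ k : ℕ, μ * (τ : ℂ) ^ k ≠ 1)
    (w : ℂ) (hw : ‖w‖ < τ⁻¹) :
    (∑' k : ℕ, μ * (τ : ℂ) ^ k * w ^ k / (1 - (τ : ℂ) ^ k * μ)) =
      μ / (1 - (τ : ℂ) * w) +
        μ * ∑' k : ℕ, μ * (τ : ℂ) ^ k * ((τ : ℂ) * w) ^ k / (1 - (τ : ℂ) ^ k * μ) := by
  obtain ⟨hτ0, hτ1⟩ := hτ
  have hrw : ‖(τ : ℂ) * w‖ < 1 := by
    rw [norm_mul, Complex.norm_real, Real.norm_eq_abs, abs_of_pos hτ0]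
    have := (mul_lt_mul_iff_right₀ hτ0).mpr hw
    rwa [mul_inv_cancel₀ (ne_of_gt hτ0)] at this
  have hτw : ‖(τ : ℂ) * w‖ < τ⁻¹ :=
    lt_of_lt_of_le hrw (one_le_inv₀ hτ0 |>.mpr hτ1.le)
  have hS1 : Summable (fun k : ℕ => μ * ((τ : ℂ) * w) ^ k) :=
    (summable_geometric_of_norm_lt_one (by simpa using hrw)).mul_left μ
  have hS2 : Summable (fun k : ℕ =>
      μ * (μ * (τ : ℂ) ^ k * ((τ : ℂ) * w) ^ k / (1 - (τ : ℂ) ^ k * μ))) :=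
    (gplus_summable τ ⟨hτ0, hτ1⟩ μ hμ _ hτw).mul_left μ
  have hterm : ∀ k : ℕ, μ * (τ : ℂ) ^ k * w ^ k / (1 - (τ : ℂ) ^ k * μ) =
      μ * ((τ : ℂ) * w) ^ k +
        μ * (μ * (τ : ℂ) ^ k * ((τ : ℂ) * w) ^ k / (1 - (τ : ℂ) ^ k * μ)) := by
    intro k
    have hne : (1 : ℂ) - (τ : ℂ) ^ k * μ ≠ 0 := by
      intro h
      apply hμ k
      rw [mul_comm]
      linear_combination -h
    rw [mul_div_assoc', div_eq_iff hne, add_mul, div_mul_cancel₀ _ hne]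
    ring
  rw [tsum_congr hterm, Summable.tsum_add hS1 hS2, tsum_mul_left, tsum_mul_left,
    tsum_geometric_of_norm_lt_one (by simpa using hrw)]
  rw [div_eq_mul_inv]

/-- Iterated functional equation for `g₊`:
`g₊(z) = ∑_{k=1}^N μ^k/(1 − τ^k·z) + μ^N·g₊(τ^N·z)`. -/
theorem gplus_iterated_functional_equation (τ : ℝ) (hτ : τ ∈ Set.Ioo (0 : ℝ) 1)
    (μ : ℂ) (hμ : ∀ k : ℕ, μ * (τ : ℂ) ^ k ≠ 1)
    (z : ℂ) (hz : ‖z‖ < τ⁻¹) (N : ℕ) (hN : 1 ≤ N) :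
    (∑' k : ℕ, μ * (τ : ℂ) ^ k * z ^ k / (1 - (τ : ℂ) ^ k * μ)) =
      (∑ k ∈ Finset.Icc 1 N, μ ^ k / (1 - (τ : ℂ) ^ k * z)) +
        μ ^ N * ∑' k : ℕ, μ * (τ : ℂ) ^ k * ((τ : ℂ) ^ N * z) ^ k /
          (1 - (τ : ℂ) ^ k * μ) := by
  obtain ⟨hτ0, hτ1⟩ := hτ
  induction N, hN using Nat.le_induction with
  | base =>
    have := gplus_step τ ⟨hτ0, hτ1⟩ μ hμ z hz
    simpa [pow_one] using this
  | succ N hN ih =>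
    have habs : ‖(τ : ℂ) ^ N * z‖ < τ⁻¹ := by
      rw [norm_mul, norm_pow, Complex.norm_real, Real.norm_eq_abs, abs_of_pos hτ0]
      calc τ ^ N * ‖z‖ ≤ 1 * ‖z‖ := by
            apply mul_le_mul_of_nonneg_right _ (norm_nonneg z)
            exact pow_le_one₀ hτ0.le hτ1.le
        _ < τ⁻¹ := by rwa [one_mul]
    have hstep := gplus_step τ ⟨hτ0, hτ1⟩ μ hμ ((τ : ℂ) ^ N * z) habs
    rw [ih, hstep, Finset.sum_Icc_succ_top (Nat.le_succ_of_le hN)]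
    have h1 : (τ : ℂ) * ((τ : ℂ) ^ N * z) = (τ : ℂ) ^ (N + 1) * z := by ring
    rw [h1]
    ring
end

section
/- Let τ ∈ (0,1), let μ ∈ ℂ∖{0} satisfy μ ≠ τ^k for every integer k ≥ 1, and let z ∈ ℂ with |z| > 1. Then for every integer N ≥ 1, g₋(z) = ∑_{k=0}^{N−1} μ^{−k}/(1 − τ^{−k}·z) + μ^{−N}·g₋(τ^{−N}·z), where all the denominators 1 − τ^{−k}·z (0 ≤ k ≤ N−1) are nonzero since |τ^{−k}·z| > 1. -/
noncomputable def gAux (τ : ℝ) (μ z : ℂ) (k : ℕ) : ℂ :=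
  μ * (τ : ℂ) ^ (-(k + 1 : ℤ)) * z ^ (-(k + 1 : ℤ)) / (1 - (τ : ℂ) ^ (-(k + 1 : ℤ)) * μ)

lemma gAux_den_ne (τ : ℝ) (hτ0 : 0 < τ) (μ : ℂ) (hμ : ∀ k : ℕ, 1 ≤ k → μ ≠ (τ : ℂ) ^ k)
    (k : ℕ) : (1 - (τ : ℂ) ^ (-(k + 1 : ℤ)) * μ) ≠ 0 := by
  have ht : (τ : ℂ) ≠ 0 := by exact_mod_cast hτ0.ne'
  intro h
  have h1 : (τ : ℂ) ^ (-(k + 1 : ℤ)) * μ = 1 := by linear_combination -h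
  have h2 : μ = (τ : ℂ) ^ (k + 1) := by
    have := congrArg (fun w => (τ : ℂ) ^ ((k : ℤ) + 1) * w) h1
    simp only [mul_one] at this
    rw [← mul_assoc, ← zpow_add₀ ht, show (k : ℤ) + 1 + -((k : ℤ) + 1) = 0 by ring,
      zpow_zero, one_mul, show ((k : ℤ) + 1) = ((k + 1 : ℕ) : ℤ) by push_cast; ring,
      zpow_natCast] at this
    exact this
  exact hμ (k + 1) (by omega) h2

lemma gAux_eq (τ : ℝ) (hτ0 : 0 < τ) (μ : ℂ) (hμ : ∀ k : ℕ, 1 ≤ k → μ ≠ (τ : ℂ) ^ k)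
    (z : ℂ) (hz : z ≠ 0) (k : ℕ) :
    gAux τ μ z k = μ / ((τ : ℂ) ^ (k + 1) - μ) * (z⁻¹) ^ (k + 1) := by
  have ht : (τ : ℂ) ≠ 0 := by exact_mod_cast hτ0.ne'
  have hden := gAux_den_ne τ hτ0 μ hμ k
  have hd2 : (τ : ℂ) ^ (k + 1) - μ ≠ 0 := by
    intro h
    exact hμ (k + 1) (by omega) (by linear_combination -h)
  unfold gAux
  rw [show (-(k + 1 : ℤ)) = -((k + 1 : ℕ) : ℤ) by push_cast; ring, zpow_neg, zpow_neg,
    zpow_natCast, zpow_natCast] at *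
  rw [inv_pow]
  field_simp

lemma gAux_summable (τ : ℝ) (hτ : τ ∈ Set.Ioo (0 : ℝ) 1) (μ : ℂ) (hμ0 : μ ≠ 0)
    (hμ : ∀ k : ℕ, 1 ≤ k → μ ≠ (τ : ℂ) ^ k) (z : ℂ) (hz : 1 < ‖z‖) :
    Summable (gAux τ μ z) := by
  obtain ⟨hτ0, hτ1⟩ := hτ
  have hz0 : z ≠ 0 := by
    intro h; rw [h] at hz; simp at hz; linarith
  set r := ‖z‖⁻¹ with hrdef
  have hr0 : 0 ≤ r := by positivity
  have hr1 : r < 1 := inv_lt_one_of_one_lt₀ hz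
  have hgeo : Summable (fun k : ℕ => (2 * r) * r ^ k) :=
    (summable_geometric_of_lt_one hr0 hr1).mul_left _
  apply Summable.of_norm_bounded_eventually_nat hgeo
  have hμpos : 0 < ‖μ‖ := by simpa using hμ0
  have htend : Filter.Tendsto (fun k : ℕ => τ ^ (k + 1)) Filter.atTop (nhds 0) :=
    (tendsto_pow_atTop_nhds_zero_of_lt_one hτ0.le hτ1).comp (Filter.tendsto_add_atTop_nat 1)
  have hev : ∀ᶠ k in Filter.atTop, τ ^ (k + 1) ≤ ‖μ‖ / 2 := by
    have := htend.eventually_le_const (show (0:ℝ) < ‖μ‖ / 2 by linarith)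
    simpa using this
  filter_upwards [hev] with k hk
  rw [gAux_eq τ hτ0 μ hμ z hz0 k]
  have habs : ‖(τ : ℂ) ^ (k + 1)‖ = τ ^ (k + 1) := by
    rw [norm_pow, Complex.norm_real, Real.norm_of_nonneg hτ0.le]
  have hlow : ‖μ‖ / 2 ≤ ‖(τ : ℂ) ^ (k + 1) - μ‖ := by
    have h1 : ‖μ‖ - ‖(τ : ℂ) ^ (k + 1)‖ ≤ ‖μ - (τ : ℂ) ^ (k + 1)‖ := norm_sub_norm_le _ _
    rw [norm_sub_rev] at h1
    rw [habs] at h1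
    linarith
  have hA0 : 0 < ‖(τ : ℂ) ^ (k + 1) - μ‖ := by linarith
  have : ‖μ / ((τ : ℂ) ^ (k + 1) - μ) * z⁻¹ ^ (k + 1)‖
      = ‖μ‖ / ‖(τ : ℂ) ^ (k + 1) - μ‖ * r ^ (k + 1) := by
    simp only [norm_mul, norm_div, norm_pow, norm_inv, hrdef, inv_pow]
  rw [this]
  have hc : ‖μ‖ / ‖(τ : ℂ) ^ (k + 1) - μ‖ ≤ 2 := by
    rw [div_le_iff₀ hA0]; linarith
  calc ‖μ‖ / ‖(τ : ℂ) ^ (k + 1) - μ‖ * r ^ (k + 1)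
      ≤ 2 * r ^ (k + 1) := by
        apply mul_le_mul_of_nonneg_right hc (by positivity)
    _ = (2 * r) * r ^ k := by ring

lemma gAux_step (τ : ℝ) (hτ : τ ∈ Set.Ioo (0 : ℝ) 1) (μ : ℂ) (hμ0 : μ ≠ 0)
    (hμ : ∀ k : ℕ, 1 ≤ k → μ ≠ (τ : ℂ) ^ k) (z : ℂ) (hz : 1 < ‖z‖) :
    ∑' k, gAux τ μ z k = 1 / (1 - z) + μ⁻¹ * ∑' k, gAux τ μ ((τ : ℂ)⁻¹ * z) k := by
  obtain ⟨hτ0, hτ1⟩ := hτ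
  have ht : (τ : ℂ) ≠ 0 := by exact_mod_cast hτ0.ne'
  have hz0 : z ≠ 0 := by intro h; rw [h] at hz; simp at hz; linarith
  have hz1 : (1 : ℂ) - z ≠ 0 := by
    intro h
    have : z = 1 := by linear_combination -h
    rw [this] at hz; simp at hz
  have hz' : 1 < ‖(τ : ℂ)⁻¹ * z‖ := by
    rw [norm_mul, norm_inv, Complex.norm_real, Real.norm_of_nonneg hτ0.le]
    calc (1:ℝ) < ‖z‖ := hz
      _ = 1 * ‖z‖ := by ring
      _ ≤ τ⁻¹ * ‖z‖ := by
          apply mul_le_mul_of_nonneg_right _ (by positivity)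
          rw [le_inv_comm₀] <;> [skip; linarith; skip] <;> linarith
  have hz0' : (τ : ℂ)⁻¹ * z ≠ 0 := by
    intro h; rw [h] at hz'; simp at hz'; linarith
  have S1 := gAux_summable τ ⟨hτ0, hτ1⟩ μ hμ0 hμ z hz
  have S2 := gAux_summable τ ⟨hτ0, hτ1⟩ μ hμ0 hμ _ hz'
  have hpt : ∀ k : ℕ, gAux τ μ z k - μ⁻¹ * gAux τ μ ((τ : ℂ)⁻¹ * z) k = -(z⁻¹ ^ (k + 1)) := by
    intro k
    have hd2 : (τ : ℂ) ^ (k + 1) - μ ≠ 0 := by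
      intro h; exact hμ (k + 1) (by omega) (by linear_combination -h)
    rw [gAux_eq τ hτ0 μ hμ z hz0 k, gAux_eq τ hτ0 μ hμ _ hz0' k, mul_inv, inv_inv, mul_pow]
    field_simp
    ring
  have hrn : ‖z⁻¹‖ < 1 := by
    rw [norm_inv]; exact inv_lt_one_of_one_lt₀ hz
  have hL : ∑' k : ℕ, (gAux τ μ z k - μ⁻¹ * gAux τ μ ((τ : ℂ)⁻¹ * z) k)
      = ∑' k, gAux τ μ z k - μ⁻¹ * ∑' k, gAux τ μ ((τ : ℂ)⁻¹ * z) k := by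
    rw [Summable.tsum_sub S1 (S2.mul_left μ⁻¹), tsum_mul_left]
  have hR : ∑' k : ℕ, (gAux τ μ z k - μ⁻¹ * gAux τ μ ((τ : ℂ)⁻¹ * z) k)
      = 1 / (1 - z) := by
    rw [tsum_congr hpt, tsum_neg]
    have : ∑' k : ℕ, z⁻¹ ^ (k + 1) = z⁻¹ * ∑' k : ℕ, z⁻¹ ^ k := by
      rw [← tsum_mul_left]; exact tsum_congr fun k => by ring
    have h1z : 1 - z⁻¹ ≠ 0 := by
      intro h
      have : z⁻¹ = 1 := by linear_combination -h
      rw [this] at hrn; simp at hrn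
    have hzm : (-1 : ℂ) + z ≠ 0 := by
      intro h; exact hz1 (by linear_combination -h)
    rw [this, tsum_geometric_of_norm_lt_one hrn]
    field_simp
    have hzm1 : z - 1 ≠ 0 := by intro h; exact hz1 (by linear_combination -h)
    rw [show (1 : ℂ) - z = -(z - 1) by ring, neg_div, div_self hzm1, neg_neg]
  rw [hL] at hR
  linear_combination hR

lemma gAux_iter (τ : ℝ) (hτ : τ ∈ Set.Ioo (0 : ℝ) 1) (μ : ℂ) (hμ0 : μ ≠ 0)
    (hμ : ∀ k : ℕ, 1 ≤ k → μ ≠ (τ : ℂ) ^ k) (z : ℂ) (hz : 1 < ‖z‖) (N : ℕ) :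
    ∑' k, gAux τ μ z k =
      (∑ k ∈ Finset.range N, μ ^ (-(k : ℤ)) / (1 - (τ : ℂ) ^ (-(k : ℤ)) * z)) +
        μ ^ (-(N : ℤ)) * ∑' k, gAux τ μ ((τ : ℂ) ^ (-(N : ℤ)) * z) k := by
  obtain ⟨hτ0, hτ1⟩ := hτ
  have ht : (τ : ℂ) ≠ 0 := by exact_mod_cast hτ0.ne'
  induction N with
  | zero => simp
  | succ N ih =>
    have hzN : 1 < ‖(τ : ℂ) ^ (-(N : ℤ)) * z‖ := by
      rw [norm_mul, norm_zpow, Complex.norm_real, Real.norm_of_nonneg hτ0.le]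
      have h1 : (1 : ℝ) ≤ τ ^ (-(N : ℤ)) := one_le_zpow_of_nonpos₀ hτ0 hτ1.le (by omega)
      calc (1:ℝ) < ‖z‖ := hz
        _ = 1 * ‖z‖ := by ring
        _ ≤ τ ^ (-(N : ℤ)) * ‖z‖ := by
            apply mul_le_mul_of_nonneg_right h1 (by positivity)
    rw [ih, gAux_step τ ⟨hτ0, hτ1⟩ μ hμ0 hμ _ hzN, Finset.sum_range_succ]
    have hpt : (τ : ℂ)⁻¹ * ((τ : ℂ) ^ (-(N : ℤ)) * z) = (τ : ℂ) ^ (-((N + 1 : ℕ) : ℤ)) * z := by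
      rw [← zpow_neg_one, ← mul_assoc, ← zpow_add₀ ht]
      congr 2
      push_cast; ring
    have hmu : μ ^ (-(N : ℤ)) * μ⁻¹ = μ ^ (-((N + 1 : ℕ) : ℤ)) := by
      rw [← zpow_neg_one, ← zpow_add₀ hμ0]
      congr 1
      push_cast; ring
    rw [hpt, mul_add, ← mul_assoc, hmu]
    ring

/-- Iterated functional equation for `g₋`:
`g₋(z) = ∑_{k=0}^{N−1} μ^{−k}/(1 − τ^{−k}·z) + μ^{−N}·g₋(τ^{−N}·z)`. -/
theorem gminus_iterated_functional_equation (τ : ℝ) (hτ : τ ∈ Set.Ioo (0 : ℝ) 1)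
    (μ : ℂ) (hμ0 : μ ≠ 0) (hμ : ∀ k : ℕ, 1 ≤ k → μ ≠ (τ : ℂ) ^ k)
    (z : ℂ) (hz : 1 < ‖z‖) (N : ℕ) (hN : 1 ≤ N) :
    (∑' k : ℕ, μ * (τ : ℂ) ^ (-(k + 1 : ℤ)) * z ^ (-(k + 1 : ℤ)) /
        (1 - (τ : ℂ) ^ (-(k + 1 : ℤ)) * μ)) =
      (∑ k ∈ Finset.range N, μ ^ (-(k : ℤ)) / (1 - (τ : ℂ) ^ (-(k : ℤ)) * z)) +
        μ ^ (-(N : ℤ)) *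
          ∑' k : ℕ, μ * (τ : ℂ) ^ (-(k + 1 : ℤ)) *
            ((τ : ℂ) ^ (-(N : ℤ)) * z) ^ (-(k + 1 : ℤ)) /
            (1 - (τ : ℂ) ^ (-(k + 1 : ℤ)) * μ) := by
  have h := gAux_iter τ hτ μ hμ0 hμ z hz N
  simpa [gAux] using h
end

section
/- There exists a constant C > 0 such that for all real r > 0 and all θ ∈ [−3π/4, 3π/4], |Γ(r·e^{iθ})| ≤ C·Γ(r), where on the left Γ is the complex Gamma function and on the right Γ(r) is the (positive) real Gamma function. -/
open Set Real MeasureTheory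

lemma aux_abs_Gamma_le {w : ℂ} (hw : 0 < w.re) :
    ‖Complex.Gamma w‖ ≤ Real.Gamma w.re := by
  rw [Complex.Gamma_eq_integral hw, Real.Gamma_eq_integral hw]
  calc ‖Complex.GammaIntegral w‖
      = ‖∫ x in Ioi (0:ℝ), (↑(Real.exp (-x)) * (x:ℂ) ^ (w - 1) : ℂ)‖ := by
        rfl
    _ ≤ ∫ x in Ioi (0:ℝ), ‖(↑(Real.exp (-x)) * (x:ℂ) ^ (w - 1) : ℂ)‖ :=
        norm_integral_le_integral_norm _
    _ = ∫ x in Ioi (0:ℝ), Real.exp (-x) * x ^ (w.re - 1) := by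
        refine setIntegral_congr_fun measurableSet_Ioi fun x hx => ?_
        rw [norm_mul, Complex.norm_real, Real.norm_eq_abs,
          abs_of_pos (Real.exp_pos _),
          Complex.norm_cpow_eq_rpow_re_of_pos hx]
        simp

lemma aux_cGamma_shift (z : ℂ) (hz : ∀ k : ℕ, z + k ≠ 0) (n : ℕ) :
    Complex.Gamma (z + n) = (∏ k ∈ Finset.range n, (z + k)) * Complex.Gamma z := by
  induction n with
  | zero => simp
  | succ n ih =>
    have : z + (n + 1 : ℕ) = (z + n) + 1 := by push_cast; ring
    rw [this, Complex.Gamma_add_one _ (hz n), Finset.prod_range_succ, ih]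
    ring

lemma aux_rGamma_shift (r : ℝ) (hr : 0 < r) (n : ℕ) :
    Real.Gamma (r + n) = (∏ k ∈ Finset.range n, (r + k)) * Real.Gamma r := by
  induction n with
  | zero => simp
  | succ n ih =>
    have h1 : r + (n + 1 : ℕ) = (r + n) + 1 := by push_cast; ring
    have h2 : r + (n : ℝ) ≠ 0 := by positivity
    rw [h1, Real.Gamma_add_one h2, Finset.prod_range_succ, ih]
    ring

lemma aux_mono : MonotoneOn Real.Gamma (Ici 2) :=
  Real.Gamma_strictMonoOn_Ici.monotoneOn

lemma aux_third_le {x : ℝ} (hx : 1 ≤ x) : 1/3 ≤ Real.Gamma x := by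
  rcases le_or_gt 2 x with h | h
  · have := aux_mono (by norm_num : (2:ℝ) ∈ Ici 2) (mem_Ici.mpr h) h
    rw [Real.Gamma_two] at this
    linarith
  · have hx0 : x ≠ 0 := by linarith
    have hx1 : x + 1 ≠ 0 := by linarith
    have e : Real.Gamma (x + 2) = (x+1) * (x * Real.Gamma x) := by
      have : x + 2 = (x + 1) + 1 := by ring
      rw [this, Real.Gamma_add_one hx1, Real.Gamma_add_one hx0]
    have h3 : Real.Gamma 3 ≤ Real.Gamma (x + 2) :=
      aux_mono (by norm_num : (3:ℝ) ∈ Ici 2) (by simp [mem_Ici]; linarith) (by linarith)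
    have hg3 : Real.Gamma 3 = 2 := by
      rw [show (3:ℝ) = ((2:ℕ):ℝ) + 1 by norm_num, Real.Gamma_nat_eq_factorial]
      norm_num [Nat.factorial]
    have hpos : 0 < Real.Gamma x := Real.Gamma_pos_of_pos (by linarith)
    nlinarith [mul_le_mul_of_nonneg_right (show (x+1)*x ≤ 6 by nlinarith) hpos.le]

lemma aux_le_three {x : ℝ} (hx : 1 ≤ x) (hx2 : x ≤ 2) : Real.Gamma x ≤ 3 := by
  have hx0 : x ≠ 0 := by linarith
  have hx1 : x + 1 ≠ 0 := by linarith
  have e : Real.Gamma (x + 2) = (x+1) * (x * Real.Gamma x) := by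
    have : x + 2 = (x + 1) + 1 := by ring
    rw [this, Real.Gamma_add_one hx1, Real.Gamma_add_one hx0]
  have h4 : Real.Gamma (x + 2) ≤ Real.Gamma 4 :=
    aux_mono (by simp [mem_Ici]; linarith) (by norm_num) (by linarith)
  have hg4 : Real.Gamma 4 = 6 := by
    rw [show (4:ℝ) = ((3:ℕ):ℝ) + 1 by norm_num, Real.Gamma_nat_eq_factorial]
    norm_num [Nat.factorial]
  have hpos : 0 < Real.Gamma x := Real.Gamma_pos_of_pos (by linarith)
  nlinarith [mul_le_mul_of_nonneg_right (show (2:ℝ) ≤ (x+1)*x by nlinarith) hpos.le]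

lemma aux_nine {x y : ℝ} (hx : 1 ≤ x) (hxy : x ≤ y) : Real.Gamma x ≤ 9 * Real.Gamma y := by
  have hy1 : (1:ℝ) ≤ y := le_trans hx hxy
  have hy3 : 1/3 ≤ Real.Gamma y := aux_third_le hy1
  rcases le_or_gt 2 x with h | h
  · have := aux_mono (mem_Ici.mpr h) (mem_Ici.mpr (le_trans h hxy)) hxy
    nlinarith
  · have := aux_le_three hx h.le
    nlinarith
lemma aux_master (r θ : ℝ) (hr : 0 < r) (hc : -(71/100) ≤ Real.cos θ) (n : ℕ)
    (hn : 1 ≤ r * Real.cos θ + n) :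
    ‖Complex.Gamma ((r : ℂ) * Complex.exp ((θ : ℂ) * Complex.I))‖ *
        Real.Gamma (r + n)
      ≤ 3 ^ n * (Real.Gamma (r * Real.cos θ + n) * Real.Gamma r) := by
  set z : ℂ := (r : ℂ) * Complex.exp ((θ : ℂ) * Complex.I) with hz_def
  have hre : ∀ k : ℕ, (z + (k : ℂ)).re = r * Real.cos θ + k := by
    intro k
    simp [hz_def, Complex.exp_mul_I, Complex.add_re, Complex.mul_re, Complex.cos_ofReal_re,
      Complex.sin_ofReal_re, Complex.cos_ofReal_im, Complex.sin_ofReal_im, Complex.mul_im]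
  have him : ∀ k : ℕ, (z + (k : ℂ)).im = r * Real.sin θ := by
    intro k
    simp [hz_def, Complex.exp_mul_I, Complex.add_im, Complex.mul_im, Complex.cos_ofReal_re,
      Complex.sin_ofReal_re, Complex.cos_ofReal_im, Complex.sin_ofReal_im, Complex.mul_re]
  have hnsq : ∀ k : ℕ, (‖z + (k : ℂ)‖)^2
      = r^2 + (k:ℝ)^2 + 2*r*k*Real.cos θ := by
    intro k
    rw [Complex.sq_norm, Complex.normSq_apply, hre, him]
    linear_combination (r^2) * (Real.sin_sq_add_cos_sq θ)
  have key : ∀ k : ℕ, (r + k)/3 ≤ ‖z + (k : ℂ)‖ := by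
    intro k
    have hk0 : (0:ℝ) ≤ (k:ℝ) := Nat.cast_nonneg k
    have h2 : ((r + k)/3)^2 ≤ (‖z + (k : ℂ)‖)^2 := by
      rw [hnsq k]
      nlinarith [sq_nonneg (r - k), mul_le_mul_of_nonneg_left hc
        (show (0:ℝ) ≤ r * k by positivity)]
    have := Real.sqrt_le_sqrt h2
    rwa [Real.sqrt_sq (by positivity), Real.sqrt_sq (norm_nonneg _)] at this
  have hz_ne : ∀ k : ℕ, z + (k : ℂ) ≠ 0 := by
    intro k h
    have hk := key k
    rw [h] at hk
    simp only [norm_zero] at hk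
    have : (0:ℝ) ≤ (k:ℝ) := Nat.cast_nonneg k
    nlinarith
  have habs_eq : ‖Complex.Gamma (z + (n : ℂ))‖
      = (∏ k ∈ Finset.range n, ‖z + (k : ℂ)‖) * ‖Complex.Gamma z‖ := by
    rw [aux_cGamma_shift z hz_ne n, norm_mul, norm_prod]
  have hup : ‖Complex.Gamma (z + (n : ℂ))‖ ≤ Real.Gamma (r * Real.cos θ + n) := by
    have h := aux_abs_Gamma_le (w := z + (n : ℂ)) (by rw [hre n]; linarith)
    rwa [hre n] at h
  have hprod_le : (∏ k ∈ Finset.range n, (r + (k:ℝ)))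
      ≤ 3 ^ n * ∏ k ∈ Finset.range n, ‖z + (k : ℂ)‖ := by
    have h1 : (∏ k ∈ Finset.range n, ((r + (k:ℝ))/3))
        = (∏ k ∈ Finset.range n, (r + (k:ℝ))) / 3 ^ n := by
      rw [Finset.prod_div_distrib, Finset.prod_const, Finset.card_range]
    have h2 : (∏ k ∈ Finset.range n, ((r + (k:ℝ))/3))
        ≤ ∏ k ∈ Finset.range n, ‖z + (k : ℂ)‖ :=
      Finset.prod_le_prod (fun k _ => by positivity) (fun k _ => key k)
    rw [h1] at h2
    have h3 : (0:ℝ) < 3 ^ n := by positivity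
    calc (∏ k ∈ Finset.range n, (r + (k:ℝ)))
        = 3 ^ n * ((∏ k ∈ Finset.range n, (r + (k:ℝ))) / 3 ^ n) := by field_simp
      _ ≤ 3 ^ n * ∏ k ∈ Finset.range n, ‖z + (k : ℂ)‖ := by
          exact mul_le_mul_of_nonneg_left h2 h3.le
  have hGr : 0 < Real.Gamma r := Real.Gamma_pos_of_pos hr
  calc ‖Complex.Gamma z‖ * Real.Gamma (r + n)
      = ‖Complex.Gamma z‖ * ((∏ k ∈ Finset.range n, (r + (k:ℝ))) * Real.Gamma r) := by
        rw [aux_rGamma_shift r hr n]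
    _ ≤ ‖Complex.Gamma z‖ *
        ((3 ^ n * ∏ k ∈ Finset.range n, ‖z + (k : ℂ)‖) * Real.Gamma r) := by
        apply mul_le_mul_of_nonneg_left _ (norm_nonneg _)
        exact mul_le_mul_of_nonneg_right hprod_le hGr.le
    _ = 3 ^ n * (((∏ k ∈ Finset.range n, ‖z + (k : ℂ)‖) *
          ‖Complex.Gamma z‖) * Real.Gamma r) := by ring
    _ = 3 ^ n * (‖Complex.Gamma (z + (n : ℂ))‖ * Real.Gamma r) := by
        rw [habs_eq]
    _ ≤ 3 ^ n * (Real.Gamma (r * Real.cos θ + n) * Real.Gamma r) := by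
        have h3 : (0:ℝ) ≤ 3 ^ n := by positivity
        exact mul_le_mul_of_nonneg_left (mul_le_mul_of_nonneg_right hup hGr.le) h3

/-- There is a constant `C > 0` such that `|Γ(r·e^{iθ})| ≤ C·Γ(r)` for all `r > 0`
and `θ ∈ [−3π/4, 3π/4]`. -/
theorem gamma_arc_bound :
    ∃ C > (0 : ℝ), ∀ r : ℝ, 0 < r → ∀ θ : ℝ,
      θ ∈ Set.Icc (-(3 * Real.pi / 4)) (3 * Real.pi / 4) →
      ‖Complex.Gamma ((r : ℂ) * Complex.exp ((θ : ℂ) * Complex.I))‖ ≤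
        C * Real.Gamma r := by
  refine ⟨3^80, by positivity, ?_⟩
  intro r hr θ hθ
  have hπ : 0 < π := Real.pi_pos
  have habs : |θ| ≤ 3*π/4 := abs_le.mpr ⟨by linarith [hθ.1], hθ.2⟩
  have hcos1 : Real.cos (3*π/4) ≤ Real.cos θ := by
    rw [← Real.cos_abs θ]
    exact Real.cos_le_cos_of_nonneg_of_le_pi (abs_nonneg θ) (by linarith) habs
  have hval : Real.cos (3*π/4) = -(Real.sqrt 2/2) := by
    rw [show 3*π/4 = π - π/4 by ring, Real.cos_pi_sub, Real.cos_pi_div_four]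
  have hs2 : Real.sqrt 2 ≤ 142/100 := by
    rw [show (142/100:ℝ) = Real.sqrt ((142/100)^2) from (Real.sqrt_sq (by norm_num)).symm]
    exact Real.sqrt_le_sqrt (by norm_num)
  have hc : -(71/100) ≤ Real.cos θ := by rw [hval] at hcos1; linarith
  have hc1 : Real.cos θ ≤ 1 := Real.cos_le_one θ
  have hGr : 0 < Real.Gamma r := Real.Gamma_pos_of_pos hr
  have hC : (27:ℝ) ≤ 3^80 := by norm_num
  rcases le_or_gt 0 (Real.cos θ) with h0 | h0
  · -- Case A : cos θ ≥ 0, shift by 1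
    have hn : 1 ≤ r * Real.cos θ + ((1:ℕ):ℝ) := by push_cast; nlinarith
    have hm := aux_master r θ hr hc 1 hn
    have h9 : Real.Gamma (r * Real.cos θ + ((1:ℕ):ℝ)) ≤ 9 * Real.Gamma (r + ((1:ℕ):ℝ)) :=
      aux_nine hn (by push_cast; nlinarith)
    have hGr1 : 0 < Real.Gamma (r + ((1:ℕ):ℝ)) := Real.Gamma_pos_of_pos (by positivity)
    have hkey : ‖Complex.Gamma ((r : ℂ) * Complex.exp ((θ : ℂ) * Complex.I))‖ *
        Real.Gamma (r + ((1:ℕ):ℝ)) ≤ (27 * Real.Gamma r) * Real.Gamma (r + ((1:ℕ):ℝ)) := by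
      have h2 := mul_le_mul_of_nonneg_right h9 hGr.le
      calc ‖Complex.Gamma ((r : ℂ) * Complex.exp ((θ : ℂ) * Complex.I))‖ *
          Real.Gamma (r + ((1:ℕ):ℝ))
          ≤ 3 ^ 1 * (Real.Gamma (r * Real.cos θ + ((1:ℕ):ℝ)) * Real.Gamma r) := hm
        _ ≤ 3 ^ 1 * ((9 * Real.Gamma (r + ((1:ℕ):ℝ))) * Real.Gamma r) := by
            apply mul_le_mul_of_nonneg_left h2 (by norm_num)
        _ = (27 * Real.Gamma r) * Real.Gamma (r + ((1:ℕ):ℝ)) := by ring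
    have := (mul_le_mul_iff_of_pos_right hGr1).mp hkey
    calc ‖Complex.Gamma ((r : ℂ) * Complex.exp ((θ : ℂ) * Complex.I))‖
        ≤ 27 * Real.Gamma r := this
      _ ≤ 3^80 * Real.Gamma r := mul_le_mul_of_nonneg_right hC hGr.le
  · rcases le_or_gt r 100 with hr100 | hr100
    · -- Case B : cos θ < 0, r ≤ 100, shift by 72
      have hrc : -71 ≤ r * Real.cos θ := by
        nlinarith [mul_nonneg (sub_nonneg.mpr hr100) (neg_nonneg.mpr h0.le)]
      have hn : 1 ≤ r * Real.cos θ + ((72:ℕ):ℝ) := by push_cast; nlinarith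
      have hm := aux_master r θ hr hc 72 hn
      have h9 : Real.Gamma (r * Real.cos θ + ((72:ℕ):ℝ)) ≤ 9 * Real.Gamma (r + ((72:ℕ):ℝ)) :=
        aux_nine hn (by push_cast; nlinarith)
      have hGr1 : 0 < Real.Gamma (r + ((72:ℕ):ℝ)) := Real.Gamma_pos_of_pos (by positivity)
      have hkey : ‖Complex.Gamma ((r : ℂ) * Complex.exp ((θ : ℂ) * Complex.I))‖ *
          Real.Gamma (r + ((72:ℕ):ℝ)) ≤ ((9 * 3^72) * Real.Gamma r) * Real.Gamma (r + ((72:ℕ):ℝ)) := by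
        have h2 := mul_le_mul_of_nonneg_right h9 hGr.le
        calc ‖Complex.Gamma ((r : ℂ) * Complex.exp ((θ : ℂ) * Complex.I))‖ *
            Real.Gamma (r + ((72:ℕ):ℝ))
            ≤ 3 ^ 72 * (Real.Gamma (r * Real.cos θ + ((72:ℕ):ℝ)) * Real.Gamma r) := hm
          _ ≤ 3 ^ 72 * ((9 * Real.Gamma (r + ((72:ℕ):ℝ))) * Real.Gamma r) := by
              apply mul_le_mul_of_nonneg_left h2 (by positivity)
          _ = ((9 * 3^72) * Real.Gamma r) * Real.Gamma (r + ((72:ℕ):ℝ)) := by ring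
      have hfin := (mul_le_mul_iff_of_pos_right hGr1).mp hkey
      have hCC : (9:ℝ) * 3^72 ≤ 3^80 := by norm_num
      calc ‖Complex.Gamma ((r : ℂ) * Complex.exp ((θ : ℂ) * Complex.I))‖
          ≤ (9 * 3^72) * Real.Gamma r := hfin
        _ ≤ 3^80 * Real.Gamma r := mul_le_mul_of_nonneg_right hCC hGr.le
    · -- Case C : cos θ < 0, r > 100
      set m : ℕ := Nat.floor r with hm_def
      set n : ℕ := m + 2 with hn_def
      have hm1 : (m:ℝ) ≤ r := Nat.floor_le hr.le
      have hm2 : r < m + 1 := Nat.lt_floor_add_one r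
      have hm100 : (100:ℕ) ≤ m := Nat.le_floor (by norm_num; linarith)
      have hm100' : (100:ℝ) ≤ (m:ℝ) := by exact_mod_cast hm100
      have hnr : r + 1 ≤ (n:ℝ) := by push_cast [hn_def]; linarith
      have hnr2 : (n:ℝ) ≤ r + 2 := by push_cast [hn_def]; linarith
      have ha27 : (27:ℝ) ≤ r * Real.cos θ + (n:ℝ) := by nlinarith
      have hn1 : 1 ≤ r * Real.cos θ + (n:ℝ) := by linarith
      have hm := aux_master r θ hr hc n hn1
      set a : ℝ := r * Real.cos θ + (n:ℝ) with ha_def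
      have ha_pos : 0 < a := by linarith
      have hkey : 3^(n:ℕ) * Real.Gamma a ≤ Real.Gamma (r + (n:ℝ)) := by
        have hshift := aux_rGamma_shift a ha_pos m
        have hGa : 0 < Real.Gamma a := Real.Gamma_pos_of_pos ha_pos
        have hpow : a^m ≤ ∏ j ∈ Finset.range m, (a + (j:ℝ)) := by
          rw [show a^m = ∏ _j ∈ Finset.range m, a by rw [Finset.prod_const, Finset.card_range]]
          exact Finset.prod_le_prod (fun j _ => by positivity)
            (fun j _ => le_add_of_nonneg_right (by positivity))
        have h3n : (3:ℝ)^n ≤ a^m := by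
          calc (3:ℝ)^n ≤ (3:ℝ)^(3*m) :=
                pow_le_pow_right₀ (by norm_num) (by omega)
            _ = (27:ℝ)^m := by rw [pow_mul]; norm_num
            _ ≤ a^m := pow_le_pow_left₀ (by norm_num) ha27 m
        have hmono : Real.Gamma (a + (m:ℝ)) ≤ Real.Gamma (r + (n:ℝ)) := by
          apply aux_mono (by simp [mem_Ici]; linarith) (by simp [mem_Ici]; linarith)
          have : r * Real.cos θ ≤ 0 := by nlinarith
          push_cast
          linarith
        calc (3:ℝ)^n * Real.Gamma a ≤ a^m * Real.Gamma a :=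
              mul_le_mul_of_nonneg_right h3n hGa.le
          _ ≤ (∏ j ∈ Finset.range m, (a + (j:ℝ))) * Real.Gamma a :=
              mul_le_mul_of_nonneg_right hpow hGa.le
          _ = Real.Gamma (a + (m:ℝ)) := hshift.symm
          _ ≤ Real.Gamma (r + (n:ℝ)) := hmono
      have hGrn : 0 < Real.Gamma (r + (n:ℝ)) := Real.Gamma_pos_of_pos (by positivity)
      have hfin : ‖Complex.Gamma ((r : ℂ) * Complex.exp ((θ : ℂ) * Complex.I))‖ *
          Real.Gamma (r + (n:ℝ)) ≤ Real.Gamma r * Real.Gamma (r + (n:ℝ)) := by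
        calc ‖Complex.Gamma ((r : ℂ) * Complex.exp ((θ : ℂ) * Complex.I))‖ *
            Real.Gamma (r + (n:ℝ))
            ≤ 3 ^ n * (Real.Gamma a * Real.Gamma r) := hm
          _ = (3 ^ n * Real.Gamma a) * Real.Gamma r := by ring
          _ ≤ Real.Gamma (r + (n:ℝ)) * Real.Gamma r :=
              mul_le_mul_of_nonneg_right hkey hGr.le
          _ = Real.Gamma r * Real.Gamma (r + (n:ℝ)) := by ring
      have := (mul_le_mul_iff_of_pos_right hGrn).mp hfin
      have h1C : (1:ℝ) ≤ 3^80 := by norm_num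
      calc ‖Complex.Gamma ((r : ℂ) * Complex.exp ((θ : ℂ) * Complex.I))‖
          ≤ Real.Gamma r := this
        _ ≤ 3^80 * Real.Gamma r := le_mul_of_one_le_left hGr.le h1C
end

section
/- There exists a constant C > 0 such that for all real r > 0, |Γ(r·e^{3πi/4})| ≤ C/r, where Γ is the complex Gamma function. -/
open Finset

private lemma lem_exp_quad (t : ℝ) (ht : 0 ≤ t) :
    Real.exp (-(2 * t)) ≤ (1 - t) ^ 2 + t ^ 2 := by
  have h := Real.sum_le_exp_of_nonneg (by positivity : (0:ℝ) ≤ 2 * t) 4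
  have hsum : (1:ℝ) + 2 * t + 2 * t ^ 2 + 4 / 3 * t ^ 3 ≤ Real.exp (2 * t) := by
    have : ∑ i ∈ Finset.range 4, (2 * t) ^ i / (Nat.factorial i) =
        1 + 2 * t + 2 * t ^ 2 + 4 / 3 * t ^ 3 := by
      simp [Finset.sum_range_succ, Nat.factorial]
      ring
    linarith [this ▸ h]
  have key : 1 ≤ ((1 - t) ^ 2 + t ^ 2) * Real.exp (2 * t) := by
    calc (1:ℝ) ≤ ((1 - t) ^ 2 + t ^ 2) * (1 + 2 * t + 2 * t ^ 2 + 4 / 3 * t ^ 3) := by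
          nlinarith [sq_nonneg t, pow_nonneg ht 3, pow_nonneg ht 4, pow_nonneg ht 5]
      _ ≤ ((1 - t) ^ 2 + t ^ 2) * Real.exp (2 * t) := by
          apply mul_le_mul_of_nonneg_left hsum
          positivity
  calc Real.exp (-(2 * t)) = Real.exp (-(2 * t)) * 1 := by ring
    _ ≤ Real.exp (-(2 * t)) * (((1 - t) ^ 2 + t ^ 2) * Real.exp (2 * t)) := by
        apply mul_le_mul_of_nonneg_left key (Real.exp_pos _).le
    _ = ((1 - t) ^ 2 + t ^ 2) * (Real.exp (-(2 * t)) * Real.exp (2 * t)) := by ring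
    _ = (1 - t) ^ 2 + t ^ 2 := by rw [← Real.exp_add]; simp

private lemma lem_fact_prod (m : ℕ) : ∀ k : ℕ,
    (m.factorial : ℝ) * ∏ i ∈ Finset.range k, ((m : ℝ) + i + 1) = ((m + k).factorial : ℝ)
  | 0 => by simp
  | (k + 1) => by
      rw [Finset.prod_range_succ, ← mul_assoc, lem_fact_prod m k,
        show m + (k + 1) = (m + k) + 1 by ring, Nat.factorial_succ]
      push_cast
      ring

private lemma lem_tail_sum (m : ℕ) (hm : 1 ≤ m) : ∀ k : ℕ,
    ∑ i ∈ Finset.range k, 1 / ((m : ℝ) + i + 1) ≤ Real.log ((m : ℝ) + k) - Real.log m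
  | 0 => by simp
  | (k + 1) => by
      rw [Finset.sum_range_succ]
      have hx : (1:ℝ) ≤ (m : ℝ) + k := by
        have : (1:ℝ) ≤ (m:ℝ) := by exact_mod_cast hm
        have : (0:ℝ) ≤ (k:ℝ) := by positivity
        linarith
      set x : ℝ := (m : ℝ) + k with hxdef
      have hx0 : 0 < x := by linarith
      have hstep : 1 / (x + 1) ≤ Real.log (x + 1) - Real.log x := by
        have h1 : Real.log (x + 1) - Real.log x = Real.log ((x + 1) / x) :=
          (Real.log_div (by positivity) (by positivity)).symm
        have h2 : 1 - ((x + 1) / x)⁻¹ ≤ Real.log ((x + 1) / x) :=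
          Real.one_sub_inv_le_log_of_pos (by positivity)
        have h3 : 1 - ((x + 1) / x)⁻¹ = 1 / (x + 1) := by
          rw [inv_div]
          field_simp
          ring
        rw [h1, ← h3]
        exact h2
      have hIH := lem_tail_sum m hm k
      have hcast : (m : ℝ) + (k + 1 : ℕ) = x + 1 := by push_cast; ring
      rw [hcast]
      have : (m : ℝ) + (k:ℝ) + 1 = x + 1 := by ring
      rw [this]
      linarith

private lemma fac_lower {a : ℝ} (ha : 0 < a) {z : ℂ}
    (hre : z.re = -a) (him : z.im = a) (k : ℕ) (hk : 1 ≤ k) :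
    (k : ℝ) * Real.exp (-(a / k)) ≤ ‖z + k‖ := by
  have hk0 : (0:ℝ) < k := by exact_mod_cast hk
  have hsq : ‖z + k‖ ^ 2 = ((k : ℝ) - a) ^ 2 + a ^ 2 := by
    rw [Complex.sq_norm, Complex.normSq_apply]
    simp [Complex.add_re, Complex.add_im, hre, him]
    ring
  apply le_of_pow_le_pow_left₀ (n := 2) (by norm_num) (norm_nonneg _)
  rw [hsq, mul_pow]
  have he : Real.exp (-(a / (k:ℝ))) ^ 2 = Real.exp (-(2 * (a / k))) := by
    rw [sq, ← Real.exp_add]; ring_nf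
  rw [he]
  have h := lem_exp_quad (a / k) (by positivity)
  have hid : (k:ℝ) ^ 2 * ((1 - a / k) ^ 2 + (a / k) ^ 2) = ((k:ℝ) - a) ^ 2 + a ^ 2 := by
    field_simp
  calc (k:ℝ) ^ 2 * Real.exp (-(2 * (a / k)))
      ≤ (k:ℝ) ^ 2 * ((1 - a / k) ^ 2 + (a / k) ^ 2) :=
        mul_le_mul_of_nonneg_left h (sq_nonneg _)
    _ = ((k:ℝ) - a) ^ 2 + a ^ 2 := hid

private lemma fac_lower2 {a : ℝ} (ha : 0 < a) {z : ℂ}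
    (hre : z.re = -a) (him : z.im = a) (k : ℕ) :
    a ≤ ‖z + k‖ := by
  have hsq : ‖z + k‖ ^ 2 = ((k : ℝ) - a) ^ 2 + a ^ 2 := by
    rw [Complex.sq_norm, Complex.normSq_apply]
    simp [Complex.add_re, Complex.add_im, hre, him]
    ring
  apply le_of_pow_le_pow_left₀ (n := 2) (by norm_num) (norm_nonneg _)
  rw [hsq]
  nlinarith [sq_nonneg ((k:ℝ) - a)]

private lemma gamma_aux {a r : ℝ} (ha : 0 < a) (hr0 : 0 < r) {z : ℂ}
    (hre : z.re = -a) (him : z.im = a) (hzr : ‖z‖ = r)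
    (m : ℕ) (hm1 : 1 ≤ m) (Q : ℝ) (hQ0 : 0 < Q)
    (hhead : Q ≤ ∏ j ∈ Finset.range m, ‖z + ((j + 1 : ℕ) : ℂ)‖)
    (hfinal : (m.factorial : ℝ) ≤ Real.exp 1 * Q * (m : ℝ) ^ a)
    (n : ℕ) (hn : m ≤ n) :
    ‖Complex.GammaSeq z n‖ ≤ Real.exp 1 / r := by
  obtain ⟨k, rfl⟩ : ∃ k, n = m + k := ⟨n - m, by omega⟩
  have hn1 : 1 ≤ m + k := by omega
  have hnR : (0:ℝ) < ((m + k : ℕ) : ℝ) := by exact_mod_cast Nat.lt_of_lt_of_le Nat.zero_lt_one hn1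
  have hmR : (0:ℝ) < (m : ℝ) := by exact_mod_cast hm1
  -- expand the absolute value of GammaSeq
  have hseq : ‖Complex.GammaSeq z (m + k)‖ =
      ((m + k : ℕ) : ℝ) ^ (-a) * (((m + k).factorial : ℕ) : ℝ) /
        ∏ j ∈ Finset.range (m + k + 1), ‖z + j‖ := by
    rw [Complex.GammaSeq, norm_div, norm_mul, norm_prod]
    congr 2
    · rw [show ((m + k : ℕ) : ℂ) = (((m + k : ℕ) : ℝ) : ℂ) by push_cast; ring,
        Complex.norm_cpow_eq_rpow_re_of_pos hnR, hre]
    · exact Complex.norm_natCast _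
  set A := ∏ j ∈ Finset.range m, ‖z + ((j + 1 : ℕ) : ℂ)‖ with hA
  set B := ∏ i ∈ Finset.range k, ‖z + ((m + i + 1 : ℕ) : ℂ)‖ with hB
  have hsplit : ∏ j ∈ Finset.range (m + k + 1), ‖z + j‖ = r * (A * B) := by
    rw [Finset.prod_range_succ' (fun j : ℕ => ‖z + j‖), Finset.prod_range_add]
    simp only [Nat.cast_zero, add_zero, hzr]
    rw [← hA, ← hB]
    ring
  -- lower bound for B
  set S : ℝ := ∑ i ∈ Finset.range k, 1 / ((m : ℝ) + i + 1) with hS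
  have hBlow : (((m + k).factorial : ℝ) / (m.factorial : ℝ)) * Real.exp (-(a * S)) ≤ B := by
    have hperfac : ∀ i ∈ Finset.range k,
        ((m : ℝ) + i + 1) * Real.exp (-(a / ((m : ℝ) + i + 1))) ≤
          ‖z + ((m + i + 1 : ℕ) : ℂ)‖ := by
      intro i _
      have h := fac_lower ha hre him (m + i + 1) (by omega)
      have hc : ((m + i + 1 : ℕ) : ℝ) = (m : ℝ) + i + 1 := by push_cast; ring
      rw [hc] at h
      exact h
    have hprodle : ∏ i ∈ Finset.range k,
        (((m : ℝ) + i + 1) * Real.exp (-(a / ((m : ℝ) + i + 1)))) ≤ B := by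
      rw [hB]
      exact Finset.prod_le_prod (fun i _ => by positivity) hperfac
    have hprodeq : ∏ i ∈ Finset.range k,
        (((m : ℝ) + i + 1) * Real.exp (-(a / ((m : ℝ) + i + 1)))) =
        (((m + k).factorial : ℝ) / (m.factorial : ℝ)) * Real.exp (-(a * S)) := by
      rw [Finset.prod_mul_distrib, ← Real.exp_sum]
      congr 1
      · rw [eq_div_iff (by positivity : ((m.factorial : ℝ)) ≠ 0), mul_comm]
        exact lem_fact_prod m k
      · congr 1
        rw [hS, Finset.mul_sum, ← Finset.sum_neg_distrib]
        refine Finset.sum_congr rfl fun i _ => ?_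
        rw [mul_one_div]
    linarith [hprodeq ▸ hprodle]
  have hSle : S ≤ Real.log ((m : ℝ) + k) - Real.log m := lem_tail_sum m hm1 k
  -- core inequality
  have hexp_eq : Real.exp (-(a * (Real.log ((m : ℝ) + k) - Real.log m))) =
      ((m + k : ℕ) : ℝ) ^ (-a) * (m : ℝ) ^ a := by
    rw [Real.rpow_def_of_pos hnR, Real.rpow_def_of_pos hmR, ← Real.exp_add]
    congr 1
    push_cast
    ring
  have hexp_le : ((m + k : ℕ) : ℝ) ^ (-a) * (m : ℝ) ^ a ≤ Real.exp (-(a * S)) := by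
    rw [← hexp_eq]
    apply Real.exp_le_exp.mpr
    have := mul_le_mul_of_nonneg_left hSle ha.le
    linarith
  set F : ℝ := (((m + k).factorial : ℕ) : ℝ) with hF
  set Fm : ℝ := ((m.factorial : ℕ) : ℝ) with hFm
  set N : ℝ := ((m + k : ℕ) : ℝ) ^ (-a) with hN
  set M : ℝ := (m : ℝ) ^ a with hM
  have hFpos : 0 < F := by rw [hF]; exact_mod_cast Nat.factorial_pos _
  have hFmpos : 0 < Fm := by rw [hFm]; exact_mod_cast Nat.factorial_pos _
  have hNpos : 0 < N := Real.rpow_pos_of_pos hnR _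
  have hMpos : 0 < M := Real.rpow_pos_of_pos hmR _
  have hB2 : (F / Fm) * (N * M) ≤ B := by
    refine le_trans ?_ hBlow
    exact mul_le_mul_of_nonneg_left hexp_le (by positivity)
  have key : N * F ≤ Real.exp 1 * (A * B) := by
    have hAB : Q * ((F / Fm) * (N * M)) ≤ A * B :=
      mul_le_mul hhead hB2 (by positivity) (le_trans hQ0.le hhead)
    calc N * F = Fm * ((F / Fm) * N) := by field_simp
      _ ≤ (Real.exp 1 * Q * M) * ((F / Fm) * N) :=
          mul_le_mul_of_nonneg_right hfinal (by positivity)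
      _ = Real.exp 1 * (Q * ((F / Fm) * (N * M))) := by ring
      _ ≤ Real.exp 1 * (A * B) :=
          mul_le_mul_of_nonneg_left hAB (Real.exp_pos 1).le
  have hApos : 0 < A := lt_of_lt_of_le hQ0 hhead
  have hBpos : 0 < B := lt_of_lt_of_le (by positivity) hB2
  rw [hseq, hsplit, div_le_div_iff₀ (mul_pos hr0 (mul_pos hApos hBpos)) hr0]
  calc N * F * r = r * (N * F) := by ring
    _ ≤ r * (Real.exp 1 * (A * B)) := mul_le_mul_of_nonneg_left key hr0.le
    _ = Real.exp 1 * (r * (A * B)) := by ring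

/-- There is a constant `C > 0` such that `|Γ(r·e^{3πi/4})| ≤ C/r` for all `r > 0`. -/
theorem gamma_ray_bound :
    ∃ C > (0 : ℝ), ∀ r : ℝ, 0 < r →
      ‖Complex.Gamma ((r : ℂ) *
          Complex.exp ((3 * Real.pi / 4 : ℝ) * Complex.I))‖ ≤ C / r := by
  refine ⟨Real.exp 1, Real.exp_pos 1, fun r hr => ?_⟩
  set z : ℂ := (r : ℂ) * Complex.exp (((3 * Real.pi / 4 : ℝ) : ℂ) * Complex.I) with hz
  set a : ℝ := r * (Real.sqrt 2 / 2) with hadef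
  have ha : 0 < a := by
    have h2 : (0:ℝ) < Real.sqrt 2 := by positivity
    rw [hadef]; positivity
  have hcos : Real.cos (3 * Real.pi / 4) = -(Real.sqrt 2 / 2) := by
    rw [show 3 * Real.pi / 4 = Real.pi - Real.pi / 4 by ring, Real.cos_pi_sub,
      Real.cos_pi_div_four]
  have hsin : Real.sin (3 * Real.pi / 4) = Real.sqrt 2 / 2 := by
    rw [show 3 * Real.pi / 4 = Real.pi - Real.pi / 4 by ring, Real.sin_pi_sub,
      Real.sin_pi_div_four]
  have hre : z.re = -a := by
    rw [hz, hadef]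
    simp only [Complex.mul_re, Complex.ofReal_re, Complex.ofReal_im, zero_mul, sub_zero]
    rw [Complex.exp_ofReal_mul_I_re, hcos]
    ring
  have him : z.im = a := by
    rw [hz, hadef]
    simp only [Complex.mul_im, Complex.ofReal_re, Complex.ofReal_im, zero_mul, add_zero]
    rw [Complex.exp_ofReal_mul_I_im, hsin]
  have hzr : ‖z‖ = r := by
    rw [hz, norm_mul, Complex.norm_exp, Complex.norm_of_nonneg hr.le]
    simp
  have hlim : Filter.Tendsto (fun n => ‖Complex.GammaSeq z n‖) Filter.atTop
      (nhds (‖Complex.Gamma z‖)) :=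
    (continuous_norm.tendsto _).comp (Complex.GammaSeq_tendsto_Gamma z)
  by_cases hA : 1 ≤ a
  · set m := ⌊a⌋₊ with hm
    have hm1 : 1 ≤ m := Nat.le_floor (by exact_mod_cast hA)
    have hma : (m:ℝ) ≤ a := Nat.floor_le ha.le
    have hhead : a ^ m ≤ ∏ j ∈ Finset.range m, ‖z + ((j + 1 : ℕ) : ℂ)‖ := by
      calc a ^ m = ∏ _j ∈ Finset.range m, a := by rw [Finset.prod_const, Finset.card_range]
        _ ≤ _ := Finset.prod_le_prod (fun _ _ => ha.le) (fun j _ => fac_lower2 ha hre him (j + 1))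
    have hfinal : (m.factorial : ℝ) ≤ Real.exp 1 * a ^ m * (m : ℝ) ^ a := by
      have h1 : (m.factorial : ℝ) ≤ (m : ℝ) ^ m := by exact_mod_cast Nat.factorial_le_pow m
      have h2 : (m : ℝ) ^ m ≤ a ^ m := pow_le_pow_left₀ (by positivity) hma m
      have h3 : (1:ℝ) ≤ (m : ℝ) ^ a := Real.one_le_rpow (by exact_mod_cast hm1) ha.le
      have h4 : (1:ℝ) ≤ Real.exp 1 := Real.one_le_exp (by norm_num)
      calc (m.factorial : ℝ) ≤ a ^ m := h1.trans h2
        _ = 1 * a ^ m * 1 := by ring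
        _ ≤ Real.exp 1 * a ^ m * (m : ℝ) ^ a := by
            apply mul_le_mul _ h3 zero_le_one (by positivity)
            exact mul_le_mul_of_nonneg_right h4 (pow_nonneg ha.le m)
    exact le_of_tendsto hlim (Filter.eventually_atTop.mpr
      ⟨m, fun n hn => gamma_aux ha hr hre him hzr m hm1 (a ^ m) (by positivity) hhead hfinal n hn⟩)
  · push_neg at hA
    have hhead : Real.exp (-a) ≤ ∏ j ∈ Finset.range 1, ‖z + ((j + 1 : ℕ) : ℂ)‖ := by
      rw [Finset.prod_range_one]
      have h := fac_lower ha hre him 1 le_rfl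
      simpa using h
    have hfinal : ((Nat.factorial 1 : ℕ) : ℝ) ≤ Real.exp 1 * Real.exp (-a) * ((1:ℕ) : ℝ) ^ a := by
      rw [Nat.cast_one, Real.one_rpow, mul_one, ← Real.exp_add]
      simpa using Real.one_le_exp (by linarith : (0:ℝ) ≤ 1 + -a)
    exact le_of_tendsto hlim (Filter.eventually_atTop.mpr
      ⟨1, fun n hn => gamma_aux ha hr hre him hzr 1 le_rfl (Real.exp (-a)) (Real.exp_pos _)
        hhead hfinal n hn⟩)
end

section
/- For every real constant c > π/2 there exists a constant C > 0 such that for all z ∈ ℂ with Re(z) ≥ 0, |1/Γ(z)| ≤ C·exp(c·|z|), where Γ is the complex Gamma function (at z = 0, where Γ(0) = 0 by convention, the left-hand side is interpreted as 0). -/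
open Filter Finset Real Complex
open scoped Topology

lemma harm_le : ∀ n : ℕ, 1 ≤ n → ∑ j ∈ Finset.range n, (1:ℝ)/(j+1) ≤ 1 + Real.log n := by
  intro n hn
  induction n with
  | zero => omega
  | succ m ih =>
    rcases Nat.eq_or_lt_of_le hn with h | h
    · simp [← h]
    · have hm : 1 ≤ m := by omega
      rw [Finset.sum_range_succ]
      have key : Real.log m + 1/(m+1) ≤ Real.log (m+1) := by
        have h0 : (0:ℝ) < (m:ℝ)/(m+1) := by positivity
        have h1 := Real.log_le_sub_one_of_pos h0
        rw [Real.log_div (by positivity) (by positivity), div_sub_one (by positivity),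
          show (m:ℝ) - (m+1) = -1 by ring] at h1
        have h2 : -1/((m:ℝ)+1) = -(1/(m+1)) := by ring
        linarith [h1, h2.le]
      have := ih hm
      push_cast
      linarith

lemma prod_tendsto_sinh (r : ℝ) (hr : 0 < r) :
    Tendsto (fun n : ℕ => ∏ j ∈ Finset.range n, (1 + r^2/((j:ℝ)+1)^2)) atTop
      (𝓝 (Real.sinh (π*r)/(π*r))) := by
  have h := Complex.tendsto_euler_sin_prod (Complex.I * r)
  have heq : ∀ n : ℕ, (π : ℂ) * (Complex.I * r) *
      ∏ j ∈ Finset.range n, ((1 : ℂ) - (Complex.I * r) ^ 2 / ((j : ℂ) + 1) ^ 2)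
      = ((π * r * ∏ j ∈ Finset.range n, (1 + r^2/((j:ℝ)+1)^2) : ℝ) : ℂ) * Complex.I := by
    intro n
    have hprod : ∏ j ∈ Finset.range n, ((1 : ℂ) - (Complex.I * r) ^ 2 / ((j : ℂ) + 1) ^ 2)
        = ∏ j ∈ Finset.range n, ((1:ℂ) + (r:ℂ)^2/((j:ℂ)+1)^2) :=
      Finset.prod_congr rfl (fun j _ => by rw [mul_pow, Complex.I_sq]; ring)
    rw [hprod]
    push_cast
    ring
  have hsin : Complex.sin ((π : ℂ) * (Complex.I * r)) = ((Real.sinh (π*r) : ℝ) : ℂ) * Complex.I := by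
    rw [show (π : ℂ) * (Complex.I * r) = ((π*r : ℝ) : ℂ) * Complex.I by push_cast; ring,
      Complex.sin_mul_I, Complex.ofReal_sinh]
  rw [funext heq, hsin] at h
  have h3 : Tendsto (fun n : ℕ => ((π * r * ∏ j ∈ Finset.range n, (1 + r^2/((j:ℝ)+1)^2) : ℝ) : ℂ))
      atTop (𝓝 ((Real.sinh (π*r) : ℝ) : ℂ)) := by
    simpa [mul_assoc, mul_neg, Complex.I_mul_I] using h.mul_const (-Complex.I)
  rw [Filter.tendsto_ofReal_iff] at h3
  have hπr : (π*r) ≠ 0 := by positivity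
  have h4 := h3.div_const (π*r)
  have he : (fun n : ℕ => (π * r * ∏ j ∈ Finset.range n, (1 + r^2/((j:ℝ)+1)^2)) / (π*r))
      = fun n : ℕ => ∏ j ∈ Finset.range n, (1 + r^2/((j:ℝ)+1)^2) := by
    funext n; rw [mul_comm, mul_div_assoc, div_self hπr, mul_one]
  rwa [he] at h4
lemma prod_le_sinh (r : ℝ) (hr : 0 < r) (n : ℕ) :
    ∏ j ∈ Finset.range n, (1 + r^2/((j:ℝ)+1)^2) ≤ Real.sinh (π*r)/(π*r) := by
  have hmono : Monotone (fun n : ℕ => ∏ j ∈ Finset.range n, (1 + r^2/((j:ℝ)+1)^2)) := by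
    apply monotone_nat_of_le_succ
    intro m
    rw [Finset.prod_range_succ]
    have h1 : (0:ℝ) < ∏ j ∈ Finset.range m, (1 + r^2/((j:ℝ)+1)^2) :=
      Finset.prod_pos (fun j _ => by positivity)
    have ht : (0:ℝ) ≤ r^2/((m:ℝ)+1)^2 := by positivity
    nlinarith [mul_nonneg h1.le ht]
  exact hmono.ge_of_tendsto (prod_tendsto_sinh r hr) n

lemma factor_bound (x y t : ℝ) (hx : 0 ≤ x) (ht : 0 < t) :
    (x+t)^2 + y^2 ≤ t^2 * (1 + (x^2+y^2)/t^2) * (1 + 2*x/t) := by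
  have key : t^2 * (1 + (x^2+y^2)/t^2) * (1 + 2*x/t)
      = (x+t)^2 + y^2 + 2*x*(x^2+y^2)/t := by field_simp; ring
  have h2 : 0 ≤ 2*x*(x^2+y^2)/t := by positivity
  linarith

lemma prod_range_fac (n : ℕ) : ∏ j ∈ Finset.range n, ((j:ℝ)+1) = (n.factorial : ℝ) := by
  induction n with
  | zero => simp
  | succ m ih => rw [Finset.prod_range_succ, ih]; push_cast [Nat.factorial_succ]; ring

lemma gseq_inv_bound (z : ℂ) (hx : 0 ≤ z.re) (hz : z ≠ 0) (n : ℕ) (hn : 1 ≤ n) :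
    (‖(Complex.GammaSeq z n)⁻¹‖)^2 ≤
      (‖z‖)^2 * Real.exp (2*z.re) *
        (Real.sinh (π * ‖z‖)/(π * ‖z‖)) := by
  set r : ℝ := ‖z‖ with hr
  set x : ℝ := z.re with hxdef
  have hrpos : 0 < r := norm_pos_iff.mpr hz
  have hnpos : (0:ℝ) < n := by exact_mod_cast hn
  -- compute the abs of the inverse
  have habs : ‖(Complex.GammaSeq z n)⁻¹‖
      = ((∏ j ∈ Finset.range n, ‖z + ((j:ℕ)+1 : ℕ)‖) * r)
        / ((n:ℝ) ^ x * (n.factorial : ℝ)) := by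
    rw [Complex.GammaSeq, inv_div, norm_div, norm_mul, norm_prod, Finset.prod_range_succ']
    have e1 : ‖z + ((0:ℕ):ℂ)‖ = r := by simp [hr]
    have e2 : ‖((n:ℕ):ℂ) ^ z‖ = (n:ℝ) ^ x := by
      rw [show ((n:ℕ):ℂ) = ((n:ℝ):ℂ) from (Complex.ofReal_natCast n).symm,
        Complex.norm_cpow_eq_rpow_re_of_pos hnpos]
    have e3 : ‖((n.factorial : ℕ):ℂ)‖ = (n.factorial : ℝ) := Complex.norm_natCast _
    rw [e1, e2, e3]
  -- the factor-wise bound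
  have hfac : ∀ j ∈ Finset.range n, (‖z + ((j:ℕ)+1 : ℕ)‖)^2
      ≤ ((j:ℝ)+1)^2 * (1 + r^2/((j:ℝ)+1)^2) * (1 + 2*x/((j:ℝ)+1)) := by
    intro j _
    have ht : (0:ℝ) < (j:ℝ)+1 := by positivity
    have h1 : (‖z + ((j:ℕ)+1 : ℕ)‖)^2 = (x + ((j:ℝ)+1))^2 + z.im^2 := by
      rw [Complex.sq_norm, Complex.normSq_apply]
      simp only [Complex.add_re, Complex.add_im, Complex.natCast_re, Complex.natCast_im, hxdef]
      push_cast
      ring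
    have h2 : r^2 = x^2 + z.im^2 := by
      rw [hr, Complex.sq_norm, Complex.normSq_apply, hxdef]; ring
    rw [h1, h2]
    exact factor_bound x z.im ((j:ℝ)+1) hx ht
  set S := Real.sinh (π*r)/(π*r) with hSdef
  set Pn := ∏ j ∈ Finset.range n, (1 + r^2/((j:ℝ)+1)^2) with hPdef
  set Qn := ∏ j ∈ Finset.range n, (1 + 2*x/((j:ℝ)+1)) with hQdef
  have hPn : Pn ≤ S := prod_le_sinh r hrpos n
  have hP0 : 0 ≤ Pn := Finset.prod_nonneg (fun j _ => by positivity)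
  have hQ0 : 0 ≤ Qn := Finset.prod_nonneg (fun j _ => by positivity)
  have hS0 : 0 ≤ S := le_trans hP0 hPn
  have h5 : (∏ j ∈ Finset.range n, ‖z + ((j:ℕ)+1 : ℕ)‖)^2
      ≤ (n.factorial : ℝ)^2 * Pn * Qn := by
    rw [← Finset.prod_pow]
    calc ∏ j ∈ Finset.range n, (‖z + ((j:ℕ)+1 : ℕ)‖)^2
        ≤ ∏ j ∈ Finset.range n,
            (((j:ℝ)+1)^2 * (1 + r^2/((j:ℝ)+1)^2) * (1 + 2*x/((j:ℝ)+1))) :=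
          Finset.prod_le_prod (fun j _ => sq_nonneg _) hfac
      _ = (n.factorial : ℝ)^2 * Pn * Qn := by
          rw [Finset.prod_mul_distrib, Finset.prod_mul_distrib, Finset.prod_pow, prod_range_fac]
  have h6 : Qn ≤ Real.exp (2*x) * (n:ℝ) ^ (2*x) := by
    have step1 : Qn ≤ ∏ j ∈ Finset.range n, Real.exp (2*x/((j:ℝ)+1)) := by
      apply Finset.prod_le_prod (fun j _ => by positivity)
      intro j _
      have := Real.add_one_le_exp (2*x/((j:ℝ)+1))
      linarith
    have step2 : ∏ j ∈ Finset.range n, Real.exp (2*x/((j:ℝ)+1))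
        = Real.exp (∑ j ∈ Finset.range n, 2*x/((j:ℝ)+1)) := (Real.exp_sum _ _).symm
    have step3 : ∑ j ∈ Finset.range n, 2*x/((j:ℝ)+1) ≤ 2*x*(1 + Real.log n) := by
      have : ∑ j ∈ Finset.range n, 2*x/((j:ℝ)+1)
          = 2*x * ∑ j ∈ Finset.range n, (1:ℝ)/((j:ℝ)+1) := by
        rw [Finset.mul_sum]; exact Finset.sum_congr rfl (fun j _ => by ring)
      rw [this]
      exact mul_le_mul_of_nonneg_left (harm_le n hn) (by positivity)
    calc Qn ≤ Real.exp (∑ j ∈ Finset.range n, 2*x/((j:ℝ)+1)) := step2 ▸ step1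
      _ ≤ Real.exp (2*x*(1 + Real.log n)) := Real.exp_le_exp.mpr step3
      _ = Real.exp (2*x) * (n:ℝ) ^ (2*x) := by
          rw [Real.rpow_def_of_pos hnpos, ← Real.exp_add]
          ring_nf
  have hD2 : ((n:ℝ) ^ x * (n.factorial : ℝ))^2 = (n:ℝ)^(2*x) * (n.factorial : ℝ)^2 := by
    rw [mul_pow]
    congr 1
    rw [← Real.rpow_natCast ((n:ℝ)^x) 2, ← Real.rpow_mul hnpos.le]
    norm_num [mul_comm]
  have hfacpos : (0:ℝ) < (n.factorial : ℝ) := by exact_mod_cast n.factorial_pos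
  have hDpos : (0:ℝ) < (n:ℝ) ^ x * (n.factorial : ℝ) :=
    mul_pos (Real.rpow_pos_of_pos hnpos x) hfacpos
  rw [habs, div_pow, div_le_iff₀ (by positivity)]
  calc ((∏ j ∈ Finset.range n, ‖z + ((j:ℕ)+1 : ℕ)‖) * r)^2
      = (∏ j ∈ Finset.range n, ‖z + ((j:ℕ)+1 : ℕ)‖)^2 * r^2 := by ring
    _ ≤ ((n.factorial : ℝ)^2 * Pn * Qn) * r^2 := by
        exact mul_le_mul_of_nonneg_right h5 (sq_nonneg r)
    _ ≤ ((n.factorial : ℝ)^2 * S * (Real.exp (2*x) * (n:ℝ) ^ (2*x))) * r^2 := by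
        apply mul_le_mul_of_nonneg_right _ (sq_nonneg r)
        have e1 : (n.factorial : ℝ)^2 * Pn * Qn ≤ (n.factorial : ℝ)^2 * S * Qn := by
          apply mul_le_mul_of_nonneg_right _ hQ0
          exact mul_le_mul_of_nonneg_left hPn (by positivity)
        have e2 : (n.factorial : ℝ)^2 * S * Qn
            ≤ (n.factorial : ℝ)^2 * S * (Real.exp (2*x) * (n:ℝ) ^ (2*x)) := by
          apply mul_le_mul_of_nonneg_left h6 (by positivity)
        linarith
    _ = r^2 * Real.exp (2*x) * S * ((n:ℝ) ^ x * (n.factorial : ℝ))^2 := by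
        rw [hD2]; ring

lemma inv_gamma_sq_bound (z : ℂ) (hx : 0 ≤ z.re) (hz : z ≠ 0) :
    (‖(Complex.Gamma z)⁻¹‖)^2 ≤
      (‖z‖)^2 * Real.exp (2*z.re) *
        (Real.sinh (π * ‖z‖)/(π * ‖z‖)) := by
  have hΓ : Complex.Gamma z ≠ 0 := by
    apply Complex.Gamma_ne_zero
    intro m h
    rcases Nat.eq_zero_or_pos m with rfl | hm
    · simp at h; exact hz h
    · rw [h] at hx
      simp at hx
      have : (0:ℝ) < m := by exact_mod_cast hm
      linarith
  have h1 : Tendsto (fun n => (Complex.GammaSeq z n)⁻¹) atTop (𝓝 ((Complex.Gamma z)⁻¹)) :=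
    (Complex.GammaSeq_tendsto_Gamma z).inv₀ hΓ
  have h2 : Tendsto (fun n => (‖(Complex.GammaSeq z n)⁻¹‖)^2) atTop
      (𝓝 ((‖(Complex.Gamma z)⁻¹‖)^2)) :=
    ((continuous_norm.tendsto _).comp h1).pow 2
  apply le_of_tendsto h2
  filter_upwards [eventually_ge_atTop 1] with n hn using gseq_inv_bound z hx hz n hn

lemma strip_bound (c : ℝ) (hc : π/2 < c) : ∃ C > (0:ℝ), ∀ z : ℂ, 0 ≤ z.re → z.re ≤ 2 →
    ‖(Complex.Gamma z)⁻¹‖ ≤ C * Real.exp (c * ‖z‖) := by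
  have hπ : (0:ℝ) < π := Real.pi_pos
  set ε := c - π/2 with hεdef
  have hε0 : 0 < ε := by simp [hεdef]; linarith
  have hc0 : 0 < c := by linarith
  refine ⟨Real.sqrt (Real.exp 4/(4*π*ε)), Real.sqrt_pos.mpr (by positivity), ?_⟩
  intro z h0 h2
  rcases eq_or_ne z 0 with rfl | hz
  · rw [Complex.Gamma_zero, inv_zero, norm_zero]
    positivity
  set r : ℝ := ‖z‖ with hrdef
  have hrpos : 0 < r := norm_pos_iff.mpr hz
  set C : ℝ := Real.sqrt (Real.exp 4/(4*π*ε)) with hCdef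
  have hC0 : 0 < C := Real.sqrt_pos.mpr (by positivity)
  have hCsq : C^2 = Real.exp 4/(4*π*ε) := Real.sq_sqrt (by positivity)
  have key := inv_gamma_sq_bound z h0 hz
  rw [← hrdef] at key
  have hsinh : Real.sinh (π*r) ≤ Real.exp (π*r)/2 := by
    rw [Real.sinh_eq]
    have := (Real.exp_pos (-(π*r))).le
    linarith
  have hsinh0 : 0 ≤ Real.sinh (π*r) := by
    rw [Real.sinh_eq]
    have : Real.exp (-(π*r)) ≤ Real.exp (π*r) := Real.exp_le_exp.mpr (by nlinarith)
    linarith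
  have hb5 : r ≤ Real.exp (2*ε*r)/(2*ε) := by
    rw [le_div_iff₀ (by positivity)]
    nlinarith [Real.add_one_le_exp (2*ε*r)]
  have efin : (C * Real.exp (c*r))^2
      = Real.exp 4/(4*π*ε) * (Real.exp (π*r) * Real.exp (2*ε*r)) := by
    rw [mul_pow, hCsq, sq (Real.exp (c*r)), ← Real.exp_add, ← Real.exp_add]
    have : c*r + c*r = π*r + 2*ε*r := by simp [hεdef]; ring
    rw [this]
  have goal_sq : (‖(Complex.Gamma z)⁻¹‖)^2 ≤ (C * Real.exp (c * r))^2 := by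
    calc (‖(Complex.Gamma z)⁻¹‖)^2
        ≤ r^2 * Real.exp (2*z.re) * (Real.sinh (π*r)/(π*r)) := key
      _ ≤ r^2 * Real.exp 4 * (Real.sinh (π*r)/(π*r)) := by
          refine mul_le_mul_of_nonneg_right ?_ (div_nonneg hsinh0 (by positivity))
          exact mul_le_mul_of_nonneg_left (Real.exp_le_exp.mpr (by linarith)) (by positivity)
      _ = r * Real.exp 4 * Real.sinh (π*r) / π := by
          field_simp
      _ ≤ (Real.exp (2*ε*r)/(2*ε)) * Real.exp 4 * (Real.exp (π*r)/2) / π := by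
          gcongr
      _ = Real.exp 4/(4*π*ε) * (Real.exp (π*r) * Real.exp (2*ε*r)) := by
          field_simp
          ring
      _ = (C * Real.exp (c*r))^2 := efin.symm
  have h1 : 0 ≤ ‖(Complex.Gamma z)⁻¹‖ := norm_nonneg _
  have h2' : 0 ≤ C * Real.exp (c * r) := by positivity
  nlinarith [goal_sq, h1, h2']

/-- For any `c > π/2` there is `C > 0` with `|1/Γ(z)| ≤ C·exp(c·|z|)` for all `z`
with `Re(z) ≥ 0`. -/
theorem inverse_gamma_bound (c : ℝ) (hc : Real.pi / 2 < c) :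
    ∃ C > (0 : ℝ), ∀ z : ℂ, 0 ≤ z.re →
      ‖(Complex.Gamma z)⁻¹‖ ≤ C * Real.exp (c * ‖z‖) := by
  have hc0 : 0 < c := lt_trans (by positivity) hc
  obtain ⟨C, hC0, hstrip⟩ := strip_bound c hc
  refine ⟨C, hC0, ?_⟩
  have main : ∀ n : ℕ, ∀ z : ℂ, 0 ≤ z.re → z.re ≤ 2 + n →
      ‖(Complex.Gamma z)⁻¹‖ ≤ C * Real.exp (c * ‖z‖) := by
    intro n
    induction n with
    | zero => intro z h0 h2; exact hstrip z h0 (by simpa using h2)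
    | succ m ih =>
      intro z h0 h2
      by_cases hle : z.re ≤ 2 + m
      · exact ih z h0 hle
      · push_neg at hle
        have hre : (z - 1).re = z.re - 1 := by simp
        have hmnn : (0:ℝ) ≤ m := Nat.cast_nonneg m
        have hw : z - 1 ≠ 0 := by
          intro h
          have : z = 1 := by linear_combination h + (1:ℂ)
          rw [this] at hle
          simp at hle
          linarith
        have hG : Complex.Gamma z = (z-1) * Complex.Gamma (z-1) := by
          have h' := Complex.Gamma_add_one (z-1) hw
          rwa [sub_add_cancel] at h'
        have h1 : ‖(Complex.Gamma z)⁻¹‖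
            = ‖(Complex.Gamma (z-1))⁻¹‖ / ‖z-1‖ := by
          rw [hG, mul_inv, norm_mul, norm_inv]
          ring
        have habs1 : 1 ≤ ‖z-1‖ := by
          have h3 : (1:ℝ) ≤ (z-1).re := by rw [hre]; linarith
          exact le_trans h3 (le_trans (le_abs_self _) (Complex.abs_re_le_norm _))
        have hzw : ‖z-1‖ ≤ ‖z‖ := by
          rw [Complex.norm_def, Complex.norm_def]
          apply Real.sqrt_le_sqrt
          rw [Complex.normSq_apply, Complex.normSq_apply]
          simp only [Complex.sub_re, Complex.sub_im, Complex.one_re, Complex.one_im]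
          nlinarith [h2, hle, hmnn]
        calc ‖(Complex.Gamma z)⁻¹‖
            = ‖(Complex.Gamma (z-1))⁻¹‖ / ‖z-1‖ := h1
          _ ≤ ‖(Complex.Gamma (z-1))⁻¹‖ :=
              div_le_self (norm_nonneg _) habs1
          _ ≤ C * Real.exp (c * ‖z-1‖) := by
              apply ih (z-1) (by rw [hre]; linarith) (by rw [hre]; push_cast at h2 ⊢; linarith)
          _ ≤ C * Real.exp (c * ‖z‖) := by
              apply mul_le_mul_of_nonneg_left _ hC0.le
              exact Real.exp_le_exp.mpr (mul_le_mul_of_nonneg_left hzw hc0.le)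
  intro z h0
  apply main ⌈z.re⌉₊ z h0
  have := Nat.le_ceil z.re
  linarith
end

section
/- Let μ ∈ ℂ with |μ| < 1, and let z ∈ ℂ with Re(z) > −2. Then the series ∑_{k=1}^∞ μ^k/(2k + z) converges absolutely (all denominators are nonzero since Re(2k+z) > 0 for k ≥ 1), the function t ↦ μ·e^{−zt/2}/(e^t − μ) is integrable on (0,∞), and ∑_{k=1}^∞ μ^k/(2k + z) = (1/2)·∫_0^∞ μ·e^{−zt/2}/(e^t − μ) dt. -/
open MeasureTheory Set Filter

lemma aux_integrable {c : ℂ} (hc : 0 < c.re) :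
    IntegrableOn (fun t : ℝ => Complex.exp (-(c * t))) (Ioi 0) := by
  refine Integrable.mono' (exp_neg_integrableOn_Ioi 0 hc) ?_ ?_
  · exact (Complex.continuous_exp.comp (by continuity)).aestronglyMeasurable
  · filter_upwards with t
    rw [Complex.norm_exp]
    simp [Complex.mul_re, neg_mul]

lemma aux_val {c : ℂ} (hc : 0 < c.re) :
    ∫ t in Ioi (0:ℝ), Complex.exp (-(c * t)) = 1 / c := by
  have hc0 : c ≠ 0 := fun h => by simp [h] at hc
  have hderiv : ∀ x ∈ Ici (0:ℝ), HasDerivAt (fun t : ℝ => -Complex.exp (-(c * t)) / c)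
      (Complex.exp (-(c * x))) x := by
    intro x _
    have h1 : HasDerivAt (fun t : ℝ => -(c * (t:ℂ))) (-c) x := by
      have h0 := ((Complex.ofRealCLM.hasDerivAt (x := x)).const_mul c).neg
      simp only [Complex.ofRealCLM_apply, Complex.ofReal_one, mul_one] at h0
      exact h0
    have h2 := h1.cexp
    have h3 := h2.neg.div_const c
    convert h3 using 1
    · rfl
    · rfl
    · rw [mul_neg, neg_neg, mul_div_assoc, div_self hc0, mul_one]
  have htend : Tendsto (fun t : ℝ => -Complex.exp (-(c * t)) / c) atTop (nhds 0) := by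
    rw [tendsto_zero_iff_norm_tendsto_zero]
    have : (fun t : ℝ => ‖-Complex.exp (-(c * t)) / c‖)
        = fun t : ℝ => Real.exp (-c.re * t) / ‖c‖ := by
      ext t
      rw [norm_div, norm_neg, Complex.norm_exp]
      simp [Complex.mul_re, neg_mul]
    rw [this]
    have : Tendsto (fun t : ℝ => -c.re * t) atTop atBot :=
      tendsto_id.const_mul_atTop_of_neg (by linarith)
    simpa using (Real.tendsto_exp_atBot.comp this).div_const ‖c‖
  have := integral_Ioi_of_hasDerivAt_of_tendsto' hderiv (aux_integrable hc) htend
  rw [this]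
  simp
  ring

/-- For `|μ| < 1` and `Re(z) > −2`:
`∑_{k=1}^∞ μ^k/(2k + z) = (1/2)·∫_0^∞ μ·e^{−zt/2}/(e^t − μ) dt`. -/
theorem series_integral_identity_plus (μ : ℂ) (hμ : ‖μ‖ < 1)
    (z : ℂ) (hz : -2 < z.re) :
    Summable (fun k : ℕ =>
      ‖μ ^ (k + 1) / (2 * ((k : ℂ) + 1) + z)‖) ∧
    MeasureTheory.IntegrableOn
      (fun t : ℝ => μ * Complex.exp (-(z * (t : ℂ)) / 2) / (Complex.exp (t : ℂ) - μ))
      (Set.Ioi 0) ∧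
    (∑' k : ℕ, μ ^ (k + 1) / (2 * ((k : ℂ) + 1) + z)) =
      (1 / 2) * ∫ t in Set.Ioi (0 : ℝ),
        μ * Complex.exp (-(z * (t : ℂ)) / 2) / (Complex.exp (t : ℂ) - μ) := by
  have habs : (0:ℝ) ≤ ‖μ‖ := norm_nonneg μ
  set d : ℝ := 1 + z.re / 2 with hd
  have hdpos : 0 < d := by rw [hd]; linarith
  set c : ℕ → ℂ := fun k => ((k : ℂ) + 1) + z / 2 with hcdef
  have hcre : ∀ k : ℕ, (c k).re = (k + 1 : ℝ) + z.re / 2 := by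
    intro k; simp [hcdef]
  have hcpos : ∀ k, 0 < (c k).re := by
    intro k; rw [hcre]
    have : (0:ℝ) ≤ k := Nat.cast_nonneg k
    linarith
  have hc0 : ∀ k, c k ≠ 0 := by
    intro k h
    have := hcpos k
    rw [h] at this; simp at this
  set f : ℕ → ℝ → ℂ := fun k t => μ ^ (k + 1) * Complex.exp (-(c k * t)) with hfdef
  -- denominators nonzero
  have hden : ∀ t : ℝ, 0 ≤ t → Complex.exp (t : ℂ) - μ ≠ 0 := by
    intro t ht h
    have h1 : ‖Complex.exp (t:ℂ)‖ = Real.exp t := by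
      rw [Complex.norm_exp]; simp
    have h2 : Complex.exp (t:ℂ) = μ := by rwa [sub_eq_zero] at h
    rw [h2] at h1
    have : (1:ℝ) ≤ Real.exp t := Real.one_le_exp ht
    linarith [h1 ▸ hμ]
  -- norm of each term
  have hnorm : ∀ k, ∀ t : ℝ, ‖f k t‖ = ‖μ‖ ^ (k+1) * Real.exp (-(c k).re * t) := by
    intro k t
    rw [hfdef]
    simp only [norm_mul, norm_pow, Complex.norm_exp]
    congr 2
    simp [Complex.mul_re]
  -- pointwise has sum
  have hsum_pt : ∀ t : ℝ, 0 < t →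
      HasSum (fun k => f k t)
        (μ * Complex.exp (-(z * (t:ℂ)) / 2) / (Complex.exp (t:ℂ) - μ)) := by
    intro t ht
    set x : ℂ := μ * Complex.exp (-(t:ℂ)) with hx
    have hxnorm : ‖x‖ < 1 := by
      rw [hx, norm_mul, Complex.norm_exp]
      have : Real.exp (-(t:ℂ)).re < 1 := by
        rw [Real.exp_lt_one_iff]; simpa using ht
      nlinarith [norm_nonneg μ, Real.exp_pos (-(t:ℂ)).re]
    have hge := (hasSum_geometric_of_norm_lt_one hxnorm).mul_left x
    have hge2 := hge.mul_right (Complex.exp (-(z * (t:ℂ)) / 2))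
    have hexpne : Complex.exp (t:ℂ) ≠ 0 := Complex.exp_ne_zero _
    have h1x : (1 : ℂ) - x ≠ 0 := by
      intro h
      rw [sub_eq_zero] at h
      rw [← h] at hxnorm
      simp at hxnorm
    have hfun : (fun k => x * x ^ k * Complex.exp (-(z * (t:ℂ)) / 2)) = fun k => f k t := by
      funext k
      rw [hfdef]
      show x * x ^ k * Complex.exp (-(z * (t:ℂ)) / 2) = μ ^ (k+1) * Complex.exp (-(c k * t))
      rw [hx]
      rw [show μ * Complex.exp (-(t:ℂ)) * (μ * Complex.exp (-(t:ℂ))) ^ k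
          = μ ^ (k+1) * (Complex.exp (-(t:ℂ))) ^ (k+1) by rw [pow_succ, pow_succ]; ring]
      rw [← Complex.exp_nat_mul, mul_assoc, ← Complex.exp_add]
      congr 2
      push_cast [hcdef]
      ring
    have hval : x * (1 - x)⁻¹ * Complex.exp (-(z * (t:ℂ)) / 2)
        = μ * Complex.exp (-(z * (t:ℂ)) / 2) / (Complex.exp (t:ℂ) - μ) := by
      have h1x' : (1:ℂ) - μ * (Complex.exp (t:ℂ))⁻¹ ≠ 0 := by
        rw [hx, Complex.exp_neg] at h1x; exact h1x
      rw [hx, Complex.exp_neg]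
      field_simp
    rw [hfun, hval] at hge2
    exact hge2
  -- integrability of each term
  have hfint : ∀ k, MeasureTheory.IntegrableOn (f k) (Set.Ioi 0) := by
    intro k
    exact (aux_integrable (hcpos k)).const_mul _
  -- bound on norm integrals
  have hC : MeasureTheory.IntegrableOn (fun t : ℝ => Real.exp (-d * t)) (Set.Ioi 0) :=
    exp_neg_integrableOn_Ioi 0 hdpos
  set C : ℝ := ∫ t in Set.Ioi (0:ℝ), Real.exp (-d * t) with hCdef
  have hIbound : ∀ k, (∫ t in Set.Ioi (0:ℝ), ‖f k t‖) ≤ ‖μ‖ ^ (k+1) * C := by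
    intro k
    have hle : ∀ t ∈ Set.Ioi (0:ℝ), ‖f k t‖ ≤ ‖μ‖ ^ (k+1) * Real.exp (-d * t) := by
      intro t ht
      rw [hnorm]
      have ht' : (0:ℝ) ≤ t := (le_of_lt ht)
      apply mul_le_mul_of_nonneg_left _ (pow_nonneg habs _)
      rw [Real.exp_le_exp]
      have hdle : d ≤ (c k).re := by
        rw [hcre, hd]
        have : (0:ℝ) ≤ k := Nat.cast_nonneg k
        linarith
      nlinarith
    calc (∫ t in Set.Ioi (0:ℝ), ‖f k t‖)
        ≤ ∫ t in Set.Ioi (0:ℝ), ‖μ‖ ^ (k+1) * Real.exp (-d * t) := by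
          apply MeasureTheory.setIntegral_mono_on (hfint k).norm (hC.const_mul _)
            measurableSet_Ioi hle
      _ = ‖μ‖ ^ (k+1) * C := by rw [MeasureTheory.integral_const_mul]
  have hSumBound : Summable fun k : ℕ => ‖μ‖ ^ (k+1) * C := by
    have : Summable fun k : ℕ => ‖μ‖ ^ k := summable_geometric_of_lt_one habs hμ
    simpa [pow_succ, mul_comm, mul_assoc, mul_left_comm] using (this.mul_left (‖μ‖ * C))
  have hnormint : Summable fun k : ℕ => ∫ t in Set.Ioi (0:ℝ), ‖f k t‖ := by
    apply Summable.of_nonneg_of_le (fun k => ?_) hIbound hSumBound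
    exact MeasureTheory.integral_nonneg (fun t => norm_nonneg _)
  -- Part 1
  have part1 : Summable (fun k : ℕ =>
      ‖μ ^ (k + 1) / (2 * ((k : ℂ) + 1) + z)‖) := by
    have hre : ∀ k : ℕ, (2:ℝ) + z.re ≤ ‖2 * ((k : ℂ) + 1) + z‖ := by
      intro k
      have h1 : (2 * ((k : ℂ) + 1) + z).re = 2 * (k + 1 : ℝ) + z.re := by simp
      calc (2:ℝ) + z.re ≤ (2 * ((k : ℂ) + 1) + z).re := by
            rw [h1]; have : (0:ℝ) ≤ k := Nat.cast_nonneg k; linarith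
        _ ≤ ‖2 * ((k : ℂ) + 1) + z‖ := Complex.re_le_norm _
    have h2z : (0:ℝ) < 2 + z.re := by linarith
    have hle : ∀ k : ℕ, ‖μ ^ (k + 1) / (2 * ((k : ℂ) + 1) + z)‖
        ≤ ‖μ‖ ^ (k+1) * (1 / (2 + z.re)) := by
      intro k
      rw [norm_div, norm_pow]
      rw [div_le_iff₀ (lt_of_lt_of_le h2z (hre k))]
      rw [mul_assoc]
      have h1 : (1:ℝ) ≤ 1 / (2 + z.re) * ‖2 * ((k : ℂ) + 1) + z‖ := by
        rw [one_div, inv_mul_eq_div, le_div_iff₀ h2z, one_mul]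
        exact hre k
      calc ‖μ‖ ^ (k + 1) = ‖μ‖ ^ (k + 1) * 1 := by ring
        _ ≤ _ := mul_le_mul_of_nonneg_left h1 (pow_nonneg habs _)
    have hsb : Summable fun k : ℕ => ‖μ‖ ^ (k+1) * (1 / (2 + z.re)) := by
      have : Summable fun k : ℕ => ‖μ‖ ^ k := summable_geometric_of_lt_one habs hμ
      simpa [pow_succ, mul_comm, mul_assoc, mul_left_comm] using
        (this.mul_left (‖μ‖ * (1 / (2 + z.re))))
    exact Summable.of_nonneg_of_le (fun k => norm_nonneg _) hle hsb
  -- Part 2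
  have part2 : MeasureTheory.IntegrableOn
      (fun t : ℝ => μ * Complex.exp (-(z * (t : ℂ)) / 2) / (Complex.exp (t : ℂ) - μ))
      (Set.Ioi 0) := by
    have hmeas : MeasureTheory.AEStronglyMeasurable
        (fun t : ℝ => μ * Complex.exp (-(z * (t : ℂ)) / 2) / (Complex.exp (t : ℂ) - μ))
        (MeasureTheory.volume.restrict (Set.Ioi 0)) := by
      apply ContinuousOn.aestronglyMeasurable _ measurableSet_Ioi
      apply ContinuousOn.div
      · exact (Continuous.mul continuous_const (Complex.continuous_exp.comp
          (by continuity))).continuousOn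
      · exact (Continuous.sub (Complex.continuous_exp.comp Complex.continuous_ofReal)
          continuous_const).continuousOn
      · intro t ht; exact hden t (le_of_lt ht)
    refine MeasureTheory.Integrable.mono'
      ((hC.const_mul (‖μ‖ / (1 - ‖μ‖)))) hmeas ?_
    rw [MeasureTheory.ae_restrict_iff' measurableSet_Ioi]
    filter_upwards with t ht
    have ht' : (0:ℝ) < t := ht
    have hexp1 : (1:ℝ) ≤ Real.exp t := Real.one_le_exp ht'.le
    have hdenlb : (1 - ‖μ‖) * Real.exp t ≤ ‖Complex.exp (t:ℂ) - μ‖ := by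
      have h1 : ‖Complex.exp (t:ℂ)‖ = Real.exp t := by
        rw [Complex.norm_exp]; simp
      have h2 : ‖Complex.exp (t:ℂ)‖ - ‖μ‖
          ≤ ‖Complex.exp (t:ℂ) - μ‖ := by
        simpa using
          norm_sub_norm_le (Complex.exp (t:ℂ)) μ
      rw [h1] at h2
      nlinarith
    have hdenpos : (0:ℝ) < ‖Complex.exp (t:ℂ) - μ‖ := by
      nlinarith [Real.exp_pos t]
    rw [norm_div, norm_mul, Complex.norm_exp]
    have hrec : (-(z * (t:ℂ)) / 2).re = -(z.re * t) / 2 := by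
      simp [Complex.div_re, Complex.mul_re]
    rw [hrec, div_le_iff₀ hdenpos]
    have key : Real.exp (-(z.re * t) / 2) = Real.exp (-d * t) * Real.exp t := by
      rw [← Real.exp_add]; congr 1; rw [hd]; ring
    calc ‖μ‖ * Real.exp (-(z.re * t) / 2)
        = ‖μ‖ * Real.exp (-d * t) * Real.exp t := by rw [key]; ring
      _ ≤ ‖μ‖ / (1 - ‖μ‖) * Real.exp (-d * t)
            * ((1 - ‖μ‖) * Real.exp t) := by
          have hne : (1 - ‖μ‖) ≠ 0 := by linarith
          apply le_of_eq
          field_simp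
      _ ≤ ‖μ‖ / (1 - ‖μ‖) * Real.exp (-d * t)
            * ‖Complex.exp (t:ℂ) - μ‖ := by
          gcongr
  refine ⟨part1, part2, ?_⟩
  -- Part 3
  have hterm : ∀ k : ℕ, μ ^ (k + 1) / (2 * ((k : ℂ) + 1) + z)
      = (1/2 : ℂ) * ∫ t in Set.Ioi (0:ℝ), f k t := by
    intro k
    rw [hfdef]
    simp only
    rw [MeasureTheory.integral_const_mul, aux_val (hcpos k)]
    have h2 : (2 * ((k : ℂ) + 1) + z) = 2 * c k := by rw [hcdef]; ring
    rw [h2]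
    field_simp
  calc (∑' k : ℕ, μ ^ (k + 1) / (2 * ((k : ℂ) + 1) + z))
      = ∑' k : ℕ, (1/2 : ℂ) * ∫ t in Set.Ioi (0:ℝ), f k t := by
        exact tsum_congr hterm
    _ = (1/2 : ℂ) * ∑' k : ℕ, ∫ t in Set.Ioi (0:ℝ), f k t := tsum_mul_left
    _ = (1/2 : ℂ) * ∫ t in Set.Ioi (0:ℝ), ∑' k, f k t := by
        rw [MeasureTheory.integral_tsum_of_summable_integral_norm hfint hnormint]
    _ = (1/2 : ℂ) * ∫ t in Set.Ioi (0:ℝ),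
          μ * Complex.exp (-(z * (t : ℂ)) / 2) / (Complex.exp (t : ℂ) - μ) := by
        congr 1
        apply MeasureTheory.setIntegral_congr_fun measurableSet_Ioi
        intro t ht
        exact (hsum_pt t ht).tsum_eq
end

section
/- Let μ ∈ ℂ with |μ| > 1, and let z ∈ ℂ with Re(z) < 0. Then the series ∑_{j=0}^∞ μ^{−j}/(z − 2j) converges absolutely (all denominators are nonzero since Re(z − 2j) < 0), the function t ↦ μ·e^{−zt/2}/(e^t − μ) is integrable on (−∞,0), and ∑_{j=0}^∞ μ^{−j}/(z − 2j) = (1/2)·∫_{−∞}^0 μ·e^{−zt/2}/(e^t − μ) dt. -/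
open MeasureTheory Set Filter
lemma cexp_Iio_aux (c : ℂ) (hc : 0 < c.re) :
    MeasureTheory.IntegrableOn (fun t : ℝ => Complex.exp (c * t)) (Set.Iio 0) ∧
    (∫ t in Set.Iio (0:ℝ), Complex.exp (c * t)) = 1 / c := by
  have hc0 : c ≠ 0 := fun h => by simp [h] at hc
  have hnorm : ∀ x : ℝ, ‖Complex.exp (-(c * x))‖ = Real.exp (-c.re * x) := by
    intro x
    rw [Complex.norm_exp]
    congr 1
    simp [Complex.mul_re]
  have hIoi : MeasureTheory.IntegrableOn (fun x : ℝ => Complex.exp (-(c * x))) (Set.Ioi 0) := by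
    apply MeasureTheory.Integrable.mono' (exp_neg_integrableOn_Ioi 0 hc)
    · exact (Complex.continuous_exp.comp
        ((continuous_const.mul Complex.continuous_ofReal).neg)).aestronglyMeasurable
    · filter_upwards with x using le_of_eq (hnorm x)
  have hderiv : ∀ x ∈ Set.Ici (0:ℝ),
      HasDerivAt (fun x : ℝ => -c⁻¹ * Complex.exp (-(c * x))) (Complex.exp (-(c * x))) x := by
    intro x _
    have h2 : HasDerivAt (fun w : ℂ => -(c * w)) (-c) (x:ℂ) := by
      simpa using (hasDerivAt_id (x:ℂ)).const_mul (-c)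
    have h3 := (h2.cexp).const_mul (-c⁻¹)
    have h4 : -c⁻¹ * (Complex.exp (-(c * (x:ℂ))) * -c) = Complex.exp (-(c * (x:ℂ))) := by
      field_simp
    rw [h4] at h3
    exact h3.comp_ofReal
  have htend : Tendsto (fun x : ℝ => -c⁻¹ * Complex.exp (-(c * x))) atTop (nhds 0) := by
    rw [tendsto_zero_iff_norm_tendsto_zero]
    have : (fun x : ℝ => ‖-c⁻¹ * Complex.exp (-(c * x))‖)
        = fun x : ℝ => ‖c⁻¹‖ * Real.exp (-c.re * x) := by
      funext x; rw [norm_mul, hnorm x, norm_neg]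
    rw [this]
    have h5 : Tendsto (fun x : ℝ => -c.re * x) atTop atBot :=
      tendsto_id.const_mul_atTop_of_neg (by linarith)
    simpa using (Real.tendsto_exp_atBot.comp h5).const_mul ‖c⁻¹‖
  have hint : (∫ x in Set.Ioi (0:ℝ), Complex.exp (-(c * x))) = 1 / c := by
    have := MeasureTheory.integral_Ioi_of_hasDerivAt_of_tendsto
      (f := fun x : ℝ => -c⁻¹ * Complex.exp (-(c * x)))
      (by
        exact (continuous_const.mul (Complex.continuous_exp.comp
          ((continuous_const.mul Complex.continuous_ofReal).neg))).continuousWithinAt)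
      (fun x hx => hderiv x (Set.Ioi_subset_Ici_self hx)) hIoi htend
    rw [this]
    simp [one_div]
  constructor
  · have h6 := (MeasureTheory.integrable_indicator_iff measurableSet_Ioi).2 hIoi
    have h7 := h6.comp_neg
    have h8 : MeasureTheory.Integrable
        (Set.indicator (Set.Iio 0) (fun t : ℝ => Complex.exp (c * t))) := by
      refine h7.congr (Filter.Eventually.of_forall fun x => ?_)
      simp only [Set.indicator_apply, Set.mem_Ioi, Set.mem_Iio]
      by_cases hx : x < 0
      · rw [if_pos (by linarith), if_pos hx]; push_cast; ring_nf
      · rw [if_neg (by intro h; exact hx (by linarith)), if_neg hx]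
    exact (MeasureTheory.integrable_indicator_iff measurableSet_Iio).1 h8
  · have h9 := integral_comp_neg_Ioi (0:ℝ) (fun t : ℝ => Complex.exp (c * t))
    rw [neg_zero] at h9
    rw [← MeasureTheory.integral_Iic_eq_integral_Iio, ← h9, ← hint]
    congr 1; funext x; push_cast; ring_nf

/-- For `|μ| > 1` and `Re(z) < 0`:
`∑_{j=0}^∞ μ^{−j}/(z − 2j) = (1/2)·∫_{−∞}^0 μ·e^{−zt/2}/(e^t − μ) dt`. -/
theorem series_integral_identity_minus (μ : ℂ) (hμ : 1 < ‖μ‖)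
    (z : ℂ) (hz : z.re < 0) :
    Summable (fun j : ℕ =>
      ‖μ ^ (-(j : ℤ)) / (z - 2 * (j : ℂ))‖) ∧
    MeasureTheory.IntegrableOn
      (fun t : ℝ => μ * Complex.exp (-(z * (t : ℂ)) / 2) / (Complex.exp (t : ℂ) - μ))
      (Set.Iio 0) ∧
    (∑' j : ℕ, μ ^ (-(j : ℤ)) / (z - 2 * (j : ℂ))) =
      (1 / 2) * ∫ t in Set.Iio (0 : ℝ),
        μ * Complex.exp (-(z * (t : ℂ)) / 2) / (Complex.exp (t : ℂ) - μ) := by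
  have hμpos : 0 < ‖μ‖ := by linarith
  have hμ0 : μ ≠ 0 := by
    intro h; rw [h] at hμ; simp at hμ; linarith
  have hr : (‖μ‖)⁻¹ < 1 := by
    rw [inv_lt_one_iff₀]; right; exact hμ
  have hrnn : 0 ≤ (‖μ‖)⁻¹ := by positivity
  have hb : 0 < -z.re / 2 := by linarith
  set c : ℕ → ℂ := fun j => (j : ℂ) - z / 2 with hcdef
  have hcre : ∀ j : ℕ, (c j).re = (j : ℝ) - z.re / 2 := by
    intro j; simp [hcdef, Complex.sub_re, Complex.div_re]
  have hcpos : ∀ j : ℕ, 0 < (c j).re := by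
    intro j; rw [hcre]
    have : (0:ℝ) ≤ (j:ℝ) := Nat.cast_nonneg j
    linarith
  have hcne : ∀ j : ℕ, c j ≠ 0 := by
    intro j h
    have := hcpos j; rw [h] at this; simp at this
  have habs_pow : ∀ j : ℕ, ‖μ ^ (-(j : ℤ))‖ = ((‖μ‖)⁻¹) ^ j := by
    intro j
    rw [norm_zpow, zpow_neg, zpow_natCast, inv_pow]
  -- Part 1 : summability
  have part1 : Summable (fun j : ℕ =>
      ‖μ ^ (-(j : ℤ)) / (z - 2 * (j : ℂ))‖) := by
    refine Summable.of_nonneg_of_le (fun j => norm_nonneg _) (fun j => ?_)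
      ((summable_geometric_of_lt_one hrnn hr).mul_right (-z.re)⁻¹)
    rw [norm_div, habs_pow]
    have hle : -z.re ≤ ‖z - 2 * (j : ℂ)‖ := by
      have h1 : (z - 2 * (j : ℂ)).re = z.re - 2 * j := by
        simp [Complex.sub_re, Complex.mul_re]
      have h2 : -(z - 2 * (j : ℂ)).re ≤ |(z - 2 * (j : ℂ)).re| := neg_le_abs _
      have h3 := Complex.abs_re_le_norm (z - 2 * (j : ℂ))
      have h4 : (0:ℝ) ≤ (j:ℝ) := Nat.cast_nonneg j
      calc -z.re ≤ -(z.re - 2 * j) := by linarith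
        _ ≤ |z.re - 2 * (j:ℝ)| := neg_le_abs _
        _ = |(z - 2 * (j : ℂ)).re| := by rw [h1]
        _ ≤ ‖z - 2 * (j : ℂ)‖ := h3
    rw [div_eq_mul_inv]
    apply mul_le_mul_of_nonneg_left _ (by positivity)
    exact inv_anti₀ (by linarith) hle
  -- the series of functions
  set F : ℕ → ℝ → ℂ := fun j t => -(μ ^ (-(j : ℤ)) * Complex.exp (c j * t)) with hFdef
  have hFint : ∀ j, MeasureTheory.IntegrableOn (F j) (Set.Iio 0) := by
    intro j
    exact ((cexp_Iio_aux (c j) (hcpos j)).1.const_mul _).neg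
  have hFval : ∀ j, (∫ t in Set.Iio (0:ℝ), F j t)
      = 2 * (μ ^ (-(j : ℤ)) / (z - 2 * (j : ℂ))) := by
    intro j
    have h2 : z - 2 * (j : ℂ) = -(2 * c j) := by
      simp only [hcdef]; ring
    rw [show (∫ t in Set.Iio (0:ℝ), F j t)
        = -∫ t in Set.Iio (0:ℝ), μ ^ (-(j : ℤ)) * Complex.exp (c j * t) by
      rw [← MeasureTheory.integral_neg],
      MeasureTheory.integral_const_mul, (cexp_Iio_aux (c j) (hcpos j)).2, h2]
    rw [div_neg, mul_neg, mul_one_div, ← mul_div_assoc,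
      mul_div_mul_left _ _ (two_ne_zero (α := ℂ))]
  -- real comparison function
  have hrealnorm : ∀ t : ℝ, ‖Complex.exp (((-z.re/2 : ℝ) : ℂ) * t)‖ = Real.exp (-z.re/2 * t) := by
    intro t
    rw [Complex.norm_exp]
    congr 1
    rw [show (((-z.re/2 : ℝ)) : ℂ) * (t:ℂ) = ((-z.re/2 * t : ℝ) : ℂ) by push_cast; ring]
    exact Complex.ofReal_re _
  have hreal : MeasureTheory.IntegrableOn (fun t : ℝ => Real.exp (-z.re/2 * t)) (Set.Iio 0) := by
    have h := (cexp_Iio_aux ((-z.re/2 : ℝ) : ℂ) (by simpa using hb)).1.norm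
    exact h.congr (Filter.Eventually.of_forall fun t => hrealnorm t)
  -- norm of F j t
  have hFnorm : ∀ j (t : ℝ), ‖F j t‖
      = ((‖μ‖)⁻¹) ^ j * Real.exp ((c j).re * t) := by
    intro j t
    rw [hFdef]
    simp only [norm_neg, norm_mul, habs_pow, Complex.norm_exp]
    congr 2
    simp [Complex.mul_re]
  have hFle : ∀ j (t : ℝ), t ≤ 0 → ‖F j t‖
      ≤ ((‖μ‖)⁻¹) ^ j * Real.exp (-z.re/2 * t) := by
    intro j t ht
    rw [hFnorm]
    apply mul_le_mul_of_nonneg_left _ (by positivity)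
    apply Real.exp_le_exp.2
    apply mul_le_mul_of_nonpos_right _ ht
    rw [hcre]
    have : (0:ℝ) ≤ (j:ℝ) := Nat.cast_nonneg j
    linarith
  set K : ℝ := ∫ t in Set.Iio (0:ℝ), Real.exp (-z.re/2 * t) with hK
  have hFsum : Summable (fun j => ∫ t in Set.Iio (0:ℝ), ‖F j t‖) := by
    refine Summable.of_nonneg_of_le
      (fun j => MeasureTheory.integral_nonneg fun t => norm_nonneg _) (fun j => ?_)
      ((summable_geometric_of_lt_one hrnn hr).mul_right K)
    calc (∫ t in Set.Iio (0:ℝ), ‖F j t‖)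
        ≤ ∫ t in Set.Iio (0:ℝ), ((‖μ‖)⁻¹) ^ j * Real.exp (-z.re/2 * t) := by
          refine MeasureTheory.setIntegral_mono_on (hFint j).norm
            (hreal.const_mul _) measurableSet_Iio (fun t ht => hFle j t (le_of_lt ht))
      _ = ((‖μ‖)⁻¹) ^ j * K := by rw [MeasureTheory.integral_const_mul]
  -- pointwise expansion
  have hkey : ∀ t : ℝ, t < 0 →
      μ * Complex.exp (-(z * (t : ℂ)) / 2) / (Complex.exp (t : ℂ) - μ) = ∑' j, F j t := by
    intro t ht
    have het : ‖Complex.exp (t:ℂ)‖ = Real.exp t := by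
      rw [Complex.norm_exp, Complex.ofReal_re]
    have het1 : Real.exp t < 1 := by
      rw [← Real.exp_zero]; exact Real.exp_lt_exp.2 ht
    have hw : ‖Complex.exp (t:ℂ) * μ⁻¹‖ < 1 := by
      rw [norm_mul, norm_inv, het]
      have h1 : 0 < Real.exp t := Real.exp_pos t
      calc Real.exp t * (‖μ‖)⁻¹ < 1 * 1 := by
            apply mul_lt_mul' (le_of_lt het1) hr hrnn one_pos
        _ = 1 := by ring
    have hone : (1 : ℂ) - Complex.exp (t:ℂ) * μ⁻¹ ≠ 0 := by
      intro h
      rw [sub_eq_zero] at h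
      have := congrArg norm h
      rw [norm_one] at this
      rw [← this] at hw
      exact lt_irrefl _ hw
    have hne : Complex.exp (t:ℂ) - μ ≠ 0 := by
      intro h
      rw [sub_eq_zero] at h
      have := congrArg norm h
      rw [het] at this
      linarith
    have hFeq : ∀ j : ℕ, F j t
        = (-(Complex.exp (-(z * (t:ℂ)) / 2))) * (Complex.exp (t:ℂ) * μ⁻¹) ^ j := by
      intro j
      have he : Complex.exp (c j * t)
          = (Complex.exp (t:ℂ)) ^ j * Complex.exp (-(z * (t:ℂ)) / 2) := by
        rw [← Complex.exp_nat_mul, ← Complex.exp_add]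
        congr 1
        simp only [hcdef]; ring
      rw [hFdef]
      simp only [he, zpow_neg, zpow_natCast, ← inv_pow, mul_pow]
      ring
    rw [tsum_congr hFeq, tsum_mul_left, tsum_geometric_of_norm_lt_one hw]
    have hμe : Complex.exp (t:ℂ) ≠ μ := sub_ne_zero.1 hne
    have hne' : μ - Complex.exp (t:ℂ) ≠ 0 := sub_ne_zero.2 (Ne.symm hμe)
    rw [div_eq_iff hne]
    field_simp [hne']
    ring
  -- Part 2 : integrability of the original function
  have hμ1 : 0 < ‖μ‖ - 1 := by linarith
  have part2 : MeasureTheory.IntegrableOn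
      (fun t : ℝ => μ * Complex.exp (-(z * (t : ℂ)) / 2) / (Complex.exp (t : ℂ) - μ))
      (Set.Iio 0) := by
    apply MeasureTheory.Integrable.mono'
      ((hreal.const_mul (‖μ‖ / (‖μ‖ - 1))))
    · apply Measurable.aestronglyMeasurable
      have m1 : Measurable fun t : ℝ => -(z * (t:ℂ)) / 2 :=
        ((measurable_const.mul Complex.measurable_ofReal).neg).div_const 2
      have m2 : Measurable fun t : ℝ => Complex.exp (t:ℂ) - μ :=
        (Complex.measurable_exp.comp Complex.measurable_ofReal).sub measurable_const
      exact (measurable_const.mul (Complex.measurable_exp.comp m1)).div m2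
    · filter_upwards [MeasureTheory.ae_restrict_mem measurableSet_Iio] with t ht
      have het : ‖Complex.exp (t:ℂ)‖ = Real.exp t := by
        rw [Complex.norm_exp, Complex.ofReal_re]
      have het1 : Real.exp t < 1 := by
        rw [← Real.exp_zero]; exact Real.exp_lt_exp.2 ht
      have hden : ‖μ‖ - 1 ≤ ‖Complex.exp (t:ℂ) - μ‖ := by
        have h5 : ‖μ‖ - ‖Complex.exp (t:ℂ)‖ ≤ ‖μ - Complex.exp (t:ℂ)‖ := norm_sub_norm_le _ _
        rw [norm_sub_rev] at h5
        rw [het] at h5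
        linarith
      have hnum : ‖Complex.exp (-(z * (t:ℂ)) / 2)‖ = Real.exp (-z.re/2 * t) := by
        rw [Complex.norm_exp]
        congr 1
        simp [Complex.div_re, Complex.mul_re, Complex.normSq]
        ring
      rw [norm_div, norm_mul, hnum]
      calc ‖μ‖ * Real.exp (-z.re / 2 * t) / ‖Complex.exp (t:ℂ) - μ‖
          ≤ ‖μ‖ * Real.exp (-z.re / 2 * t) / (‖μ‖ - 1) := by
            apply div_le_div_of_nonneg_left (by positivity) hμ1 hden
        _ = ‖μ‖ / (‖μ‖ - 1) * Real.exp (-z.re / 2 * t) := by ring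
  -- the interchange
  have hinter := MeasureTheory.integral_tsum_of_summable_integral_norm hFint hFsum
  refine ⟨part1, part2, ?_⟩
  have hcongr : (∫ t in Set.Iio (0:ℝ),
      μ * Complex.exp (-(z * (t : ℂ)) / 2) / (Complex.exp (t : ℂ) - μ))
      = ∫ t in Set.Iio (0:ℝ), ∑' j, F j t := by
    refine MeasureTheory.setIntegral_congr_fun measurableSet_Iio (fun t ht => hkey t ht)
  have h10 : (∑' j, ∫ t in Set.Iio (0:ℝ), F j t)
      = 2 * ∑' j : ℕ, μ ^ (-(j : ℤ)) / (z - 2 * (j : ℂ)) := by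
    rw [tsum_congr hFval, tsum_mul_left]
  rw [hcongr, ← hinter, h10]
  ring
end

section
/- Let x, y ∈ ℂ with Re(x) > 0 and Re(y) > 0. For every r ∈ (0,1), every factor 1 − (1−r)^n(1−yr) (n ≥ 0) is nonzero and the infinite product P(r) = ∏_{n=0}^∞ [1 − (1−r)^n(1−xr)]/[1 − (1−r)^n(1−yr)] converges. Moreover, lim_{r→0⁺} r^{x−y}·P(r) = Γ(y)/Γ(x), where r^{x−y} = exp((x−y)·ln r) with the real natural logarithm ln r, and Γ is the complex Gamma function. -/
open Complex Filter Finset Set Topology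

noncomputable section QGammaAux
namespace QGammaAux

/-- `c r n = (1 - (1-r)^n) / (r (1-r)^n)`. -/
def c (r : ℝ) (n : ℕ) : ℝ := (1 - (1-r)^n) / (r * (1-r)^n)

lemma c_zero (r : ℝ) : c r 0 = 0 := by simp [c]

lemma c_eq (r : ℝ) (hr : r ∈ Set.Ioo (0:ℝ) 1) (n : ℕ) :
    c r n = (∑ k ∈ Finset.range n, (1-r)^k) / (1-r)^n := by
  obtain ⟨h0, h1⟩ := hr
  have hq : (0:ℝ) < 1 - r := by linarith
  have hgeom : 1 - (1-r)^n = r * ∑ k ∈ Finset.range n, (1-r)^k := by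
    have := geom_sum_mul (1-r : ℝ) n
    nlinarith [this]
  have hqn : (1-r)^n ≠ 0 := (pow_pos hq n).ne'
  rw [c, hgeom]
  field_simp

lemma c_ge (r : ℝ) (hr : r ∈ Set.Ioo (0:ℝ) 1) (n : ℕ) : (n:ℝ) ≤ c r n := by
  obtain ⟨h0, h1⟩ := hr
  have hq : (0:ℝ) < 1 - r := by linarith
  have hqn : (0:ℝ) < (1-r)^n := pow_pos hq n
  rw [c_eq r ⟨h0, h1⟩ n, le_div_iff₀ hqn]
  calc (n:ℝ) * (1-r)^n = ∑ _k ∈ Finset.range n, (1-r)^n := by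
        simp [Finset.sum_const, mul_comm]
    _ ≤ ∑ k ∈ Finset.range n, (1-r)^k := by
        refine Finset.sum_le_sum fun k hk => ?_
        exact pow_le_pow_of_le_one hq.le (by linarith) (Finset.mem_range.mp hk).le

lemma c_pos (r : ℝ) (hr : r ∈ Set.Ioo (0:ℝ) 1) (n : ℕ) : (0:ℝ) < c r (n+1) :=
  lt_of_lt_of_le (by positivity) (c_ge r hr (n+1))

lemma c_nonneg (r : ℝ) (hr : r ∈ Set.Ioo (0:ℝ) 1) (n : ℕ) : (0:ℝ) ≤ c r n :=
  le_trans (by positivity) (c_ge r hr n)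

lemma one_add_inv_c (r : ℝ) (hr : r ∈ Set.Ioo (0:ℝ) 1) (n : ℕ) :
    1 + 1 / c r (n+1) = (1 - (1-r)^(n+2)) / (1 - (1-r)^(n+1)) := by
  obtain ⟨h0, h1⟩ := hr
  have hq0 : (0:ℝ) < 1 - r := by linarith
  have hq1 : (1-r) < 1 := by linarith
  have h2 : (1-r)^(n+1) < 1 := pow_lt_one₀ hq0.le hq1 (Nat.succ_ne_zero n)
  have h3 : (0:ℝ) < 1 - (1-r)^(n+1) := by linarith
  have hc := c_pos r ⟨h0, h1⟩ n
  rw [c]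
  have hqn : (0:ℝ) < (1-r)^(n+1) := pow_pos hq0 _
  field_simp
  ring

lemma inv_c_le (r : ℝ) (hr : r ∈ Set.Ioo (0:ℝ) 1) (n : ℕ) :
    1 / c r (n+1) ≤ (1-r)^(n+1) := by
  obtain ⟨h0, h1⟩ := hr
  have hq0 : (0:ℝ) < 1 - r := by linarith
  have h2 : (1-r)^(n+1) ≤ (1-r) := pow_le_of_le_one hq0.le (by linarith) (Nat.succ_ne_zero n)
  have h3 : (0:ℝ) < 1 - (1-r)^(n+1) := by linarith
  have hqn : (0:ℝ) < (1-r)^(n+1) := pow_pos hq0 _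
  rw [c, one_div_div]
  rw [div_le_iff₀ h3]
  calc r * (1-r)^(n+1) = (1-r)^(n+1) * r := by ring
    _ ≤ (1-r)^(n+1) * (1 - (1-r)^(n+1)) := by
        refine mul_le_mul_of_nonneg_left ?_ hqn.le
        linarith
    _ = (1-r)^(n+1) * (1 - (1-r)^(n+1)) := rfl

lemma factor_eq (z : ℂ) {r : ℝ} (hr : r ∈ Set.Ioo (0:ℝ) 1) (n : ℕ) :
    (1 : ℂ) - (1 - (r:ℂ))^n * (1 - z * r) = (r:ℂ) * (1-(r:ℂ))^n * ((c r n : ℂ) + z) := by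
  obtain ⟨h0, h1⟩ := hr
  have hq : (0:ℝ) < 1 - r := by linarith
  have hr0 : (r:ℂ) ≠ 0 := ofReal_ne_zero.mpr h0.ne'
  have hq0 : ((1:ℂ) - r) ≠ 0 := by
    rw [show (1:ℂ) - r = ((1 - r : ℝ):ℂ) by push_cast; ring]
    exact ofReal_ne_zero.mpr hq.ne'
  have hqn : ((1:ℂ) - r)^n ≠ 0 := pow_ne_zero _ hq0
  rw [c]
  push_cast
  field_simp
  ring

def hfun (x y : ℂ) (t : ℝ) : ℂ :=
  Complex.log (1 + x / t) - Complex.log (1 + y / t) - (x - y) * Complex.log (1 + 1 / (t:ℂ))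

lemma re_one_add_div (z : ℂ) (hz : 0 ≤ z.re) {t : ℝ} (ht : 0 < t) :
    0 < (1 + z / (t:ℂ)).re := by
  have h1 : (z / (t:ℂ)).re = z.re * t⁻¹ := by
    rw [div_eq_mul_inv, ← ofReal_inv, mul_comm, re_ofReal_mul]
    ring
  have h2 : (0:ℝ) ≤ z.re * t⁻¹ := by positivity
  rw [add_re, one_re, h1]
  linarith

lemma one_add_div_ne (z : ℂ) (hz : 0 ≤ z.re) {t : ℝ} (ht : 0 < t) : (1 + z/(t:ℂ)) ≠ 0 := by
  have h := (re_one_add_div z hz ht).ne'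
  intro h'
  rw [h'] at h
  simp at h

lemma ratio_eq_exp (x y : ℂ) (hx : 0 < x.re) (hy : 0 < y.re) {t : ℝ} (ht : 0 < t) :
    Complex.exp (hfun x y t + (x - y) * (Real.log (1 + 1/t) : ℂ)) = (x + t) / (y + t) := by
  have hcast : ((Real.log (1 + 1/t) : ℝ) : ℂ) = Complex.log (1 + 1/(t:ℂ)) := by
    have h' : ((1 + 1/t : ℝ) : ℂ) = 1 + 1/(t:ℂ) := by push_cast; ring
    rw [ofReal_log (by positivity : (0:ℝ) ≤ 1 + 1/t), h']
  have hxne := one_add_div_ne x hx.le ht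
  have hyne := one_add_div_ne y hy.le ht
  rw [hfun, hcast]
  have hre : Complex.log (1+x/(t:ℂ)) - Complex.log (1+y/(t:ℂ))
      - (x-y)*Complex.log (1+1/(t:ℂ)) + (x-y)*Complex.log (1+1/(t:ℂ))
      = Complex.log (1+x/(t:ℂ)) - Complex.log (1+y/(t:ℂ)) := by ring
  rw [hre, Complex.exp_sub, Complex.exp_log hxne, Complex.exp_log hyne]
  have ht0 : (t:ℂ) ≠ 0 := ofReal_ne_zero.mpr ht.ne'
  have hyt : (y + (t:ℂ)) ≠ 0 := by
    intro h'
    have : (y + (t:ℂ)).re = 0 := by rw [h']; simp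
    rw [add_re, ofReal_re] at this
    linarith
  have hyt' : ((t:ℂ) + y) ≠ 0 := by rwa [add_comm]
  field_simp
  ring

lemma re_div_ofReal (z : ℂ) (t : ℝ) : (z / (t:ℂ)).re = z.re * t⁻¹ := by
  rw [div_eq_mul_inv, ← ofReal_inv, mul_comm, re_ofReal_mul]
  ring

lemma norm_log_one_add_le' {w : ℂ} (hw : 0 ≤ w.re) : ‖Complex.log (1 + w)‖ ≤ ‖w‖ + Real.pi := by
  have h1 : (1:ℝ) ≤ ‖1 + w‖ := by
    have := Complex.re_le_norm (1 + w)
    rw [add_re, one_re] at this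
    linarith
  have h2 : ‖1 + w‖ ≤ 1 + ‖w‖ := by
    simpa using norm_add_le (1:ℂ) w
  calc ‖Complex.log (1+w)‖ ≤ |(Complex.log (1+w)).re| + |(Complex.log (1+w)).im| :=
        Complex.norm_le_abs_re_add_abs_im _
    _ ≤ ‖w‖ + Real.pi := by
        rw [Complex.log_re, Complex.log_im]
        gcongr
        · rw [abs_eq_self.mpr (Real.log_nonneg h1)]
          calc Real.log ‖1+w‖ ≤ Real.log (1 + ‖w‖) :=
                Real.log_le_log (by linarith) h2
            _ ≤ (1 + ‖w‖) - 1 := Real.log_le_sub_one_of_pos (by positivity)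
            _ = ‖w‖ := by ring
        · exact Complex.abs_arg_le_pi _

lemma norm_log_quad {w : ℂ} (hw : ‖w‖ ≤ 1/2) : ‖Complex.log (1 + w) - w‖ ≤ ‖w‖^2 := by
  have h1 : ‖w‖ < 1 := by linarith
  refine (Complex.norm_log_one_add_sub_self_le h1).trans ?_
  have h3 : (0:ℝ) < 1 - ‖w‖ := by linarith
  have h2 : (1 - ‖w‖)⁻¹ ≤ 2 := by
    rw [inv_le_comm₀ h3 (by norm_num)]
    linarith
  nlinarith [sq_nonneg ‖w‖, norm_nonneg w]

lemma hfun_decomp (x y : ℂ) {t : ℝ} (ht : t ≠ 0) :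
    hfun x y t = (Complex.log (1 + x/t) - x/t) - (Complex.log (1 + y/t) - y/t)
      - (x-y) * (Complex.log (1 + 1/(t:ℂ)) - 1/(t:ℂ)) := by
  rw [hfun]
  have ht0 : (t:ℂ) ≠ 0 := ofReal_ne_zero.mpr ht
  field_simp
  ring

lemma norm_div_ofReal (z : ℂ) {t : ℝ} (ht : 0 < t) : ‖z / (t:ℂ)‖ = ‖z‖ / t := by
  rw [norm_div, Complex.norm_real, Real.norm_eq_abs, abs_of_pos ht]

set_option maxHeartbeats 1000000 in
lemma hfun_bound (x y : ℂ) (hx : 0 < x.re) (hy : 0 < y.re) :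
    ∃ C : ℝ, 0 ≤ C ∧ ∀ t : ℝ, 1 ≤ t → ‖hfun x y t‖ ≤ C / t^2 := by
  set B : ℝ := ‖x‖ + ‖y‖ + 1 with hB
  have hB1 : 1 ≤ B := by
    have := norm_nonneg x; have := norm_nonneg y; simp only [hB]; linarith
  set C₂ : ℝ := (‖x‖ + Real.pi) + (‖y‖ + Real.pi) + ‖x-y‖*(1+Real.pi) with hC₂
  set C₁ : ℝ := ‖x‖^2 + ‖y‖^2 + ‖x-y‖ with hC₁
  have hC₂0 : 0 ≤ C₂ := by
    have := Real.pi_pos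
    have := norm_nonneg x; have := norm_nonneg y; have := norm_nonneg (x-y)
    simp only [hC₂]; nlinarith
  have hC₁0 : 0 ≤ C₁ := by positivity
  refine ⟨C₁ + C₂ * (2*B)^2, by positivity, fun t ht => ?_⟩
  have ht0 : (0:ℝ) < t := by linarith
  have htne : t ≠ 0 := ht0.ne'
  have hnx : ‖x/(t:ℂ)‖ = ‖x‖/t := norm_div_ofReal x ht0
  have hny : ‖y/(t:ℂ)‖ = ‖y‖/t := norm_div_ofReal y ht0
  have hn1 : ‖1/(t:ℂ)‖ = 1/t := by simpa using norm_div_ofReal 1 ht0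
  have ht2 : (0:ℝ) < t^2 := by positivity
  rcases le_or_gt (2*B) t with hcase | hcase
  · -- large t : quadratic regime
    have hxt : ‖x/(t:ℂ)‖ ≤ 1/2 := by
      rw [hnx, div_le_iff₀ ht0]
      simp only [hB] at hcase ⊢
      nlinarith [norm_nonneg y]
    have hyt : ‖y/(t:ℂ)‖ ≤ 1/2 := by
      rw [hny, div_le_iff₀ ht0]
      simp only [hB] at hcase ⊢
      nlinarith [norm_nonneg x]
    have h1t : ‖1/(t:ℂ)‖ ≤ 1/2 := by
      rw [hn1, div_le_iff₀ ht0]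
      simp only [hB] at hcase
      nlinarith [norm_nonneg x, norm_nonneg y]
    rw [hfun_decomp x y htne]
    calc ‖_ - _ - _‖ ≤ ‖Complex.log (1 + x/t) - x/t‖ + ‖Complex.log (1 + y/t) - y/t‖
          + ‖x-y‖ * ‖Complex.log (1 + 1/(t:ℂ)) - 1/(t:ℂ)‖ := by
          refine (norm_sub_le _ _).trans ?_
          rw [norm_mul]
          gcongr
          exact norm_sub_le _ _
      _ ≤ ‖x/(t:ℂ)‖^2 + ‖y/(t:ℂ)‖^2 + ‖x-y‖ * ‖1/(t:ℂ)‖^2 := by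
          gcongr
          · exact norm_log_quad hxt
          · exact norm_log_quad hyt
          · exact norm_log_quad h1t
      _ = C₁ / t^2 := by
          rw [hnx, hny, hn1, hC₁]
          field_simp
      _ ≤ (C₁ + C₂ * (2*B)^2) / t^2 := by
          gcongr
          nlinarith
  · -- small t : crude bound
    have hcrude : ‖hfun x y t‖ ≤ C₂ := by
      rw [hfun]
      have b1 : ‖Complex.log (1 + x/(t:ℂ))‖ ≤ ‖x‖ + Real.pi := by
        refine (norm_log_one_add_le' ?_).trans ?_
        · rw [re_div_ofReal]; positivity
        · rw [hnx]
          have : ‖x‖/t ≤ ‖x‖ := by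
            rw [div_le_iff₀ ht0]; nlinarith [norm_nonneg x]
          linarith
      have b2 : ‖Complex.log (1 + y/(t:ℂ))‖ ≤ ‖y‖ + Real.pi := by
        refine (norm_log_one_add_le' ?_).trans ?_
        · rw [re_div_ofReal]; positivity
        · rw [hny]
          have : ‖y‖/t ≤ ‖y‖ := by
            rw [div_le_iff₀ ht0]; nlinarith [norm_nonneg y]
          linarith
      have b3 : ‖Complex.log (1 + 1/(t:ℂ))‖ ≤ 1 + Real.pi := by
        refine (norm_log_one_add_le' ?_).trans ?_
        · have : ((1:ℂ)/(t:ℂ)).re = (1:ℂ).re * t⁻¹ := re_div_ofReal 1 t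
          rw [this]; simp; positivity
        · rw [hn1]
          have : 1/t ≤ 1 := by rw [div_le_iff₀ ht0]; linarith
          linarith
      calc ‖_ - _ - _‖ ≤ ‖Complex.log (1 + x/(t:ℂ))‖ + ‖Complex.log (1 + y/(t:ℂ))‖
            + ‖x-y‖ * ‖Complex.log (1 + 1/(t:ℂ))‖ := by
            refine (norm_sub_le _ _).trans ?_
            rw [norm_mul]
            gcongr
            exact norm_sub_le _ _
        _ ≤ C₂ := by
            rw [hC₂]
            gcongr
    refine hcrude.trans ?_
    rw [le_div_iff₀ ht2]
    have htB : t^2 ≤ (2*B)^2 := by nlinarith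
    have h5 := mul_le_mul_of_nonneg_left htB hC₂0
    nlinarith

lemma hasSum_log_c {r : ℝ} (hr : r ∈ Set.Ioo (0:ℝ) 1) :
    HasSum (fun n : ℕ => Real.log (1 + 1 / c r (n+1))) (- Real.log r) := by
  obtain ⟨h0, h1⟩ := hr
  have hq0 : (0:ℝ) < 1 - r := by linarith
  have hq1 : 1 - r < 1 := by linarith
  have hcp : ∀ n : ℕ, (0:ℝ) < c r (n+1) := fun n => c_pos r ⟨h0, h1⟩ n
  have hsum : Summable (fun n : ℕ => Real.log (1 + 1 / c r (n+1))) := by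
    refine Summable.of_nonneg_of_le (fun n => Real.log_nonneg ?_) (fun n => ?_)
      (summable_geometric_of_lt_one hq0.le hq1)
    · have h2 : (0:ℝ) ≤ 1 / c r (n+1) := div_nonneg zero_le_one (hcp n).le
      linarith
    · have h2 : (0:ℝ) < 1 / c r (n+1) := div_pos one_pos (hcp n)
      calc Real.log (1 + 1/c r (n+1)) ≤ (1 + 1/c r (n+1)) - 1 :=
            Real.log_le_sub_one_of_pos (by linarith)
        _ = 1/c r (n+1) := by ring
        _ ≤ (1-r)^(n+1) := inv_c_le r ⟨h0, h1⟩ n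
        _ ≤ (1-r)^n := pow_le_pow_of_le_one hq0.le hq1.le (Nat.le_succ n)
  have hq2 : ∀ m : ℕ, (0:ℝ) < 1 - (1-r)^(m+1) := by
    intro m
    have h2 : (1-r)^(m+1) < 1 := pow_lt_one₀ hq0.le hq1 (by omega)
    linarith
  have htel : ∀ N : ℕ, ∑ n ∈ Finset.range N, Real.log (1 + 1 / c r (n+1))
      = Real.log (1 - (1-r)^(N+1)) - Real.log (1 - (1-r)^(0+1)) := by
    intro N
    rw [← Finset.sum_range_sub (fun i => Real.log (1 - (1-r)^(i+1))) N]
    refine Finset.sum_congr rfl fun n _ => ?_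
    rw [one_add_inv_c r ⟨h0, h1⟩ n, Real.log_div (hq2 (n+1)).ne' (hq2 n).ne']
  have hpow : Tendsto (fun N : ℕ => (1-r)^(N+1)) atTop (𝓝 0) :=
    (tendsto_pow_atTop_nhds_zero_of_lt_one hq0.le hq1).comp (tendsto_add_atTop_nat 1)
  have hlog1 : Tendsto (fun N : ℕ => Real.log (1 - (1-r)^(N+1))) atTop (𝓝 0) := by
    have h2 : Tendsto (fun N : ℕ => 1 - (1-r)^(N+1)) atTop (𝓝 1) := by
      simpa using (tendsto_const_nhds (x := (1:ℝ))).sub hpow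
    have h3 := (Real.continuousAt_log one_ne_zero).tendsto.comp h2
    simpa [Function.comp_def] using h3
  have hlim : Tendsto (fun N : ℕ => ∑ n ∈ Finset.range N, Real.log (1 + 1 / c r (n+1)))
      atTop (𝓝 (- Real.log r)) := by
    simp only [htel]
    have : Real.log (1 - (1-r)^(0+1)) = Real.log r := by norm_num
    rw [this]
    simpa using hlog1.sub tendsto_const_nhds
  have := hsum.hasSum.tendsto_sum_nat
  have huniq := tendsto_nhds_unique this hlim
  rw [← huniq]
  exact hsum.hasSum

lemma summable_aux : Summable (fun n : ℕ => (1:ℝ) / ((n:ℝ)+1)^2) := by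
  have h := (summable_nat_add_iff 1).mpr
    (Real.summable_one_div_nat_pow.mpr (by norm_num : 1 < 2))
  refine h.congr fun n => ?_
  push_cast
  ring

lemma summable_hfun_comp (x y : ℂ) (hx : 0 < x.re) (hy : 0 < y.re)
    {C : ℝ} (hC0 : 0 ≤ C) (hC : ∀ t : ℝ, 1 ≤ t → ‖hfun x y t‖ ≤ C / t^2)
    (u : ℕ → ℝ) (hu : ∀ n : ℕ, (n:ℝ) + 1 ≤ u n) :
    Summable (fun n : ℕ => hfun x y (u n)) := by
  have hb : Summable (fun n : ℕ => C / ((n:ℝ)+1)^2) := by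
    refine (summable_aux.mul_left C).congr fun n => ?_
    field_simp
  refine Summable.of_norm_bounded hb (fun n => ?_)
  have hn0 : (0:ℝ) < (n:ℝ) + 1 := by positivity
  have hn1 : (1:ℝ) ≤ u n := le_trans (by linarith) (hu n)
  refine (hC (u n) hn1).trans ?_
  have h1 : ((n:ℝ)+1)^2 ≤ (u n)^2 := by nlinarith [hu n]
  exact div_le_div_of_nonneg_left hC0 (by positivity) h1

lemma key (x y : ℂ) (hx : 0 < x.re) (hy : 0 < y.re) {r : ℝ} (hr : r ∈ Set.Ioo (0:ℝ) 1) :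
    (∀ n : ℕ, (1 : ℂ) - (1 - (r:ℂ))^n * (1 - y*r) ≠ 0) ∧
    HasProd (fun n : ℕ => ((1:ℂ) - (1-(r:ℂ))^n * (1 - x*r)) / ((1:ℂ) - (1-(r:ℂ))^n * (1 - y*r)))
      (Complex.exp (Complex.log x - Complex.log y + (∑' n : ℕ, hfun x y (c r (n+1)))
        - (x-y) * (Real.log r : ℂ))) := by
  obtain ⟨h0, h1⟩ := hr
  have hq0 : (0:ℝ) < 1 - r := by linarith
  have hr0 : (r:ℂ) ≠ 0 := ofReal_ne_zero.mpr h0.ne'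
  have hqC : ((1:ℂ) - r) ≠ 0 := by
    rw [show (1:ℂ) - r = ((1 - r : ℝ):ℂ) by push_cast; ring]
    exact ofReal_ne_zero.mpr hq0.ne'
  have hx0 : x ≠ 0 := by intro h; rw [h] at hx; simp at hx
  have hy0 : y ≠ 0 := by intro h; rw [h] at hy; simp at hy
  have hfac : ∀ (z : ℂ) (_ : 0 < z.re) (n : ℕ), ((c r n : ℂ) + z) ≠ 0 := by
    intro z hz n h
    have h2 : ((c r n : ℂ) + z).re = c r n + z.re := by simp
    rw [h] at h2
    simp only [zero_re] at h2
    have := c_nonneg r ⟨h0, h1⟩ n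
    linarith [h2.symm]
  have hden : ∀ n : ℕ, (1 : ℂ) - (1 - (r:ℂ))^n * (1 - y*r) ≠ 0 := by
    intro n
    rw [factor_eq y ⟨h0, h1⟩ n]
    exact mul_ne_zero (mul_ne_zero hr0 (pow_ne_zero _ hqC)) (hfac y hy n)
  refine ⟨hden, ?_⟩
  obtain ⟨C, hC0, hC⟩ := hfun_bound x y hx hy
  have hcu : ∀ n : ℕ, (n:ℝ) + 1 ≤ c r (n+1) := by
    intro n
    have := c_ge r ⟨h0, h1⟩ (n+1)
    push_cast at this ⊢
    linarith
  have hS : HasSum (fun n : ℕ => hfun x y (c r (n+1))) (∑' n : ℕ, hfun x y (c r (n+1))) :=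
    (summable_hfun_comp x y hx hy hC0 hC _ hcu).hasSum
  have hL : HasSum (fun n : ℕ => (x-y) * ((Real.log (1 + 1 / c r (n+1)) : ℝ) : ℂ))
      ((x-y) * ((-Real.log r : ℝ) : ℂ)) :=
    ((Complex.hasSum_ofReal.mpr (hasSum_log_c ⟨h0, h1⟩)).mul_left (x-y))
  set ℓ : ℕ → ℂ := fun n =>
    if n = 0 then Complex.log x - Complex.log y
    else hfun x y (c r n) + (x-y) * ((Real.log (1 + 1 / c r n) : ℝ) : ℂ) with hℓ
  have hshift : HasSum (fun n : ℕ => ℓ (n+1))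
      ((∑' n : ℕ, hfun x y (c r (n+1))) + (x-y) * ((-Real.log r : ℝ) : ℂ)) := by
    refine (hS.add hL).congr_fun fun n => ?_
    simp [hℓ]
  have hsumℓ : HasSum ℓ ((∑' n : ℕ, hfun x y (c r (n+1))) + (x-y) * ((-Real.log r : ℝ) : ℂ)
      + ∑ i ∈ Finset.range 1, ℓ i) := (hasSum_nat_add_iff 1).mp hshift
  have hval : (∑' n : ℕ, hfun x y (c r (n+1))) + (x-y) * ((-Real.log r : ℝ) : ℂ)
      + ∑ i ∈ Finset.range 1, ℓ i
      = Complex.log x - Complex.log y + (∑' n : ℕ, hfun x y (c r (n+1)))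
        - (x-y) * (Real.log r : ℂ) := by
    rw [Finset.sum_range_one]
    simp only [hℓ, if_pos rfl]
    push_cast
    ring
  rw [← hval]
  have hprod := hsumℓ.cexp
  refine hprod.congr_fun fun n => ?_
  match n with
  | 0 =>
    simp only [Function.comp_apply, hℓ, eq_self_iff_true, if_true]
    rw [Complex.exp_sub, Complex.exp_log hx0, Complex.exp_log hy0]
    rw [factor_eq x ⟨h0, h1⟩ 0, factor_eq y ⟨h0, h1⟩ 0]
    rw [c_zero]
    simp only [pow_zero, mul_one, ofReal_zero, zero_add]
    rw [mul_div_mul_left _ _ hr0]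
  | Nat.succ m =>
    simp only [Function.comp_apply, hℓ, Nat.succ_ne_zero, if_false]
    rw [ratio_eq_exp x y hx hy (c_pos r ⟨h0, h1⟩ m)]
    rw [factor_eq x ⟨h0, h1⟩ (m+1), factor_eq y ⟨h0, h1⟩ (m+1)]
    rw [mul_div_mul_left _ _ (mul_ne_zero hr0 (pow_ne_zero _ hqC))]
    rw [add_comm x, add_comm y]

lemma summable_hfun_nat (x y : ℂ) (hx : 0 < x.re) (hy : 0 < y.re) :
    Summable (fun n : ℕ => hfun x y ((n:ℝ)+1)) := by
  obtain ⟨C, hC0, hC⟩ := hfun_bound x y hx hy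
  exact summable_hfun_comp x y hx hy hC0 hC _ (fun n => le_refl _)

lemma gamma_ratio (x y : ℂ) (hx : 0 < x.re) (hy : 0 < y.re) :
    Complex.Gamma y / Complex.Gamma x
      = Complex.exp (Complex.log x - Complex.log y + ∑' n : ℕ, hfun x y ((n:ℝ)+1)) := by
  have hx0 : x ≠ 0 := by intro h; rw [h] at hx; simp at hx
  have hy0 : y ≠ 0 := by intro h; rw [h] at hy; simp at hy
  have hΓx : Complex.Gamma x ≠ 0 := by
    refine Complex.Gamma_ne_zero fun m => ?_
    intro h
    rw [h] at hx
    simp only [neg_re, natCast_re] at hx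
    have : (0:ℝ) ≤ (m:ℝ) := Nat.cast_nonneg m
    linarith
  have h1 : Tendsto (fun n : ℕ => Complex.GammaSeq y n / Complex.GammaSeq x n) atTop
      (𝓝 (Complex.Gamma y / Complex.Gamma x)) :=
    (Complex.GammaSeq_tendsto_Gamma y).div (Complex.GammaSeq_tendsto_Gamma x) hΓx
  have hsum := summable_hfun_nat x y hx hy
  set E : ℕ → ℂ := fun n => Complex.log x - Complex.log y
      + (∑ j ∈ Finset.range n, hfun x y ((j:ℝ)+1))
      + (x-y) * ((Real.log ((n:ℝ)+1) - Real.log (n:ℝ) : ℝ) : ℂ) with hE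
  have h2 : Tendsto (fun n => Complex.exp (E n)) atTop
      (𝓝 (Complex.exp (Complex.log x - Complex.log y + ∑' n : ℕ, hfun x y ((n:ℝ)+1)))) := by
    refine (Complex.continuous_exp.tendsto _).comp ?_
    have hpart := hsum.hasSum.tendsto_sum_nat
    have hδ : Tendsto (fun n : ℕ => Real.log ((n:ℝ)+1) - Real.log (n:ℝ)) atTop (𝓝 0) := by
      have hq : Tendsto (fun n : ℕ => 1 + 1/(n:ℝ)) atTop (𝓝 1) := by
        simpa using (tendsto_const_nhds (x := (1:ℝ))).add tendsto_one_div_atTop_nhds_zero_nat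
      have hlog := (Real.continuousAt_log one_ne_zero).tendsto.comp hq
      simp only [Function.comp_def, Real.log_one] at hlog
      refine hlog.congr' ?_
      filter_upwards [eventually_ge_atTop 1] with n hn
      have hn0 : (n:ℝ) ≠ 0 := Nat.cast_ne_zero.mpr (by omega)
      rw [show (1:ℝ) + 1/(n:ℝ) = ((n:ℝ)+1)/(n:ℝ) by field_simp,
        Real.log_div (by positivity) hn0]
    have hmul : Tendsto (fun n : ℕ => (x-y) * ((Real.log ((n:ℝ)+1) - Real.log (n:ℝ) : ℝ) : ℂ))
        atTop (𝓝 0) := by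
      have := ((Complex.continuous_ofReal.tendsto 0).comp hδ).const_mul (x-y)
      simpa using this
    have h3 := (hpart.const_add (Complex.log x - Complex.log y)).add hmul
    rw [add_zero] at h3
    exact h3
  refine tendsto_nhds_unique h1 (h2.congr' ?_)
  filter_upwards [eventually_ge_atTop 1] with n hn
  have hnC : (n:ℂ) ≠ 0 := Nat.cast_ne_zero.mpr (by omega)
  have hpos : ∀ (z : ℂ) (_ : 0 < z.re) (j : ℕ), z + (j:ℂ) ≠ 0 := by
    intro z hz j h
    have h2' : (z + (j:ℂ)).re = z.re + (j:ℝ) := by simp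
    rw [h] at h2'
    simp only [zero_re] at h2'
    have : (0:ℝ) ≤ (j:ℝ) := Nat.cast_nonneg j
    linarith [h2'.symm]
  have hpx : ∏ j ∈ Finset.range (n+1), (x + (j:ℂ)) ≠ 0 :=
    Finset.prod_ne_zero_iff.mpr fun j _ => hpos x hx j
  have hpy : ∏ j ∈ Finset.range (n+1), (y + (j:ℂ)) ≠ 0 :=
    Finset.prod_ne_zero_iff.mpr fun j _ => hpos y hy j
  have hfact : ((n.factorial : ℕ) : ℂ) ≠ 0 := Nat.cast_ne_zero.mpr (Nat.factorial_ne_zero n)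
  have hcx : (n:ℂ)^x = Complex.exp (x * Complex.log n) := by
    rw [Complex.cpow_def_of_ne_zero hnC x, mul_comm]
  have hcy : (n:ℂ)^y = Complex.exp (y * Complex.log n) := by
    rw [Complex.cpow_def_of_ne_zero hnC y, mul_comm]
  -- telescoping real sum
  have htel : ∑ j ∈ Finset.range n, Real.log (1 + 1/((j:ℝ)+1)) = Real.log ((n:ℝ)+1) := by
    have h2' : ∀ j : ℕ, Real.log (1 + 1/((j:ℝ)+1))
        = (fun i : ℕ => Real.log ((i:ℝ)+1)) (j+1) - (fun i : ℕ => Real.log ((i:ℝ)+1)) j := by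
      intro j
      have hj : (0:ℝ) < (j:ℝ)+1 := by positivity
      simp only []
      rw [show (1:ℝ) + 1/((j:ℝ)+1) = (((j:ℝ)+1)+1)/((j:ℝ)+1) by field_simp,
        Real.log_div (by positivity) hj.ne']
      push_cast
      ring
    calc ∑ j ∈ Finset.range n, Real.log (1 + 1/((j:ℝ)+1))
        = ∑ j ∈ Finset.range n, ((fun i : ℕ => Real.log ((i:ℝ)+1)) (j+1)
            - (fun i : ℕ => Real.log ((i:ℝ)+1)) j) := Finset.sum_congr rfl fun j _ => h2' j
      _ = Real.log ((n:ℝ)+1) - Real.log (((0:ℕ):ℝ)+1) :=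
          Finset.sum_range_sub (fun i : ℕ => Real.log ((i:ℝ)+1)) n
      _ = Real.log ((n:ℝ)+1) := by norm_num
  -- the finite product as an exponential
  have hprod : ∏ j ∈ Finset.range (n+1), ((x+(j:ℂ))/(y+(j:ℂ)))
      = Complex.exp (Complex.log x - Complex.log y
          + (∑ j ∈ Finset.range n, hfun x y ((j:ℝ)+1))
          + (x-y) * ((Real.log ((n:ℝ)+1) : ℝ) : ℂ)) := by
    rw [Finset.prod_range_succ' (fun j : ℕ => (x+(j:ℂ))/(y+(j:ℂ))) n]
    have hterm : ∀ j : ℕ, (x+(((j+1:ℕ)):ℂ))/(y+(((j+1:ℕ)):ℂ))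
        = Complex.exp (hfun x y ((j:ℝ)+1)
            + (x-y) * ((Real.log (1+1/((j:ℝ)+1)) : ℝ) : ℂ)) := by
      intro j
      rw [ratio_eq_exp x y hx hy (t := (j:ℝ)+1) (by positivity)]
      push_cast
      ring_nf
    have hmid : ∏ j ∈ Finset.range n, ((x+(((j+1:ℕ)):ℂ))/(y+(((j+1:ℕ)):ℂ)))
        = Complex.exp (∑ j ∈ Finset.range n, (hfun x y ((j:ℝ)+1)
            + (x-y) * ((Real.log (1+1/((j:ℝ)+1)) : ℝ) : ℂ))) := by
      rw [Complex.exp_sum]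
      exact Finset.prod_congr rfl fun j _ => hterm j
    have hzero : (x+((0:ℕ):ℂ))/(y+((0:ℕ):ℂ)) = Complex.exp (Complex.log x - Complex.log y) := by
      rw [Complex.exp_sub, Complex.exp_log hx0, Complex.exp_log hy0]
      norm_num
    calc (∏ j ∈ Finset.range n, ((x+(((j+1:ℕ)):ℂ))/(y+(((j+1:ℕ)):ℂ))))
          * ((x+((0:ℕ):ℂ))/(y+((0:ℕ):ℂ)))
        = Complex.exp (∑ j ∈ Finset.range n, (hfun x y ((j:ℝ)+1)
            + (x-y) * ((Real.log (1+1/((j:ℝ)+1)) : ℝ) : ℂ)))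
          * Complex.exp (Complex.log x - Complex.log y) := by rw [hmid, hzero]
      _ = Complex.exp (Complex.log x - Complex.log y
          + (∑ j ∈ Finset.range n, hfun x y ((j:ℝ)+1))
          + (x-y) * ((Real.log ((n:ℝ)+1) : ℝ) : ℂ)) := by
          rw [← Complex.exp_add]
          congr 1
          rw [Finset.sum_add_distrib, ← Finset.mul_sum, ← Complex.ofReal_sum, htel]
          ring
  -- GammaSeq ratio
  have hgs : Complex.GammaSeq y n / Complex.GammaSeq x n
      = Complex.exp ((y-x) * Complex.log n)
        * ∏ j ∈ Finset.range (n+1), ((x+(j:ℂ))/(y+(j:ℂ))) := by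
    rw [Complex.GammaSeq, Complex.GammaSeq, Finset.prod_div_distrib, hcx, hcy]
    have hex : Complex.exp (x * Complex.log n) ≠ 0 := Complex.exp_ne_zero _
    have hey : Complex.exp (y * Complex.log n) ≠ 0 := Complex.exp_ne_zero _
    have hediff : Complex.exp ((y-x) * Complex.log n)
        = Complex.exp (y * Complex.log n) / Complex.exp (x * Complex.log n) := by
      rw [← Complex.exp_sub]
      congr 1
      ring
    rw [hediff]
    field_simp
  rw [hgs, hprod, ← Complex.exp_add]
  have hlogn : Complex.log (n:ℂ) = ((Real.log (n:ℝ) : ℝ) : ℂ) := Complex.natCast_log.symm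
  congr 1
  simp only [hE, hlogn]
  push_cast
  ring

lemma hfun_le (x y : ℂ) {C : ℝ} (hC0 : 0 ≤ C) (hC : ∀ t : ℝ, 1 ≤ t → ‖hfun x y t‖ ≤ C / t^2)
    {t : ℝ} {n : ℕ} (ht : (n:ℝ)+1 ≤ t) : ‖hfun x y t‖ ≤ C / ((n:ℝ)+1)^2 := by
  have hn0 : (0:ℝ) < (n:ℝ)+1 := by positivity
  have h1 : (1:ℝ) ≤ t := le_trans (by linarith) ht
  refine (hC t h1).trans ?_
  have h2 : ((n:ℝ)+1)^2 ≤ t^2 := by nlinarith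
  exact div_le_div_of_nonneg_left hC0 (by positivity) h2

lemma c_tendsto (m : ℕ) : Tendsto (fun r : ℝ => c r m) (𝓝[Set.Ioo (0:ℝ) 1] 0) (𝓝 (m:ℝ)) := by
  have hcont : ContinuousAt (fun r : ℝ => (∑ j ∈ Finset.range m, (1-r)^j)/(1-r)^m) 0 := by
    apply ContinuousAt.div
    · exact (continuous_finset_sum _ fun j _ =>
        (continuous_const.sub continuous_id).pow j).continuousAt
    · exact ((continuous_const.sub continuous_id).pow m).continuousAt
    · norm_num
  have hval : (∑ j ∈ Finset.range m, (1-(0:ℝ))^j)/(1-(0:ℝ))^m = (m:ℝ) := by simp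
  have h2 : Tendsto (fun r : ℝ => (∑ j ∈ Finset.range m, (1-r)^j)/(1-r)^m)
      (𝓝[Set.Ioo (0:ℝ) 1] 0) (𝓝 (m:ℝ)) := by
    have h3 := hcont.tendsto
    rw [hval] at h3
    exact h3.mono_left nhdsWithin_le_nhds
  refine h2.congr' ?_
  filter_upwards [self_mem_nhdsWithin] with r hr
  exact (c_eq r hr m).symm

lemma hfun_contAt (x y : ℂ) (hx : 0 < x.re) (hy : 0 < y.re) {t₀ : ℝ} (ht₀ : 0 < t₀) :
    ContinuousAt (hfun x y) t₀ := by
  have key : ∀ z : ℂ, 0 ≤ z.re → ContinuousAt (fun t : ℝ => Complex.log (1 + z/(t:ℂ))) t₀ := by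
    intro z hz
    have h1 : ContinuousAt (fun t : ℝ => 1 + z/(t:ℂ)) t₀ := by
      refine ContinuousAt.add continuousAt_const ?_
      exact ContinuousAt.div continuousAt_const Complex.continuous_ofReal.continuousAt
        (ofReal_ne_zero.mpr ht₀.ne')
    have hslit : (1 + z/(t₀:ℂ)) ∈ Complex.slitPlane :=
      Complex.mem_slitPlane_iff.mpr (Or.inl (re_one_add_div z hz ht₀))
    exact ContinuousAt.comp (g := Complex.log) (continuousAt_clog hslit) h1
  have h1 := key x hx.le
  have h2 := key y hy.le
  have h3 : ContinuousAt (fun t : ℝ => Complex.log (1 + 1/(t:ℂ))) t₀ := by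
    simpa using key 1 (by norm_num)
  exact (h1.sub h2).sub (continuousAt_const.mul h3)

end QGammaAux

open QGammaAux in
/-- The q-Gamma limit: for `Re(x), Re(y) > 0`, the infinite products
`P(r) = ∏_{n=0}^∞ [1 − (1−r)^n(1−xr)]/[1 − (1−r)^n(1−yr)]` are well defined for
`r ∈ (0,1)`, and `r^{x−y}·P(r) → Γ(y)/Γ(x)` as `r → 0⁺`. -/
theorem qgamma_product_limit (x y : ℂ) (hx : 0 < x.re) (hy : 0 < y.re) :
    (∀ r : ℝ, r ∈ Set.Ioo (0 : ℝ) 1 →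
      (∀ n : ℕ, (1 : ℂ) - (1 - (r : ℂ)) ^ n * (1 - y * (r : ℂ)) ≠ 0) ∧
      Multipliable (fun n : ℕ =>
        ((1 : ℂ) - (1 - (r : ℂ)) ^ n * (1 - x * (r : ℂ))) /
          ((1 : ℂ) - (1 - (r : ℂ)) ^ n * (1 - y * (r : ℂ))))) ∧
    Filter.Tendsto
      (fun r : ℝ => Complex.exp ((x - y) * (Real.log r : ℂ)) *
        ∏' n : ℕ, ((1 : ℂ) - (1 - (r : ℂ)) ^ n * (1 - x * (r : ℂ))) /
          ((1 : ℂ) - (1 - (r : ℂ)) ^ n * (1 - y * (r : ℂ))))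
      (nhdsWithin 0 (Set.Ioo (0 : ℝ) 1))
      (nhds (Complex.Gamma y / Complex.Gamma x)) := by
  constructor
  · intro r hr
    obtain ⟨hden, hp⟩ := key x y hx hy hr
    exact ⟨hden, hp.multipliable⟩
  · obtain ⟨C, hC0, hC⟩ := hfun_bound x y hx hy
    have hStend : Tendsto (fun r : ℝ => ∑' n : ℕ, hfun x y (c r (n+1)))
        (𝓝[Set.Ioo (0:ℝ) 1] 0) (𝓝 (∑' n : ℕ, hfun x y ((n:ℝ)+1))) := by
      refine tendsto_tsum_of_dominated_convergence
        (bound := fun n : ℕ => C/((n:ℝ)+1)^2) ?_ ?_ ?_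
      · refine (summable_aux.mul_left C).congr fun n => ?_
        field_simp
      · intro k
        have hc := c_tendsto (k+1)
        have hcont := hfun_contAt x y hx hy (t₀ := ((k+1:ℕ):ℝ)) (by positivity)
        have := hcont.tendsto.comp hc
        simp only [Function.comp_def] at this
        convert this using 2 <;> push_cast <;> ring
      · filter_upwards [self_mem_nhdsWithin] with r hr
        intro k
        refine hfun_le x y hC0 hC ?_
        have := c_ge r hr (k+1)
        push_cast at this ⊢
        linarith
    have hfinal : Tendsto
        (fun r : ℝ => Complex.exp (Complex.log x - Complex.log y
          + ∑' n : ℕ, hfun x y (c r (n+1))))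
        (𝓝[Set.Ioo (0:ℝ) 1] 0) (𝓝 (Complex.Gamma y / Complex.Gamma x)) := by
      rw [gamma_ratio x y hx hy]
      exact (Complex.continuous_exp.tendsto _).comp
        (hStend.const_add (Complex.log x - Complex.log y))
    refine hfinal.congr' ?_
    filter_upwards [self_mem_nhdsWithin] with r hr
    obtain ⟨hden, hp⟩ := key x y hx hy hr
    rw [hp.tprod_eq, ← Complex.exp_add]
    congr 1
    ring
end QGammaAux
end
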